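/- arXiv:2207.10939 — 6 statements merged into one kernel-verified Lean document; each statement's English description precedes it below -/
import Mathlib

section
/- (Theorem 2: optimal error rate function of the log-likelihood-ratio test.) Let μ_0 and μ_1 be mutually absolutely continuous probability measures on a measurable space X, let l(x) = log(dμ_1/dμ_0)(x), and assume the LMGFs φ_k(t) = log E_{μ_k}[exp(t·l(x))] are finite for every t ∈ ℝ (k = 0, 1). Let x_1, ..., x_n be i.i.d. with common law μ_k under hypothesis H_k, let L^(n) = (1/n)·Σ_{i=1}^n l(x_i), and for a fixed threshold γ define α_n = P[L^(n) ≥ γ | H_0] and β_n = P[L^(n) < γ | H_1]. Then for every γ with −D(μ_0‖μ_1) < γ < D(μ_1‖μ_0): lim_{n→∞} (1/n)·log α_n = −I_0(γ) and lim_{n→∞} (1/n)·log β_n = −I_1(γ), where I_k is the Fenchel–Legendre transform of φ_k. -/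
open MeasureTheory ProbabilityTheory Real Filter

section CramerAux

open scoped ENNReal

lemma abs_le_exp_add_exp_neg (y : ℝ) : |y| ≤ exp y + exp (-y) := by
  have h1 : |y| ≤ exp |y| := (le_of_lt (lt_of_lt_of_le (lt_add_one _) (add_one_le_exp _)))
  refine h1.trans ?_
  rcases abs_cases y with ⟨h, _⟩ | ⟨h, _⟩
  · rw [h]; nlinarith [exp_pos (-y)]
  · rw [h]; nlinarith [exp_pos y]

variable {X : Type*} [MeasurableSpace X] {μ : Measure X} [IsProbabilityMeasure μ] {l : X → ℝ}

lemma integrable_mul_exp (hlm : Measurable l)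
    (hmgf : ∀ t : ℝ, Integrable (fun a => exp (t * l a)) μ) (t : ℝ) :
    Integrable (fun a => l a * exp (t * l a)) μ := by
  refine ((hmgf (t+1)).add (hmgf (t-1))).mono
    ((hlm.mul ((hlm.const_mul t).exp)).aestronglyMeasurable) ?_
  refine Eventually.of_forall fun a => ?_
  have h1 : |l a| ≤ exp (l a) + exp (-(l a)) := abs_le_exp_add_exp_neg _
  have h2 : (0:ℝ) < exp (t * l a) := exp_pos _
  have : ‖l a * exp (t * l a)‖ = |l a| * exp (t * l a) := by
    rw [norm_mul, Real.norm_eq_abs, Real.norm_eq_abs, abs_of_pos h2]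
  rw [this]
  have hb : |l a| * exp (t * l a) ≤ (exp (l a) + exp (-(l a))) * exp (t * l a) :=
    mul_le_mul_of_nonneg_right h1 h2.le
  calc |l a| * exp (t * l a) ≤ (exp (l a) + exp (-(l a))) * exp (t * l a) := hb
    _ = exp ((t+1) * l a) + exp ((t-1) * l a) := by
        rw [add_mul, ← exp_add, ← exp_add]; ring_nf
    _ ≤ ‖exp ((t+1) * l a) + exp ((t-1) * l a)‖ := le_abs_self _

lemma hasDerivAt_mgf (hlm : Measurable l)
    (hmgf : ∀ t : ℝ, Integrable (fun a => exp (t * l a)) μ) (t : ℝ) :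
    HasDerivAt (fun u => mgf l μ u) (∫ a, l a * exp (t * l a) ∂μ) t := by
  have key := hasDerivAt_integral_of_dominated_loc_of_deriv_le (μ := μ)
    (F := fun u a => exp (u * l a)) (F' := fun u a => l a * exp (u * l a))
    (x₀ := t) (bound := fun a => exp ((t+2) * l a) + exp ((t-2) * l a))
    (s := Metric.ball t 1) (Metric.ball_mem_nhds t one_pos)
    (Eventually.of_forall fun u => ((hlm.const_mul u).exp).aestronglyMeasurable)
    (hmgf t)
    ((hlm.mul ((hlm.const_mul t).exp)).aestronglyMeasurable)
    ?_ ((hmgf (t+2)).add (hmgf (t-2))) ?_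
  · exact key.2
  · refine Eventually.of_forall fun a => fun u hu => ?_
    have h2 : (0:ℝ) < exp (u * l a) := exp_pos _
    have hn : ‖l a * exp (u * l a)‖ = |l a| * exp (u * l a) := by
      rw [norm_mul, Real.norm_eq_abs, Real.norm_eq_abs, abs_of_pos h2]
    rw [hn]
    have h3 : |l a| ≤ exp |l a| := (lt_of_lt_of_le (lt_add_one _) (add_one_le_exp _)).le
    have h4 : u * l a ≤ t * l a + |l a| := by
      have : u * l a - t * l a = (u - t) * l a := by ring
      have h5 : (u - t) * l a ≤ |l a| := by
        calc (u - t) * l a ≤ |(u - t) * l a| := le_abs_self _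
          _ = |u - t| * |l a| := abs_mul _ _
          _ ≤ 1 * |l a| := by
              apply mul_le_mul_of_nonneg_right _ (abs_nonneg _)
              simpa [Real.dist_eq] using (Metric.mem_ball.mp hu).le
          _ = |l a| := one_mul _
      linarith
    calc |l a| * exp (u * l a) ≤ exp |l a| * exp (t * l a + |l a|) := by
          apply mul_le_mul h3 (exp_le_exp.mpr h4) h2.le (exp_pos _).le
      _ = exp (2 * |l a|) * exp (t * l a) := by rw [← exp_add, ← exp_add]; ring_nf
      _ ≤ (exp (2 * l a) + exp (-(2 * l a))) * exp (t * l a) := by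
          apply mul_le_mul_of_nonneg_right _ (exp_pos _).le
          have := Real.exp_abs_le (2 * l a)
          simpa [abs_mul] using this
      _ = exp ((t+2) * l a) + exp ((t-2) * l a) := by
          rw [add_mul, ← exp_add, ← exp_add]; ring_nf
  · refine Eventually.of_forall fun a => fun u _ => ?_
    have : HasDerivAt (fun u : ℝ => u * l a) (l a) u := by
      simpa using (hasDerivAt_id u).mul_const (l a)
    simpa [mul_comm] using this.exp

lemma hasDerivAt_cgf (hlm : Measurable l)
    (hmgf : ∀ t : ℝ, Integrable (fun a => exp (t * l a)) μ) (t : ℝ) :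
    HasDerivAt (cgf l μ) ((∫ a, l a * exp (t * l a) ∂μ) / mgf l μ t) t := by
  have h := (hasDerivAt_mgf hlm hmgf t).log (mgf_pos (hmgf t)).ne'
  exact h

lemma mul_integral_le_cgf (hintl : Integrable l μ)
    (hmgf : ∀ t : ℝ, Integrable (fun a => exp (t * l a)) μ) (t : ℝ) :
    t * ∫ a, l a ∂μ ≤ cgf l μ t := by
  set m := ∫ a, l a ∂μ
  have key : exp (t * m) ≤ mgf l μ t := by
    have hle : ∀ a, exp (t * m) * (1 + (t * l a - t * m)) ≤ exp (t * l a) := by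
      intro a
      have h1 : (t * l a - t * m) + 1 ≤ exp (t * l a - t * m) := add_one_le_exp _
      have h2 : exp (t * l a) = exp (t * m) * exp (t * l a - t * m) := by
        rw [← exp_add]; ring_nf
      rw [h2]
      have := mul_le_mul_of_nonneg_left h1 (exp_pos (t * m)).le
      calc exp (t * m) * (1 + (t * l a - t * m))
          = exp (t * m) * ((t * l a - t * m) + 1) := by ring
        _ ≤ exp (t * m) * exp (t * l a - t * m) := this
    have hint1 : Integrable (fun a => exp (t * m) * (1 + (t * l a - t * m))) μ := by
      apply Integrable.const_mul
      exact (integrable_const _).add ((hintl.const_mul t).sub (integrable_const _))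
    have hI := integral_mono hint1 (hmgf t) hle
    have : ∫ a, exp (t * m) * (1 + (t * l a - t * m)) ∂μ = exp (t * m) := by
      rw [integral_const_mul]
      have : ∫ a, (1 + (t * l a - t * m)) ∂μ = 1 := by
        have hg : Integrable (fun a => t * l a - t * m) μ :=
          (hintl.const_mul t).sub (integrable_const _)
        rw [integral_add (integrable_const _) hg,
          integral_sub (hintl.const_mul t) (integrable_const _), integral_const_mul]
        simp [m, measure_univ]
      rw [this, mul_one]
    rw [this] at hI
    exact hI
  calc t * m = Real.log (exp (t * m)) := (Real.log_exp _).symm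
    _ ≤ Real.log (mgf l μ t) := Real.log_le_log (exp_pos _) key

lemma integral_tilted_one (hintl : Integrable l μ) :
    ∫ a, l a ∂(μ.tilted l) = (∫ a, l a * exp ((1:ℝ) * l a) ∂μ) / mgf l μ 1 := by
  rw [integral_tilted]
  have hM : mgf l μ 1 = ∫ a, exp (l a) ∂μ := by simp [mgf, one_mul]
  rw [hM, ← integral_div]
  congr 1
  funext a
  rw [smul_eq_mul, one_mul]
  ring

lemma integrable_exp_tilted'' {α : Type*} [MeasurableSpace α] (P : Measure α)
    [IsProbabilityMeasure P] (f g : α → ℝ) (hf : Measurable f)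
    (hintf : Integrable (fun ω => exp (f ω)) P)
    (hintfg : Integrable (fun ω => exp (f ω + g ω)) P) :
    Integrable (fun ω => exp (g ω)) (P.tilted f) := by
  set c := ∫ ω, exp (f ω) ∂P with hc
  have hcpos : 0 < c := integral_exp_pos hintf
  rw [Measure.tilted, integrable_withDensity_iff (by measurability)
    (Eventually.of_forall fun a => ENNReal.ofReal_lt_top)]
  have heq : (fun a => exp (g a) * (ENNReal.ofReal (exp (f a) / c)).toReal)
      = fun a => exp (f a + g a) / c := by
    funext a
    rw [ENNReal.toReal_ofReal (by positivity), exp_add]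
    ring
  rw [heq]
  exact hintfg.div_const c

lemma cramer_main {X : Type*} [MeasurableSpace X] (μ : Measure X) [IsProbabilityMeasure μ]
    (l : X → ℝ) (hlm : Measurable l) (hintl : Integrable l μ)
    (hmgf : ∀ t : ℝ, Integrable (fun a => exp (t * l a)) μ)
    {Ω : Type*} [MeasurableSpace Ω] (P : Measure Ω) [IsProbabilityMeasure P]
    (x : ℕ → Ω → X) (hmeas : ∀ i, Measurable (x i))
    (hindep : iIndepFun x P)
    (hlaw : ∀ i, Measure.map (x i) P = μ)
    (γ : ℝ) (hγl : ∫ a, l a ∂μ < γ) (hγu : γ < ∫ a, l a ∂(μ.tilted l))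
    (E : ℕ → Set Ω)
    (hE1 : ∀ n : ℕ, {ω | γ < (n:ℝ)⁻¹ * ∑ i ∈ Finset.range n, l (x i ω)} ⊆ E n)
    (hE2 : ∀ n : ℕ, E n ⊆ {ω | γ ≤ (n:ℝ)⁻¹ * ∑ i ∈ Finset.range n, l (x i ω)}) :
    Tendsto (fun n : ℕ => (((n : ℝ)⁻¹ : ℝ) : EReal) * ENNReal.log (P (E n))) atTop
      (nhds (- ⨆ t : ℝ, ((γ * t - cgf l μ t : ℝ) : EReal))) := by
  classical
  set m' := ∫ a, l a ∂(μ.tilted l) with hm'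
  set Y : ℕ → Ω → ℝ := fun i ω => l (x i ω) with hY
  set T : ℕ → Ω → ℝ := fun n => ∑ i ∈ Finset.range n, Y i with hT
  set f : ℕ → EReal := fun n => (((n : ℝ)⁻¹ : ℝ) : EReal) * ENNReal.log (P (E n)) with hf
  set Iγ : EReal := ⨆ t : ℝ, ((γ * t - cgf l μ t : ℝ) : EReal) with hIγ
  have hYmeas : ∀ i, Measurable (Y i) := fun i => hlm.comp (hmeas i)
  have hindepY : iIndepFun Y P := hindep.comp (fun _ => l) (fun _ => hlm)
  have hTapp : ∀ (n : ℕ) ω, T n ω = ∑ i ∈ Finset.range n, l (x i ω) := by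
    intro n ω; simp [hT, hY]
  have hTmeas : ∀ n, Measurable (T n) := by
    intro n
    rw [show T n = fun ω => ∑ i ∈ Finset.range n, l (x i ω) from funext (hTapp n)]
    exact Finset.measurable_sum _ (fun i _ => hYmeas i)
  have hYint : ∀ (t : ℝ) (i : ℕ), Integrable (fun ω => exp (t * Y i ω)) P := by
    intro t i
    have h0 : Integrable (fun a => exp (t * l a)) (Measure.map (x i) P) := by
      rw [hlaw i]; exact hmgf t
    exact (integrable_map_measure ((hlm.const_mul t).exp).aestronglyMeasurable
      (hmeas i).aemeasurable).1 h0
  have hTint : ∀ (t : ℝ) (n : ℕ), Integrable (fun ω => exp (t * T n ω)) P := fun t n =>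
    hindepY.integrable_exp_mul_sum hYmeas (fun i _ => hYint t i)
  have hmgfY : ∀ (t : ℝ) (i : ℕ), mgf (Y i) P t = mgf l μ t := by
    intro t i
    rw [mgf, mgf, ← hlaw i,
      integral_map (hmeas i).aemeasurable ((hlm.const_mul t).exp).aestronglyMeasurable]
  have hMpos : ∀ t, 0 < mgf l μ t := fun t => mgf_pos (hmgf t)
  have hmgfT : ∀ (t : ℝ) (n : ℕ), mgf (T n) P t = (mgf l μ t) ^ n := by
    intro t n
    rw [hT, hindepY.mgf_sum hYmeas]
    simp [hmgfY t]
  have hcgfT : ∀ (t : ℝ) (n : ℕ), cgf (T n) P t = n * cgf l μ t := by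
    intro t n
    rw [cgf, hmgfT, Real.log_pow, cgf]
  have hChern : ∀ t : ℝ, 0 ≤ t → ∀ n : ℕ,
      P {ω | (n:ℝ) * γ ≤ T n ω} ≤ ENNReal.ofReal (exp ((n:ℝ) * (cgf l μ t - t * γ))) := by
    intro t ht n
    have h := measure_ge_le_exp_cgf (X := T n) (μ := P) ((n:ℝ) * γ) ht (hTint t n)
    rw [hcgfT] at h
    have he : -t * ((n:ℝ) * γ) + (n:ℝ) * cgf l μ t = (n:ℝ) * (cgf l μ t - t * γ) := by ring
    rw [he] at h
    exact (ENNReal.le_ofReal_iff_toReal_le (measure_ne_top _ _) (exp_pos _).le).2 h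
  have hsetLe : ∀ n : ℕ, 1 ≤ n →
      {ω | γ ≤ (n:ℝ)⁻¹ * ∑ i ∈ Finset.range n, l (x i ω)} = {ω | (n:ℝ) * γ ≤ T n ω} := by
    intro n hn
    have hnpos : (0:ℝ) < (n:ℝ) := by exact_mod_cast hn
    ext ω
    simp only [Set.mem_setOf_eq, hTapp]
    rw [inv_mul_eq_div, le_div_iff₀ hnpos, mul_comm]
  have hsetLt : ∀ n : ℕ, 1 ≤ n →
      {ω | γ < (n:ℝ)⁻¹ * ∑ i ∈ Finset.range n, l (x i ω)} = {ω | (n:ℝ) * γ < T n ω} := by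
    intro n hn
    have hnpos : (0:ℝ) < (n:ℝ) := by exact_mod_cast hn
    ext ω
    simp only [Set.mem_setOf_eq, hTapp]
    rw [inv_mul_eq_div, lt_div_iff₀ hnpos, mul_comm]
  -- upper bound
  have hupper0 : ∀ t : ℝ, 0 ≤ t → limsup f atTop ≤ ((cgf l μ t - γ * t : ℝ) : EReal) := by
    intro t ht
    have hev : ∀ᶠ n : ℕ in atTop, f n ≤ ((cgf l μ t - γ * t : ℝ) : EReal) := by
      filter_upwards [eventually_ge_atTop 1] with n hn
      have hnpos : (0:ℝ) < (n:ℝ) := by exact_mod_cast hn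
      have h1 : P (E n) ≤ ENNReal.ofReal (exp ((n:ℝ) * (cgf l μ t - t * γ))) := by
        refine le_trans (measure_mono (hE2 n)) ?_
        rw [hsetLe n hn]
        exact hChern t ht n
      have h2 : ENNReal.log (P (E n)) ≤ (((n:ℝ) * (cgf l μ t - t * γ) : ℝ) : EReal) := by
        calc ENNReal.log (P (E n))
            ≤ ENNReal.log (ENNReal.ofReal (exp ((n:ℝ) * (cgf l μ t - t * γ)))) :=
              ENNReal.log_monotone h1
          _ = ((Real.log (exp ((n:ℝ) * (cgf l μ t - t * γ))) : ℝ) : EReal) :=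
              ENNReal.log_ofReal_of_pos (exp_pos _)
          _ = _ := by rw [Real.log_exp]
      have h3 : f n ≤ (((n:ℝ)⁻¹ : ℝ) : EReal) * (((n:ℝ) * (cgf l μ t - t * γ) : ℝ) : EReal) := by
        rw [hf]
        exact mul_le_mul_of_nonneg_left h2 (by exact_mod_cast inv_nonneg.2 hnpos.le)
      rw [← EReal.coe_mul] at h3
      have h4 : (n:ℝ)⁻¹ * ((n:ℝ) * (cgf l μ t - t * γ)) = cgf l μ t - γ * t := by
        field_simp
      rwa [h4] at h3
    exact limsup_le_of_le (by isBoundedDefault) hev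
  have hupper : ∀ t : ℝ, limsup f atTop ≤ ((cgf l μ t - γ * t : ℝ) : EReal) := by
    intro t
    rcases le_or_gt 0 t with ht | ht
    · exact hupper0 t ht
    · refine (hupper0 0 le_rfl).trans ?_
      refine EReal.coe_le_coe_iff.2 ?_
      have hb := mul_integral_le_cgf hintl hmgf t
      rw [cgf_zero]
      nlinarith [mul_pos (neg_pos.2 ht) (sub_pos.2 hγl)]
  have hlimsup : limsup f atTop ≤ -Iγ := by
    have h1 : ∀ t : ℝ, ((γ * t - cgf l μ t : ℝ) : EReal) ≤ -(limsup f atTop) := by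
      intro t
      refine EReal.le_neg_of_le_neg ?_
      have : (-(γ * t - cgf l μ t : ℝ) : EReal) = ((cgf l μ t - γ * t : ℝ) : EReal) := by
        rw [← EReal.coe_neg]; norm_num
      rw [this]
      exact hupper t
    have h2 : Iγ ≤ -(limsup f atTop) := iSup_le h1
    exact EReal.le_neg_of_le_neg h2
  -- lower bound
  have key : ∀ δ : ℝ, 0 < δ → γ + δ < m' → ∃ tstar : ℝ, tstar ∈ Set.Ioo (0:ℝ) 1 ∧
      ((cgf l μ tstar - tstar * (γ + 2*δ) : ℝ) : EReal) ≤ liminf f atTop := by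
    intro δ hδ hγδ
    set Dv : ℝ → ℝ := fun u => (∫ a, l a * exp (u * l a) ∂μ) / mgf l μ u with hDv
    have hD : ∀ u, HasDerivAt (cgf l μ) (Dv u) u := fun u => hasDerivAt_cgf hlm hmgf u
    have hD0 : Dv 0 = ∫ a, l a ∂μ := by
      simp only [hDv]
      rw [mgf_zero]
      simp
    have hD1 : Dv 1 = m' := by
      rw [hm', integral_tilted_one hintl]
    obtain ⟨tstar, htmem, htval⟩ := exists_hasDerivWithinAt_eq_of_gt_of_lt (f := cgf l μ)
      (f' := Dv) zero_le_one (fun u _ => (hD u).hasDerivWithinAt)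
      (show Dv 0 < γ + δ by rw [hD0]; linarith)
      (show γ + δ < Dv 1 by rw [hD1]; exact hγδ)
    have hder : HasDerivAt (cgf l μ) (γ + δ) tstar := htval ▸ hD tstar
    refine ⟨tstar, htmem, ?_⟩
    set ψ : ℝ → ℝ := fun s => cgf l μ (tstar + s) - cgf l μ tstar - s * (γ + δ) with hψdef
    have hψ0 : ψ 0 = 0 := by simp [hψdef]
    have hψder : HasDerivAt ψ 0 0 := by
      have h1 : HasDerivAt (fun s : ℝ => tstar + s) 1 0 := by
        simpa using (hasDerivAt_id (0:ℝ)).const_add tstar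
      have hder' : HasDerivAt (cgf l μ) (γ + δ) ((fun s : ℝ => tstar + s) 0) := by
        simpa using hder
      have h2 := hder'.comp (0:ℝ) h1
      have h3 := (h2.sub_const (cgf l μ tstar)).sub (hasDerivAt_mul_const (γ+δ))
      rw [mul_one, sub_self] at h3
      exact h3
    have hslope := hasDerivAt_iff_tendsto_slope.1 hψder
    have hball : ∀ᶠ s in nhdsWithin (0:ℝ) {s | s ≠ 0}, |ψ s / s| < δ := by
      filter_upwards [hslope.eventually_mem (Metric.ball_mem_nhds (0:ℝ) hδ)] with s hs
      have heq : slope ψ 0 s = ψ s / s := by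
        rw [slope_def_field, hψ0, sub_zero, sub_zero]
      rw [← heq]
      simpa [Real.dist_eq] using hs
    obtain ⟨sp, hsp_lt, hsp_pos⟩ :=
      ((hball.filter_mono (nhdsWithin_mono 0 (fun s (hs : s ∈ Set.Ioi (0:ℝ)) =>
        ne_of_gt hs))).and eventually_mem_nhdsWithin).exists
    obtain ⟨sm, hsm_lt, hsm_neg⟩ :=
      ((hball.filter_mono (nhdsWithin_mono 0 (fun s (hs : s ∈ Set.Iio (0:ℝ)) =>
        ne_of_lt hs))).and eventually_mem_nhdsWithin).exists
    rw [Set.mem_Ioi] at hsp_pos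
    rw [Set.mem_Iio] at hsm_neg
    have hψsp : ψ sp < δ * sp := by
      have h := (abs_lt.1 hsp_lt).2
      exact (div_lt_iff₀ hsp_pos).1 h
    have hψsm : ψ sm < -δ * sm := by
      have h := (abs_lt.1 hsm_lt).1
      exact (lt_div_iff_of_neg hsm_neg).1 h
    set ca : ℝ := sp * δ - ψ sp with hcadef
    set cb : ℝ := -(ψ sm + sm * δ) with hcbdef
    have hca_pos : 0 < ca := by rw [hcadef]; nlinarith
    have hcb_pos : 0 < cb := by rw [hcbdef]; nlinarith
    set Q : ℕ → Measure Ω := fun n => P.tilted (fun ω => tstar * T n ω) with hQdef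
    have hQprob : ∀ n, IsProbabilityMeasure (Q n) := fun n =>
      isProbabilityMeasure_tilted (hTint tstar n)
    have hQint : ∀ (n : ℕ) (s : ℝ), Integrable (fun ω => exp (s * T n ω)) (Q n) := by
      intro n s
      refine integrable_exp_tilted'' P _ _ ((hTmeas n).const_mul tstar) (hTint tstar n) ?_
      have heq : (fun ω => exp (tstar * T n ω + s * T n ω))
          = fun ω => exp ((tstar + s) * T n ω) := by
        funext ω; ring_nf
      rw [heq]
      exact hTint (tstar + s) n
    have hmgfQ : ∀ (n : ℕ) (s : ℝ), mgf (T n) (Q n) s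
        = (mgf l μ (tstar + s)) ^ n / (mgf l μ tstar) ^ n := by
      intro n s
      calc mgf (T n) (Q n) s
          = ∫ ω, exp ((fun ω => s * T n ω) ω) ∂(P.tilted (fun ω => tstar * T n ω)) := rfl
        _ = (∫ ω, exp (((fun ω => tstar * T n ω) + fun ω => s * T n ω) ω) ∂P)
              / ∫ ω, exp (tstar * T n ω) ∂P := integral_exp_tilted _ _
        _ = mgf (T n) P (tstar + s) / mgf (T n) P tstar := by
            congr 1
            apply integral_congr_ae
            filter_upwards with ω
            simp [add_mul]
        _ = (mgf l μ (tstar + s)) ^ n / (mgf l μ tstar) ^ n := by rw [hmgfT, hmgfT]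
    have hcgfQ : ∀ (n : ℕ) (s : ℝ), cgf (T n) (Q n) s
        = (n:ℝ) * (cgf l μ (tstar + s) - cgf l μ tstar) := by
      intro n s
      rw [cgf, hmgfQ, ← div_pow, Real.log_pow,
        Real.log_div (hMpos _).ne' (hMpos _).ne']
      rfl
    have hQup : ∀ n : ℕ, Q n {ω | (n:ℝ) * (γ + 2*δ) ≤ T n ω}
        ≤ ENNReal.ofReal (exp (-((n:ℝ) * ca))) := by
      intro n
      have hQp := hQprob n
      have h := measure_ge_le_exp_cgf (X := T n) (μ := Q n) ((n:ℝ) * (γ + 2*δ))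
        hsp_pos.le (hQint n sp)
      rw [hcgfQ] at h
      have he : -sp * ((n:ℝ)*(γ+2*δ)) + (n:ℝ) * (cgf l μ (tstar + sp) - cgf l μ tstar)
          = -((n:ℝ) * ca) := by
        rw [hcadef]
        simp only [hψdef]
        ring
      rw [he] at h
      exact (ENNReal.le_ofReal_iff_toReal_le (measure_ne_top _ _) (exp_pos _).le).2 h
    have hQdown : ∀ n : ℕ, Q n {ω | T n ω ≤ (n:ℝ) * γ}
        ≤ ENNReal.ofReal (exp (-((n:ℝ) * cb))) := by
      intro n
      have hQp := hQprob n
      have h := measure_le_le_exp_cgf (X := T n) (μ := Q n) ((n:ℝ) * γ)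
        hsm_neg.le (hQint n sm)
      rw [hcgfQ] at h
      have he : -sm * ((n:ℝ)*γ) + (n:ℝ) * (cgf l μ (tstar + sm) - cgf l μ tstar)
          = -((n:ℝ) * cb) := by
        rw [hcbdef]
        simp only [hψdef]
        ring
      rw [he] at h
      exact (ENNReal.le_ofReal_iff_toReal_le (measure_ne_top _ _) (exp_pos _).le).2 h
    set A : ℕ → Set Ω := fun n =>
      {ω | (n:ℝ)*γ < T n ω} ∩ {ω | T n ω < (n:ℝ)*(γ+2*δ)} with hAdef
    have hAmeas : ∀ n, MeasurableSet (A n) := fun n =>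
      (measurableSet_lt measurable_const (hTmeas n)).inter
        (measurableSet_lt (hTmeas n) measurable_const)
    have hAc : ∀ n, Q n (A n)ᶜ
        ≤ ENNReal.ofReal (exp (-((n:ℝ)*ca))) + ENNReal.ofReal (exp (-((n:ℝ)*cb))) := by
      intro n
      have hsub : (A n)ᶜ ⊆ {ω | (n:ℝ)*(γ+2*δ) ≤ T n ω} ∪ {ω | T n ω ≤ (n:ℝ)*γ} := by
        intro ω hω
        by_cases h1 : T n ω ≤ (n:ℝ)*γ
        · exact Or.inr h1
        · push_neg at h1
          rcases lt_or_ge (T n ω) ((n:ℝ)*(γ+2*δ)) with h2 | h2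
          · exact absurd ⟨h1, h2⟩ hω
          · exact Or.inl h2
      calc Q n (A n)ᶜ ≤ Q n ({ω | (n:ℝ)*(γ+2*δ) ≤ T n ω} ∪ {ω | T n ω ≤ (n:ℝ)*γ}) :=
            measure_mono hsub
        _ ≤ Q n {ω | (n:ℝ)*(γ+2*δ) ≤ T n ω} + Q n {ω | T n ω ≤ (n:ℝ)*γ} :=
            measure_union_le _ _
        _ ≤ _ := add_le_add (hQup n) (hQdown n)
    have hQA : ∀ᶠ n : ℕ in atTop, (2⁻¹ : ℝ≥0∞) ≤ Q n (A n) := by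
      have hgeo : ∀ c : ℝ, 0 < c →
          Tendsto (fun n : ℕ => exp (-((n:ℝ)*c))) atTop (nhds 0) := by
        intro c hc
        have heq : (fun n : ℕ => exp (-((n:ℝ)*c))) = fun n : ℕ => (exp (-c))^n := by
          funext n
          rw [← Real.exp_nat_mul]
          ring_nf
        rw [heq]
        exact tendsto_pow_atTop_nhds_zero_of_lt_one (exp_pos _).le
          (Real.exp_lt_one_iff.2 (by linarith))
      have hsum : Tendsto (fun n : ℕ => exp (-((n:ℝ)*ca)) + exp (-((n:ℝ)*cb)))
          atTop (nhds 0) := by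
        simpa using (hgeo ca hca_pos).add (hgeo cb hcb_pos)
      have hev2 : ∀ᶠ n : ℕ in atTop, exp (-((n:ℝ)*ca)) + exp (-((n:ℝ)*cb)) ≤ 2⁻¹ := by
        filter_upwards [hsum.eventually_mem (gt_mem_nhds (by norm_num : (0:ℝ) < 2⁻¹))]
          with n hn
        exact le_of_lt hn
      filter_upwards [hev2] with n hn
      have hQp := hQprob n
      have hcompl : Q n (A n)ᶜ ≤ 2⁻¹ := by
        refine (hAc n).trans ?_
        rw [← ENNReal.ofReal_add (exp_pos _).le (exp_pos _).le]
        calc ENNReal.ofReal (exp (-((n:ℝ)*ca)) + exp (-((n:ℝ)*cb)))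
            ≤ ENNReal.ofReal 2⁻¹ := ENNReal.ofReal_le_ofReal hn
          _ = 2⁻¹ := by
              rw [ENNReal.ofReal_inv_of_pos zero_lt_two, ENNReal.ofReal_ofNat]
      have h1 : Q n (A n)ᶜ = 1 - Q n (A n) := by
        rw [measure_compl (hAmeas n) (measure_ne_top _ _), measure_univ]
      rw [h1] at hcompl
      have h2 : (1:ℝ≥0∞) ≤ 2⁻¹ + Q n (A n) := tsub_le_iff_right.1 hcompl
      by_contra hlt
      push_neg at hlt
      have h3 : (2⁻¹:ℝ≥0∞) + Q n (A n) < 2⁻¹ + 2⁻¹ :=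
        ENNReal.add_lt_add_left (by norm_num) hlt
      rw [ENNReal.inv_two_add_inv_two] at h3
      exact absurd (h2.trans_lt h3) (lt_irrefl _)
    have hPA : ∀ n : ℕ,
        ENNReal.ofReal (exp ((n:ℝ) * (cgf l μ tstar - tstar * (γ + 2*δ)))) * Q n (A n)
          ≤ P (A n) := by
      intro n
      have hden : (∫ ω', exp (tstar * T n ω') ∂P) = exp ((n:ℝ) * cgf l μ tstar) := by
        have h0 : (∫ ω', exp (tstar * T n ω') ∂P) = mgf (T n) P tstar := rfl
        rw [h0, hmgfT, Real.exp_nat_mul, cgf, Real.exp_log (hMpos tstar)]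
      have hbound : Q n (A n)
          ≤ ENNReal.ofReal (exp (tstar * ((n:ℝ)*(γ+2*δ)) - (n:ℝ) * cgf l μ tstar))
            * P (A n) := by
        have happ : Q n (A n) = ∫⁻ ω in A n,
            ENNReal.ofReal (exp (tstar * T n ω) / ∫ ω', exp (tstar * T n ω') ∂P) ∂P :=
          tilted_apply _ _ _
        rw [happ, hden]
        have hle : ∀ ω ∈ A n,
            ENNReal.ofReal (exp (tstar * T n ω) / exp ((n:ℝ)*cgf l μ tstar))
            ≤ ENNReal.ofReal (exp (tstar * ((n:ℝ)*(γ+2*δ)) - (n:ℝ)*cgf l μ tstar)) := by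
          intro ω hω
          apply ENNReal.ofReal_le_ofReal
          rw [← Real.exp_sub]
          apply exp_le_exp.2
          have hTle : T n ω ≤ (n:ℝ)*(γ+2*δ) := le_of_lt hω.2
          have hmul := mul_le_mul_of_nonneg_left hTle htmem.1.le
          linarith
        calc ∫⁻ ω in A n,
              ENNReal.ofReal (exp (tstar * T n ω) / exp ((n:ℝ)*cgf l μ tstar)) ∂P
            ≤ ∫⁻ _ω in A n,
              ENNReal.ofReal (exp (tstar * ((n:ℝ)*(γ+2*δ)) - (n:ℝ)*cgf l μ tstar)) ∂P :=
              setLIntegral_mono measurable_const hle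
          _ = _ := setLIntegral_const _ _
      calc ENNReal.ofReal (exp ((n:ℝ)*(cgf l μ tstar - tstar*(γ+2*δ)))) * Q n (A n)
          ≤ ENNReal.ofReal (exp ((n:ℝ)*(cgf l μ tstar - tstar*(γ+2*δ))))
            * (ENNReal.ofReal (exp (tstar*((n:ℝ)*(γ+2*δ)) - (n:ℝ)*cgf l μ tstar))
              * P (A n)) := mul_le_mul_right hbound _
        _ = ENNReal.ofReal (exp ((n:ℝ)*(cgf l μ tstar - tstar*(γ+2*δ)))
              * exp (tstar*((n:ℝ)*(γ+2*δ)) - (n:ℝ)*cgf l μ tstar)) * P (A n) := by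
            rw [← mul_assoc, ← ENNReal.ofReal_mul (exp_pos _).le]
        _ = P (A n) := by
            rw [← Real.exp_add, show ((n:ℝ)*(cgf l μ tstar - tstar*(γ+2*δ))
              + (tstar*((n:ℝ)*(γ+2*δ)) - (n:ℝ)*cgf l μ tstar)) = 0 by ring,
              Real.exp_zero, ENNReal.ofReal_one, one_mul]
    set c' : ℝ := cgf l μ tstar - tstar * (γ + 2*δ) with hc'
    have hevf : ∀ᶠ n : ℕ in atTop, ((c' + (n:ℝ)⁻¹ * Real.log 2⁻¹ : ℝ) : EReal) ≤ f n := by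
      filter_upwards [hQA, eventually_ge_atTop 1] with n hQn hn
      have hnpos : (0:ℝ) < (n:ℝ) := by exact_mod_cast hn
      have hPE : ENNReal.ofReal (exp ((n:ℝ)*c' + Real.log 2⁻¹)) ≤ P (E n) := by
        have h1 : ENNReal.ofReal (exp ((n:ℝ)*c')) * 2⁻¹
            ≤ ENNReal.ofReal (exp ((n:ℝ)*c')) * Q n (A n) := mul_le_mul_right hQn _
        have h3 : P (A n) ≤ P (E n) := by
          refine measure_mono (Set.Subset.trans ?_ (hE1 n))
          rw [hsetLt n hn]
          exact Set.inter_subset_left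
        have h4 : ENNReal.ofReal (exp ((n:ℝ)*c' + Real.log 2⁻¹))
            = ENNReal.ofReal (exp ((n:ℝ)*c')) * 2⁻¹ := by
          rw [Real.exp_add, Real.exp_log (by norm_num : (0:ℝ) < 2⁻¹),
            ENNReal.ofReal_mul (exp_pos _).le, ENNReal.ofReal_inv_of_pos zero_lt_two,
            ENNReal.ofReal_ofNat]
        rw [h4]
        exact le_trans (h1.trans (hPA n)) h3
      have h5 : (((n:ℝ)*c' + Real.log 2⁻¹ : ℝ) : EReal) ≤ ENNReal.log (P (E n)) := by
        calc (((n:ℝ)*c' + Real.log 2⁻¹ : ℝ) : EReal)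
            = ENNReal.log (ENNReal.ofReal (exp ((n:ℝ)*c' + Real.log 2⁻¹))) := by
              rw [ENNReal.log_ofReal_of_pos (exp_pos _), Real.log_exp]
          _ ≤ _ := ENNReal.log_monotone hPE
      have h6 : (((n:ℝ)⁻¹:ℝ) : EReal) * (((n:ℝ)*c' + Real.log 2⁻¹ : ℝ) : EReal) ≤ f n := by
        rw [hf]
        exact mul_le_mul_of_nonneg_left h5 (by exact_mod_cast inv_nonneg.2 hnpos.le)
      rw [← EReal.coe_mul] at h6
      have h7 : (n:ℝ)⁻¹ * ((n:ℝ)*c' + Real.log 2⁻¹) = c' + (n:ℝ)⁻¹ * Real.log 2⁻¹ := by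
        field_simp
      rwa [h7] at h6
    have htendc : Tendsto (fun n : ℕ => ((c' + (n:ℝ)⁻¹ * Real.log 2⁻¹ : ℝ) : EReal))
        atTop (nhds ((c' : ℝ) : EReal)) := by
      have h8 : Tendsto (fun n : ℕ => c' + (n:ℝ)⁻¹ * Real.log 2⁻¹) atTop (nhds c') := by
        have h9 : Tendsto (fun n : ℕ => (n:ℝ)⁻¹) atTop (nhds 0) :=
          tendsto_inv_atTop_zero.comp tendsto_natCast_atTop_atTop
        simpa using tendsto_const_nhds.add (h9.mul_const (Real.log 2⁻¹))
      exact (continuous_coe_real_ereal.tendsto c').comp h8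
    calc ((c' : ℝ) : EReal)
        = liminf (fun n : ℕ => ((c' + (n:ℝ)⁻¹ * Real.log 2⁻¹ : ℝ) : EReal)) atTop :=
          (htendc.liminf_eq).symm
      _ ≤ liminf f atTop := liminf_le_liminf hevf
  have hliminf : -Iγ ≤ liminf f atTop := by
    by_contra hcon
    push_neg at hcon
    obtain ⟨r, hr1, hr2⟩ := EReal.exists_between_coe_real hcon
    have hstep : ∀ δ : ℝ, 0 < δ → γ + δ < m' → -Iγ ≤ ((r + 2*δ : ℝ) : EReal) := by
      intro δ hδ hδ'
      obtain ⟨tstar, htmem, hts⟩ := key δ hδ hδ'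
      have h1 : ((γ * tstar - cgf l μ tstar : ℝ) : EReal) ≤ Iγ := by
        rw [hIγ]; exact le_iSup (fun t : ℝ => ((γ * t - cgf l μ t : ℝ) : EReal)) tstar
      have h2 : -Iγ ≤ ((cgf l μ tstar - γ * tstar : ℝ) : EReal) := by
        have h1' : ((γ * tstar - cgf l μ tstar : ℝ) : EReal) ≤ -(-Iγ) := by
          rwa [neg_neg]
        have := EReal.le_neg_of_le_neg h1' 
        rwa [show (-(γ * tstar - cgf l μ tstar : ℝ) : EReal) =
          ((cgf l μ tstar - γ * tstar : ℝ) : EReal) by rw [← EReal.coe_neg]; norm_num] at this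
      have h3 : ((cgf l μ tstar - γ * tstar : ℝ) : EReal)
          ≤ ((cgf l μ tstar - tstar * (γ + 2*δ) : ℝ) : EReal) + ((2*δ : ℝ) : EReal) := by
        rw [← EReal.coe_add, EReal.coe_le_coe_iff]
        nlinarith [htmem.1, htmem.2]
      have h4 : ((cgf l μ tstar - tstar * (γ + 2*δ) : ℝ) : EReal) + ((2*δ : ℝ) : EReal)
          ≤ ((r : ℝ) : EReal) + ((2*δ : ℝ) : EReal) :=
        add_le_add_left (hts.trans hr1.le) _
      calc -Iγ ≤ _ := h2
        _ ≤ _ := h3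
        _ ≤ ((r : ℝ) : EReal) + ((2*δ : ℝ) : EReal) := h4
        _ = ((r + 2*δ : ℝ) : EReal) := by rw [← EReal.coe_add]
    set δ0 : ℝ := (m' - γ)/2 with hδ0
    have hδ0pos : 0 < δ0 := by simp only [hδ0]; linarith
    have hIne : -Iγ ≠ ⊤ := by
      intro htop
      have := hstep δ0 hδ0pos (by simp only [hδ0]; linarith)
      rw [htop] at this
      exact absurd (top_le_iff.1 this) (EReal.coe_ne_top _)
    have hInb : -Iγ ≠ ⊥ := by
      intro hbot
      rw [hbot] at hr2
      exact not_lt_bot hr2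
    set R : ℝ := (-Iγ).toReal with hR
    have hcoeR : ((R : ℝ) : EReal) = -Iγ := EReal.coe_toReal hIne hInb
    have hrR : r < R := by
      have := hr2
      rw [← hcoeR] at this
      exact_mod_cast this
    set δ1 : ℝ := min (δ0/2) ((R - r)/4) with hδ1
    have hδ1pos : 0 < δ1 := lt_min (by linarith) (by linarith)
    have h5 := hstep δ1 hδ1pos (by
      have : δ1 ≤ δ0/2 := min_le_left _ _
      simp only [hδ0] at this ⊢
      linarith)
    rw [← hcoeR] at h5
    have h6 : R ≤ r + 2*δ1 := by exact_mod_cast h5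
    have h7 : δ1 ≤ (R - r)/4 := min_le_right _ _
    linarith
  exact tendsto_of_le_liminf_of_limsup_le hliminf hlimsup

lemma tilted_log_rnDeriv (μ0 μ1 : Measure X) [IsProbabilityMeasure μ0] [IsProbabilityMeasure μ1]
    (hac01 : μ0 ≪ μ1) (hac10 : μ1 ≪ μ0) :
    μ0.tilted (fun a => Real.log (μ1.rnDeriv μ0 a).toReal) = μ1 := by
  have hpos : ∀ᵐ a ∂μ0, 0 < μ1.rnDeriv μ0 a :=
    (Measure.rnDeriv_pos hac10).filter_mono hac01.ae_le
  have hfin : ∀ᵐ a ∂μ0, μ1.rnDeriv μ0 a < ⊤ := Measure.rnDeriv_lt_top μ1 μ0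
  have hexp : (fun a => exp (Real.log (μ1.rnDeriv μ0 a).toReal))
      =ᵐ[μ0] fun a => (μ1.rnDeriv μ0 a).toReal := by
    filter_upwards [hpos, hfin] with a h1 h2
    rw [Real.exp_log (ENNReal.toReal_pos h1.ne' h2.ne)]
  have hint : ∫ a, exp (Real.log (μ1.rnDeriv μ0 a).toReal) ∂μ0 = 1 := by
    rw [integral_congr_ae hexp, Measure.integral_toReal_rnDeriv hac10]
    simp
  rw [Measure.tilted, hint]
  have hcongr : (fun a => ENNReal.ofReal
      (exp (Real.log (μ1.rnDeriv μ0 a).toReal) / 1)) =ᵐ[μ0] μ1.rnDeriv μ0 := by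
    filter_upwards [hexp, hfin] with a h1 h2
    rw [div_one, h1, ENNReal.ofReal_toReal h2.ne]
  rw [withDensity_congr_ae hcongr, Measure.withDensity_rnDeriv_eq μ1 μ0 hac10]

lemma tilted_neg_log_rnDeriv (μ0 μ1 : Measure X) [IsProbabilityMeasure μ0]
    [IsProbabilityMeasure μ1] (hac01 : μ0 ≪ μ1) (hac10 : μ1 ≪ μ0) :
    μ1.tilted (fun a => -(Real.log (μ1.rnDeriv μ0 a).toReal)) = μ0 := by
  have hpos : ∀ᵐ a ∂μ1, 0 < μ1.rnDeriv μ0 a := Measure.rnDeriv_pos hac10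
  have hfin : ∀ᵐ a ∂μ1, μ1.rnDeriv μ0 a < ⊤ :=
    (Measure.rnDeriv_lt_top μ1 μ0).filter_mono hac10.ae_le
  have hinv : (μ1.rnDeriv μ0)⁻¹ =ᵐ[μ1] μ0.rnDeriv μ1 := Measure.inv_rnDeriv hac10
  have hfin' : ∀ᵐ a ∂μ1, μ0.rnDeriv μ1 a < ⊤ := Measure.rnDeriv_lt_top μ0 μ1
  have hexp : (fun a => exp (-(Real.log (μ1.rnDeriv μ0 a).toReal)))
      =ᵐ[μ1] fun a => (μ0.rnDeriv μ1 a).toReal := by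
    filter_upwards [hpos, hfin, hinv] with a h1 h2 h3
    rw [Real.exp_neg, Real.exp_log (ENNReal.toReal_pos h1.ne' h2.ne), ← ENNReal.toReal_inv,
      show (μ1.rnDeriv μ0 a)⁻¹ = (μ1.rnDeriv μ0)⁻¹ a from rfl, h3]
  have hint : ∫ a, exp (-(Real.log (μ1.rnDeriv μ0 a).toReal)) ∂μ1 = 1 := by
    rw [integral_congr_ae hexp, Measure.integral_toReal_rnDeriv hac01]
    simp
  rw [Measure.tilted, hint]
  have hcongr : (fun a => ENNReal.ofReal
      (exp (-(Real.log (μ1.rnDeriv μ0 a).toReal)) / 1)) =ᵐ[μ1] μ0.rnDeriv μ1 := by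
    filter_upwards [hexp, hfin'] with a h1 h2
    rw [div_one, h1, ENNReal.ofReal_toReal h2.ne]
  rw [withDensity_congr_ae hcongr, Measure.withDensity_rnDeriv_eq μ0 μ1 hac01]

end CramerAux

/-- **Theorem 2: optimal error rate function of the log-likelihood-ratio test.**
For mutually absolutely continuous probability measures `μ0, μ1` on `X`, with
log-likelihood ratio `l x = log (dμ1/dμ0) x`, finite KL divergences and everywhere-finite
LMGFs `φ_k = cgf l μ_k`, if under hypothesis `H_k` the data `x i` are i.i.d. with law
`μ k` and `L⁽ⁿ⁾ = (1/n) ∑ l (x i)`, then for every threshold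
`γ ∈ (-D(μ0‖μ1), D(μ1‖μ0))`, the error probabilities
`α_n = P₀[L⁽ⁿ⁾ ≥ γ]` and `β_n = P₁[L⁽ⁿ⁾ < γ]` satisfy
`(1/n) log α_n → -I₀ γ` and `(1/n) log β_n → -I₁ γ`, where `I_k` is the Fenchel–Legendre
transform of `φ_k` (limits in the extended reals, with `log 0 = ⊥`). -/
theorem llr_test_error_rates
    {X : Type*} [MeasurableSpace X]
    (μ0 μ1 : Measure X) [IsProbabilityMeasure μ0] [IsProbabilityMeasure μ1]
    (hac01 : μ0 ≪ μ1) (hac10 : μ1 ≪ μ0)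
    (l : X → ℝ) (hl : l = fun a => Real.log (μ1.rnDeriv μ0 a).toReal)
    (hint0 : Integrable l μ0) (hint1 : Integrable l μ1)
    (hmgf0 : ∀ t : ℝ, Integrable (fun a => Real.exp (t * l a)) μ0)
    (hmgf1 : ∀ t : ℝ, Integrable (fun a => Real.exp (t * l a)) μ1)
    {Ω : Type*} [MeasurableSpace Ω]
    (P0 P1 : Measure Ω) [IsProbabilityMeasure P0] [IsProbabilityMeasure P1]
    (x : ℕ → Ω → X)
    (hmeas0 : ∀ i, Measurable (x i))
    (hindep0 : iIndepFun x P0)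
    (hindep1 : iIndepFun x P1)
    (hlaw0 : ∀ i, Measure.map (x i) P0 = μ0)
    (hlaw1 : ∀ i, Measure.map (x i) P1 = μ1)
    (γ : ℝ) (hγ0 : ∫ a, l a ∂μ0 < γ) (hγ1 : γ < ∫ a, l a ∂μ1) :
    Tendsto
      (fun n : ℕ => (((n : ℝ)⁻¹ : ℝ) : EReal) *
        ENNReal.log (P0 {ω | γ ≤ (n : ℝ)⁻¹ * ∑ i ∈ Finset.range n, l (x i ω)}))
      atTop (nhds (- ⨆ t : ℝ, ((γ * t - cgf l μ0 t : ℝ) : EReal))) ∧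
    Tendsto
      (fun n : ℕ => (((n : ℝ)⁻¹ : ℝ) : EReal) *
        ENNReal.log (P1 {ω | (n : ℝ)⁻¹ * ∑ i ∈ Finset.range n, l (x i ω) < γ}))
      atTop (nhds (- ⨆ t : ℝ, ((γ * t - cgf l μ1 t : ℝ) : EReal))) := by
  have hlm : Measurable l := by
    rw [hl]
    exact (Measure.measurable_rnDeriv μ1 μ0).ennreal_toReal.log
  have htilted0 : μ0.tilted l = μ1 := by
    rw [hl]
    exact tilted_log_rnDeriv μ0 μ1 hac01 hac10
  have htilted1 : μ1.tilted (fun a => -(l a)) = μ0 := by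
    rw [hl]
    exact tilted_neg_log_rnDeriv μ0 μ1 hac01 hac10
  constructor
  · refine cramer_main μ0 l hlm hint0 hmgf0 P0 x hmeas0 hindep0 hlaw0 γ hγ0 ?_ _
      (by
        intro n ω h
        simp only [Set.mem_setOf_eq] at h ⊢
        exact le_of_lt h) (fun n => subset_rfl)
    rw [htilted0]
    exact hγ1
  · have hmgf1' : ∀ t : ℝ, Integrable (fun a => exp (t * -(l a))) μ1 := by
      intro t
      simpa [neg_mul, mul_neg] using hmgf1 (-t)
    have hγl' : ∫ a, -(l a) ∂μ1 < -γ := by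
      rw [integral_neg]
      exact neg_lt_neg hγ1
    have hγu' : -γ < ∫ a, -(l a) ∂(μ1.tilted (fun a => -(l a))) := by
      rw [htilted1, integral_neg]
      exact neg_lt_neg hγ0
    have hmain := cramer_main μ1 (fun a => -(l a)) hlm.neg hint1.neg hmgf1' P1 x hmeas0
      hindep1 hlaw1 (-γ) hγl' hγu'
      (fun n => {ω | (n : ℝ)⁻¹ * ∑ i ∈ Finset.range n, l (x i ω) < γ})
      (by
        intro n ω h
        simp only [Set.mem_setOf_eq, Finset.sum_neg_distrib, mul_neg, neg_lt_neg_iff] at h ⊢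
        exact h)
      (by
        intro n ω h
        simp only [Set.mem_setOf_eq] at h ⊢
        rw [Finset.sum_neg_distrib, mul_neg]
        exact neg_le_neg (le_of_lt h))
    have hsup : (⨆ t : ℝ, (((-γ) * t - cgf (fun a => -(l a)) μ1 t : ℝ) : EReal))
        = ⨆ t : ℝ, ((γ * t - cgf l μ1 t : ℝ) : EReal) := by
      have hneg : ∀ t : ℝ, cgf (fun a => -(l a)) μ1 t = cgf l μ1 (-t) := by
        intro t
        rw [show (fun a => -(l a)) = -l from rfl, cgf_neg]
      refine Equiv.iSup_congr (Equiv.neg ℝ) ?_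
      intro t
      simp only [Equiv.neg_apply, hneg, neg_neg]
      congr 1
      ring
    rwa [hsup] at hmain
end

section
/- (Large deviations with a convergent sequence of thresholds.) Let z_1, z_2, ... be i.i.d. real-valued random variables whose LMGF φ(t) = log E[exp(t·z_1)] is finite for every t ∈ ℝ, and let S^(n) = (1/n)·Σ_{i=1}^n z_i. Let γ > E[z_1] be such that there exists t_γ > 0 with φ'(t_γ) = γ, and let (γ_n) be any real sequence with γ_n → γ. Then lim_{n→∞} (1/n)·log P[S^(n) ≥ γ_n] = −I(γ), where I(γ) = sup_{t∈ℝ} (γ·t − φ(t)). -/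
open MeasureTheory ProbabilityTheory Real Filter

namespace LDPAux
set_option linter.unusedSectionVars false
set_option maxHeartbeats 1000000

noncomputable def Mf (ν : Measure ℝ) : ℝ → ℝ := fun t => ∫ x, exp (t * x) ∂ν
noncomputable def M1 (ν : Measure ℝ) : ℝ → ℝ := fun t => ∫ x, x * exp (t * x) ∂ν
noncomputable def M2 (ν : Measure ℝ) : ℝ → ℝ := fun t => ∫ x, x ^ 2 * exp (t * x) ∂ν
noncomputable def phi (ν : Measure ℝ) : ℝ → ℝ := fun t => log (Mf ν t)
noncomputable def phi' (ν : Measure ℝ) : ℝ → ℝ := fun t => M1 ν t / Mf ν t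

lemma mean_var_abstract {p q r : ℝ} (hp : 0 < p) (n : ℕ) (hn : 1 ≤ n) :
    ((n : ℝ) * p ^ (n - 1) * q) / p ^ n = n * (q / p)
    ∧ (n : ℝ) * (((n : ℝ) - 1) * p ^ (n - 2) * q * q + p ^ (n - 1) * r) / p ^ n
        - (((n : ℝ) * p ^ (n - 1) * q) / p ^ n) ^ 2
      = n * (r / p - (q / p) ^ 2) := by
  have hp0 : p ≠ 0 := hp.ne'
  have hpow1 : p ^ n = p ^ (n - 1) * p := by
    rw [← pow_succ]; congr 1; omega
  rcases eq_or_lt_of_le hn with h1 | h2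
  · subst h1
    constructor
    · simp
    · simp
  · have hn2 : 2 ≤ n := h2
    have hpow2 : p ^ (n - 1) = p ^ (n - 2) * p := by
      rw [← pow_succ]; congr 1; omega
    constructor
    · rw [hpow1]; field_simp
    · rw [hpow1, hpow2]
      have hppow : p ^ (n - 2) ≠ 0 := pow_ne_zero _ hp0
      field_simp
      ring

lemma exp_mul_le_add {a b s x : ℝ} (h1 : a ≤ s) (h2 : s ≤ b) :
    exp (s * x) ≤ exp (a * x) + exp (b * x) := by
  rcases le_or_gt 0 x with hx | hx
  · have : exp (s * x) ≤ exp (b * x) := exp_le_exp.2 (by nlinarith)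
    linarith [exp_pos (a * x)]
  · have : exp (s * x) ≤ exp (a * x) := exp_le_exp.2 (by nlinarith)
    linarith [exp_pos (b * x)]

lemma abs_mul_exp_le (s x : ℝ) :
    |x| * exp (s * x) ≤ exp ((s + 1) * x) + exp ((s - 1) * x) := by
  have h1 : |x| ≤ exp |x| := (le_of_lt (lt_of_lt_of_le (by linarith [abs_nonneg x]) (Real.add_one_le_exp |x|)))
  have h2 : |x| * exp (s * x) ≤ exp (|x| + s * x) := by
    rw [Real.exp_add]
    exact mul_le_mul_of_nonneg_right h1 (exp_pos _).le
  refine h2.trans ?_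
  rcases le_or_gt 0 x with hx | hx
  · rw [abs_of_nonneg hx]
    have : exp (x + s * x) = exp ((s + 1) * x) := by ring_nf
    rw [this]; linarith [exp_pos ((s - 1) * x)]
  · rw [abs_of_neg hx]
    have : exp (-x + s * x) = exp ((s - 1) * x) := by ring_nf
    rw [this]; linarith [exp_pos ((s + 1) * x)]

lemma sq_mul_exp_le (s x : ℝ) :
    x ^ 2 * exp (s * x) ≤ exp ((s + 2) * x) + exp ((s - 2) * x) := by
  have h1 : |x| ≤ exp |x| := (le_of_lt (lt_of_lt_of_le (by linarith [abs_nonneg x]) (Real.add_one_le_exp |x|)))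
  have hsq : x ^ 2 ≤ exp (2 * |x|) := by
    have : x ^ 2 = |x| * |x| := by rw [← abs_mul, abs_mul_self]; ring
    rw [this, two_mul, Real.exp_add]
    exact mul_le_mul h1 h1 (abs_nonneg x) (exp_pos _).le
  have h2 : x ^ 2 * exp (s * x) ≤ exp (2 * |x| + s * x) := by
    rw [Real.exp_add]
    exact mul_le_mul_of_nonneg_right hsq (exp_pos _).le
  refine h2.trans ?_
  rcases le_or_gt 0 x with hx | hx
  · rw [abs_of_nonneg hx]
    have : exp (2 * x + s * x) = exp ((s + 2) * x) := by ring_nf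
    rw [this]; linarith [exp_pos ((s - 2) * x)]
  · rw [abs_of_neg hx]
    have : exp (2 * -x + s * x) = exp ((s - 2) * x) := by ring_nf
    rw [this]; linarith [exp_pos ((s + 2) * x)]

set_option linter.unusedSectionVars false

variable {ν : Measure ℝ} [IsProbabilityMeasure ν]

lemma integrable_mul_exp (hE : ∀ t : ℝ, Integrable (fun x => exp (t * x)) ν) (t : ℝ) :
    Integrable (fun x => x * exp (t * x)) ν := by
  refine ((hE (t + 1)).add (hE (t - 1))).mono'
    ((measurable_id.mul ((measurable_id.const_mul t).exp)).aestronglyMeasurable) ?_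
  filter_upwards with x
  rw [norm_mul, Real.norm_eq_abs, Real.norm_eq_abs, abs_exp]
  exact (abs_mul_exp_le t x)

lemma integrable_sq_mul_exp (hE : ∀ t : ℝ, Integrable (fun x => exp (t * x)) ν) (t : ℝ) :
    Integrable (fun x => x ^ 2 * exp (t * x)) ν := by
  refine ((hE (t + 2)).add (hE (t - 2))).mono'
    (((measurable_id.pow_const 2).mul ((measurable_id.const_mul t).exp)).aestronglyMeasurable) ?_
  filter_upwards with x
  rw [norm_mul, Real.norm_eq_abs, Real.norm_eq_abs, abs_exp, abs_of_nonneg (sq_nonneg x)]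
  exact (sq_mul_exp_le t x)

lemma hasDerivAt_integral_exp (hE : ∀ t : ℝ, Integrable (fun x => exp (t * x)) ν) (t₀ : ℝ) :
    HasDerivAt (fun t => ∫ x, exp (t * x) ∂ν) (∫ x, x * exp (t₀ * x) ∂ν) t₀ := by
  have key := hasDerivAt_integral_of_dominated_loc_of_deriv_le (μ := ν)
    (F := fun t x => exp (t * x)) (F' := fun t x => x * exp (t * x))
    (bound := fun x => 2 * (exp ((t₀ + 2) * x) + exp ((t₀ - 2) * x)))
    (x₀ := t₀) (s := Metric.ball t₀ 1) (Metric.ball_mem_nhds t₀ one_pos)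
    (Eventually.of_forall fun t => ((measurable_id.const_mul t).exp).aestronglyMeasurable)
    (hE t₀)
    ((measurable_id.mul ((measurable_id.const_mul t₀).exp)).aestronglyMeasurable)
    ?_ (((hE (t₀ + 2)).add (hE (t₀ - 2))).const_mul 2) ?_
  · exact key.2
  · filter_upwards with x s hs
    simp only [Metric.mem_ball, Real.dist_eq] at hs
    rw [norm_mul, Real.norm_eq_abs, Real.norm_eq_abs, abs_exp]
    have h1 := abs_mul_exp_le s x
    have h2 : exp ((s + 1) * x) ≤ exp ((t₀ - 2) * x) + exp ((t₀ + 2) * x) :=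
      exp_mul_le_add (by cases abs_lt.1 hs; linarith) (by cases abs_lt.1 hs; linarith)
    have h3 : exp ((s - 1) * x) ≤ exp ((t₀ - 2) * x) + exp ((t₀ + 2) * x) :=
      exp_mul_le_add (by cases abs_lt.1 hs; linarith) (by cases abs_lt.1 hs; linarith)
    linarith
  · filter_upwards with x s _
    have := ((hasDerivAt_id s).mul_const x).exp
    simpa [mul_comm] using this

lemma hasDerivAt_integral_mul_exp (hE : ∀ t : ℝ, Integrable (fun x => exp (t * x)) ν) (t₀ : ℝ) :
    HasDerivAt (fun t => ∫ x, x * exp (t * x) ∂ν) (∫ x, x ^ 2 * exp (t₀ * x) ∂ν) t₀ := by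
  have key := hasDerivAt_integral_of_dominated_loc_of_deriv_le (μ := ν)
    (F := fun t x => x * exp (t * x)) (F' := fun t x => x ^ 2 * exp (t * x))
    (bound := fun x => 2 * (exp ((t₀ + 3) * x) + exp ((t₀ - 3) * x)))
    (x₀ := t₀) (s := Metric.ball t₀ 1) (Metric.ball_mem_nhds t₀ one_pos)
    (Eventually.of_forall fun t =>
      (measurable_id.mul ((measurable_id.const_mul t).exp)).aestronglyMeasurable)
    (integrable_mul_exp hE t₀)
    (((measurable_id.pow_const 2).mul ((measurable_id.const_mul t₀).exp)).aestronglyMeasurable)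
    ?_ (((hE (t₀ + 3)).add (hE (t₀ - 3))).const_mul 2) ?_
  · exact key.2
  · filter_upwards with x s hs
    simp only [Metric.mem_ball, Real.dist_eq] at hs
    rw [norm_mul, Real.norm_eq_abs, Real.norm_eq_abs, abs_exp, abs_of_nonneg (sq_nonneg x)]
    have h1 := sq_mul_exp_le s x
    have h2 : exp ((s + 2) * x) ≤ exp ((t₀ - 3) * x) + exp ((t₀ + 3) * x) :=
      exp_mul_le_add (by cases abs_lt.1 hs; linarith) (by cases abs_lt.1 hs; linarith)
    have h3 : exp ((s - 2) * x) ≤ exp ((t₀ - 3) * x) + exp ((t₀ + 3) * x) :=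
      exp_mul_le_add (by cases abs_lt.1 hs; linarith) (by cases abs_lt.1 hs; linarith)
    linarith
  · filter_upwards with x s _
    have := (((hasDerivAt_id s).mul_const x).exp).const_mul x
    exact this.congr_deriv (by simp only [id_eq]; ring)

lemma Mf_pos (hE : ∀ t : ℝ, Integrable (fun x => exp (t * x)) ν) (t : ℝ) : 0 < Mf ν t :=
  integral_exp_pos (hE t)

lemma hasDerivAt_Mf (hE : ∀ t : ℝ, Integrable (fun x => exp (t * x)) ν) (t : ℝ) :
    HasDerivAt (Mf ν) (M1 ν t) t := hasDerivAt_integral_exp hE t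

lemma hasDerivAt_M1 (hE : ∀ t : ℝ, Integrable (fun x => exp (t * x)) ν) (t : ℝ) :
    HasDerivAt (M1 ν) (M2 ν t) t := hasDerivAt_integral_mul_exp hE t

lemma hasDerivAt_phi (hE : ∀ t : ℝ, Integrable (fun x => exp (t * x)) ν) (t : ℝ) :
    HasDerivAt (phi ν) (phi' ν t) t := by
  have := (hasDerivAt_Mf hE t).log (Mf_pos hE t).ne'
  exact this

lemma continuous_phi' (hE : ∀ t : ℝ, Integrable (fun x => exp (t * x)) ν) :
    Continuous (phi' ν) := by
  have d1 : Differentiable ℝ (M1 ν) := fun t => (hasDerivAt_M1 hE t).differentiableAt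
  have d2 : Differentiable ℝ (Mf ν) := fun t => (hasDerivAt_Mf hE t).differentiableAt
  exact d1.continuous.div d2.continuous fun t => (Mf_pos hE t).ne'

lemma cauchy_schwarz_M (hE : ∀ t : ℝ, Integrable (fun x => exp (t * x)) ν) (t : ℝ) :
    M1 ν t ^ 2 ≤ M2 ν t * Mf ν t := by
  have key : ∀ u : ℝ, 0 ≤ Mf ν t * (u * u) + (2 * M1 ν t) * u + M2 ν t := by
    intro u
    have h : ∀ x : ℝ, (x + u) ^ 2 * exp (t * x)
        = x ^ 2 * exp (t * x) + (2 * u) * (x * exp (t * x)) + (u * u) * exp (t * x) := by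
      intro x; ring
    have hint : Integrable (fun x => (x + u) ^ 2 * exp (t * x)) ν := by
      simp only [h]
      exact ((integrable_sq_mul_exp hE t).add
        ((integrable_mul_exp hE t).const_mul _)).add ((hE t).const_mul _)
    have hnn : 0 ≤ ∫ x, (x + u) ^ 2 * exp (t * x) ∂ν :=
      integral_nonneg fun x => mul_nonneg (sq_nonneg _) (exp_pos _).le
    have heq : ∫ x, (x + u) ^ 2 * exp (t * x) ∂ν
        = M2 ν t + (2 * u) * M1 ν t + (u * u) * Mf ν t := by
      simp only [h]
      have iA : Integrable (fun x => x ^ 2 * exp (t * x) + 2 * u * (x * exp (t * x))) ν :=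
        (integrable_sq_mul_exp hE t).add ((integrable_mul_exp hE t).const_mul (2 * u))
      rw [integral_add iA ((hE t).const_mul (u * u)),
        integral_add (integrable_sq_mul_exp hE t) ((integrable_mul_exp hE t).const_mul (2 * u)),
        integral_const_mul, integral_const_mul]
      rfl
    rw [heq] at hnn
    linarith
  have := discrim_le_zero key
  rw [discrim] at this
  nlinarith

lemma hasDerivAt_phi' (hE : ∀ t : ℝ, Integrable (fun x => exp (t * x)) ν) (t : ℝ) :
    HasDerivAt (phi' ν) ((M2 ν t * Mf ν t - M1 ν t * M1 ν t) / (Mf ν t) ^ 2) t :=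
  (hasDerivAt_M1 hE t).div (hasDerivAt_Mf hE t) (Mf_pos hE t).ne'

lemma monotone_phi' (hE : ∀ t : ℝ, Integrable (fun x => exp (t * x)) ν) :
    Monotone (phi' ν) := by
  refine monotone_of_deriv_nonneg (fun t => (hasDerivAt_phi' hE t).differentiableAt) fun t => ?_
  rw [(hasDerivAt_phi' hE t).deriv]
  have := cauchy_schwarz_M hE t
  have h2 := sq_nonneg (Mf ν t)
  apply div_nonneg _ (sq_nonneg _)
  nlinarith

lemma isProbTilted (hE : ∀ t : ℝ, Integrable (fun x => exp (t * x)) ν) (t' : ℝ) :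
    IsProbabilityMeasure (ν.tilted (fun x => t' * x)) :=
  isProbabilityMeasure_tilted (hE t')

lemma integrable_tilted_aux (hE : ∀ t : ℝ, Integrable (fun x => exp (t * x)) ν) (t' : ℝ)
    {g : ℝ → ℝ} (hg : Measurable g)
    (hgint : Integrable (fun x => g x * exp (t' * x)) ν) :
    Integrable g (ν.tilted (fun x => t' * x)) := by
  rw [Measure.tilted, integrable_withDensity_iff]
  · refine (hgint.div_const (Mf ν t')).congr ?_
    filter_upwards with x
    rw [ENNReal.toReal_ofReal (by positivity)]
    simp [Mf]; ring
  · exact (ENNReal.measurable_ofReal.comp ((((measurable_id.const_mul t').exp).div_const _)))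
  · filter_upwards with x using ENNReal.ofReal_lt_top

lemma integral_tilted_id (hE : ∀ t : ℝ, Integrable (fun x => exp (t * x)) ν) (t' : ℝ) :
    ∫ x, x ∂(ν.tilted (fun x => t' * x)) = M1 ν t' / Mf ν t' := by
  rw [integral_tilted]
  simp only [smul_eq_mul]
  have : ∀ x : ℝ, exp (t' * x) / (∫ y, exp (t' * y) ∂ν) * x
      = (Mf ν t')⁻¹ * (x * exp (t' * x)) := by
    intro x; simp [Mf]; ring
  simp only [this]
  rw [integral_const_mul]
  simp [M1, div_eq_inv_mul]

lemma integral_tilted_sq (hE : ∀ t : ℝ, Integrable (fun x => exp (t * x)) ν) (t' : ℝ) :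
    ∫ x, x ^ 2 ∂(ν.tilted (fun x => t' * x)) = M2 ν t' / Mf ν t' := by
  rw [integral_tilted]
  simp only [smul_eq_mul]
  have : ∀ x : ℝ, exp (t' * x) / (∫ y, exp (t' * y) ∂ν) * x ^ 2
      = (Mf ν t')⁻¹ * (x ^ 2 * exp (t' * x)) := by
    intro x; simp [Mf]; ring
  simp only [this]
  rw [integral_const_mul]
  simp [M2, div_eq_inv_mul]

lemma hasDerivAt_gain (hE : ∀ t : ℝ, Integrable (fun x => exp (t * x)) ν) (γ t : ℝ) :
    HasDerivAt (fun s => γ * s - phi ν s) (γ - phi' ν t) t := by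
  exact (((hasDerivAt_id t).const_mul γ).sub (hasDerivAt_phi hE t)).congr_deriv (by simp)

lemma max_at_saddle (hE : ∀ t : ℝ, Integrable (fun x => exp (t * x)) ν) {γ tγ : ℝ}
    (hsad : phi' ν tγ = γ) (t : ℝ) :
    γ * t - phi ν t ≤ γ * tγ - phi ν tγ := by
  have hdiff : ∀ s, HasDerivAt (fun s => γ * s - phi ν s) (γ - phi' ν s) s :=
    hasDerivAt_gain hE γ
  rcases le_total t tγ with h | h
  · have hmono : MonotoneOn (fun s => γ * s - phi ν s) (Set.Iic tγ) := by
      refine monotoneOn_of_deriv_nonneg (convex_Iic tγ)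
        (fun s _ => (hdiff s).continuousAt.continuousWithinAt)
        (fun s _ => (hdiff s).differentiableAt.differentiableWithinAt) fun s hs => ?_
      rw [(hdiff s).deriv]
      have : phi' ν s ≤ phi' ν tγ := monotone_phi' hE (le_of_lt (by simpa using hs))
      rw [hsad] at this; linarith
    exact hmono (Set.mem_Iic.2 h) (Set.mem_Iic.2 le_rfl) h
  · have hmono : AntitoneOn (fun s => γ * s - phi ν s) (Set.Ici tγ) := by
      refine antitoneOn_of_deriv_nonpos (convex_Ici tγ)
        (fun s _ => (hdiff s).continuousAt.continuousWithinAt)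
        (fun s _ => (hdiff s).differentiableAt.differentiableWithinAt) fun s hs => ?_
      rw [(hdiff s).deriv]
      have : phi' ν tγ ≤ phi' ν s := monotone_phi' hE (le_of_lt (by simpa using hs))
      rw [hsad] at this; linarith
    exact hmono (Set.mem_Ici.2 le_rfl) (Set.mem_Ici.2 h) h

lemma exists_phi'_gt (hE : ∀ t : ℝ, Integrable (fun x => exp (t * x)) ν) {γ tγ : ℝ}
    (hmean : ∫ x, x ∂ν < γ) (hsad : phi' ν tγ = γ) :
    ∃ T, tγ < T ∧ γ < phi' ν T := by
  by_contra hcon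
  push_neg at hcon
  have hflat : ∀ T, tγ < T → phi' ν T = γ := fun T hT =>
    le_antisymm (hcon T hT) (hsad ▸ monotone_phi' hE hT.le)
  have hM1 : ∀ T, tγ < T → M1 ν T = γ * Mf ν T := by
    intro T hT
    have := hflat T hT
    rw [phi', div_eq_iff (Mf_pos hE T).ne'] at this
    linarith [this]
  set s := tγ + 1 with hs
  have hsgt : tγ < s := by simp [hs]
  have hev : (M1 ν) =ᶠ[nhds s] fun t => γ * Mf ν t := by
    filter_upwards [Ioi_mem_nhds hsgt] with t ht
    exact hM1 t ht
  have hd2 : HasDerivAt (M1 ν) (γ * M1 ν s) s :=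
    ((hasDerivAt_Mf hE s).const_mul γ).congr_of_eventuallyEq hev
  have huniq : M2 ν s = γ * M1 ν s := by
    rw [← (hasDerivAt_M1 hE s).deriv, ← hd2.deriv]
  have hM1s : M1 ν s = γ * Mf ν s := hM1 s hsgt
  have hM2s : M2 ν s = γ ^ 2 * Mf ν s := by rw [huniq, hM1s]; ring
  have hzero : ∫ x, (x - γ) ^ 2 * exp (s * x) ∂ν = 0 := by
    have hexp : ∀ x : ℝ, (x - γ) ^ 2 * exp (s * x)
        = x ^ 2 * exp (s * x) + (-2 * γ) * (x * exp (s * x)) + (γ * γ) * exp (s * x) := by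
      intro x; ring
    have iA : Integrable (fun x => x ^ 2 * exp (s * x) + (-2 * γ) * (x * exp (s * x))) ν :=
      (integrable_sq_mul_exp hE s).add ((integrable_mul_exp hE s).const_mul _)
    simp only [hexp]
    rw [integral_add iA ((hE s).const_mul (γ * γ)),
      integral_add (integrable_sq_mul_exp hE s) ((integrable_mul_exp hE s).const_mul (-2 * γ)),
      integral_const_mul, integral_const_mul]
    have e1 : ∫ x, x ^ 2 * exp (s * x) ∂ν = M2 ν s := rfl
    have e2 : ∫ x, x * exp (s * x) ∂ν = M1 ν s := rfl
    have e3 : ∫ x, exp (s * x) ∂ν = Mf ν s := rfl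
    rw [e1, e2, e3, hM2s, hM1s]; ring
  have hae : (fun x => (x - γ) ^ 2 * exp (s * x)) =ᵐ[ν] 0 := by
    have hint : Integrable (fun x => (x - γ) ^ 2 * exp (s * x)) ν := by
      have hexp : ∀ x : ℝ, (x - γ) ^ 2 * exp (s * x)
          = x ^ 2 * exp (s * x) + (-2 * γ) * (x * exp (s * x)) + (γ * γ) * exp (s * x) := by
        intro x; ring
      simp only [hexp]
      exact ((integrable_sq_mul_exp hE s).add
        ((integrable_mul_exp hE s).const_mul _)).add ((hE s).const_mul _)
    exact (integral_eq_zero_iff_of_nonneg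
      (fun x => mul_nonneg (sq_nonneg _) (exp_pos _).le) hint).1 hzero
  have haeγ : ∀ᵐ x ∂ν, x = γ := by
    filter_upwards [hae] with x hx
    have : (x - γ) ^ 2 = 0 := by
      by_contra h
      have := (exp_pos (s * x)).ne'
      simp only [Pi.zero_apply] at hx
      exact h (by
        rcases mul_eq_zero.1 hx with h1 | h1
        · exact h1
        · exact absurd h1 this)
    nlinarith [sq_nonneg (x - γ), this]
  have : ∫ x, x ∂ν = γ := by
    rw [integral_congr_ae (g := fun _ => γ) (by filter_upwards [haeγ] with x hx using hx)]
    simp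
  linarith

lemma selection (hE : ∀ t : ℝ, Integrable (fun x => exp (t * x)) ν) {γ tγ : ℝ}
    (hmean : ∫ x, x ∂ν < γ) (htγ : 0 < tγ) (hsad : phi' ν tγ = γ) {ε : ℝ} (hε : 0 < ε) :
    ∃ t', 0 < t' ∧ γ < phi' ν t' ∧
      t' * phi' ν t' - phi ν t' < (γ * tγ - phi ν tγ) + ε := by
  obtain ⟨T, hTgt, hTval⟩ := exists_phi'_gt hE hmean hsad
  set L := γ * tγ - phi ν tγ with hL
  set S := Set.Icc tγ T ∩ phi' ν ⁻¹' {γ} with hS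
  have hne : tγ ∈ S := ⟨⟨le_rfl, hTgt.le⟩, hsad⟩
  have hbdd : BddAbove S := (BddAbove.mono Set.inter_subset_left) bddAbove_Icc
  have hclosed : IsClosed S :=
    isClosed_Icc.inter (isClosed_singleton.preimage (continuous_phi' hE))
  set t₀ := sSup S with ht₀
  have ht₀S : t₀ ∈ S := hclosed.csSup_mem ⟨tγ, hne⟩ hbdd
  have ht₀sad : phi' ν t₀ = γ := ht₀S.2
  have ht₀ge : tγ ≤ t₀ := ht₀S.1.1
  have ht₀lt : t₀ < T := lt_of_le_of_ne ht₀S.1.2 (fun h => by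
    rw [h] at ht₀sad; exact absurd ht₀sad hTval.ne')
  have hLt₀ : γ * t₀ - phi ν t₀ = L := by
    have h1 := max_at_saddle hE hsad t₀
    have h2 := max_at_saddle hE ht₀sad tγ
    rw [hL]; linarith
  have hφdiff : Differentiable ℝ (phi ν) := fun t => (hasDerivAt_phi hE t).differentiableAt
  have hφcont : Continuous (phi ν) := hφdiff.continuous
  have hfcont : Continuous (fun t => t * phi' ν t - phi ν t) :=
    (continuous_id.mul (continuous_phi' hE)).sub hφcont
  have hft₀ : t₀ * phi' ν t₀ - phi ν t₀ = L := by rw [ht₀sad, mul_comm]; exact hLt₀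
  have hev : ∀ᶠ t in nhds t₀, t * phi' ν t - phi ν t < L + ε := by
    have : Set.Iio (L + ε) ∈ nhds (t₀ * phi' ν t₀ - phi ν t₀) := by
      rw [hft₀]; exact Iio_mem_nhds (by linarith)
    exact hfcont.continuousAt this
  have hev2 : ∀ᶠ t in nhdsWithin t₀ (Set.Ioi t₀), t * phi' ν t - phi ν t < L + ε :=
    hev.filter_mono nhdsWithin_le_nhds
  have hev3 : ∀ᶠ t in nhdsWithin t₀ (Set.Ioi t₀), t ∈ Set.Ioc t₀ T :=
    Ioc_mem_nhdsGT_of_mem ⟨le_rfl, ht₀lt⟩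
  obtain ⟨t', hft', ht'mem⟩ := (hev2.and hev3).exists
  refine ⟨t', lt_of_le_of_lt (le_trans htγ.le ht₀ge) ht'mem.1, ?_, hft'⟩
  have hge : γ ≤ phi' ν t' := ht₀sad ▸ monotone_phi' hE ht'mem.1.le
  rcases hge.lt_or_eq with h | h
  · exact h
  · exfalso
    have ht'S : t' ∈ S := ⟨⟨le_trans ht₀ge ht'mem.1.le, ht'mem.2⟩, h.symm⟩
    exact absurd (le_csSup hbdd ht'S) (not_le.2 ht'mem.1)

lemma memLp_two_tilted (hE : ∀ t : ℝ, Integrable (fun x => exp (t * x)) ν) (t' : ℝ) :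
    MemLp id 2 (ν.tilted (fun x => t' * x)) := by
  refine (memLp_two_iff_integrable_sq measurable_id.aestronglyMeasurable).2 ?_
  exact integrable_tilted_aux hE t' (measurable_id.pow_const 2) (integrable_sq_mul_exp hE t')

lemma variance_tilted (hE : ∀ t : ℝ, Integrable (fun x => exp (t * x)) ν) (t' : ℝ) :
    variance id (ν.tilted (fun x => t' * x))
      = M2 ν t' / Mf ν t' - (M1 ν t' / Mf ν t') ^ 2 := by
  have : IsProbabilityMeasure (ν.tilted (fun x => t' * x)) :=
    isProbabilityMeasure_tilted (hE t')
  rw [variance_eq_sub (memLp_two_tilted hE t')]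
  have h1 : ∫ x, (id ^ 2) x ∂(ν.tilted (fun x => t' * x))
      = ∫ x, x ^ 2 ∂(ν.tilted (fun x => t' * x)) := by
    congr 1
  have h2 : ∫ x, id x ∂(ν.tilted (fun x => t' * x))
      = ∫ x, x ∂(ν.tilted (fun x => t' * x)) := rfl
  rw [h1, h2, integral_tilted_id hE t', integral_tilted_sq hE t']

lemma cheby_tilted (hE : ∀ t : ℝ, Integrable (fun x => exp (t * x)) ν) (t' : ℝ)
    {c : ℝ} (hc : 0 < c) :
    (ν.tilted (fun x => t' * x)) {x | c ≤ |x - M1 ν t' / Mf ν t'|}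
      ≤ ENNReal.ofReal ((M2 ν t' / Mf ν t' - (M1 ν t' / Mf ν t') ^ 2) / c ^ 2) := by
  have : IsProbabilityMeasure (ν.tilted (fun x => t' * x)) :=
    isProbabilityMeasure_tilted (hE t')
  have key := meas_ge_le_variance_div_sq (μ := ν.tilted (fun x => t' * x)) (X := id)
    (memLp_two_tilted hE t') hc
  rw [variance_tilted hE t'] at key
  have hm : (ν.tilted (fun x => t' * x))[id] = M1 ν t' / Mf ν t' := integral_tilted_id hE t'
  rw [hm] at key
  exact key

lemma tilted_Icc_lower (hE : ∀ t : ℝ, Integrable (fun x => exp (t * x)) ν)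
    {t' : ℝ} (ht' : 0 < t') (a b : ℝ) :
    exp (-(t' * b)) * Mf ν t'
        * ((ν.tilted (fun x => t' * x)) (Set.Icc a b)).toReal
      ≤ (ν (Set.Icc a b)).toReal := by
  have hZ : 0 < Mf ν t' := Mf_pos hE t'
  rw [tilted_apply_eq_ofReal_integral _ (Set.Icc a b),
    ENNReal.toReal_ofReal (integral_nonneg fun x => by positivity)]
  have hZ' : 0 < ∫ y, exp (t' * y) ∂ν := hZ
  have hint : ∫ x in Set.Icc a b, exp (t' * x) / (∫ y, exp (t' * y) ∂ν) ∂ν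
      ≤ ∫ _ in Set.Icc a b, exp (t' * b) / (∫ y, exp (t' * y) ∂ν) ∂ν := by
    refine setIntegral_mono_on ((hE t').integrableOn.div_const _)
      (integrableOn_const (measure_lt_top _ _).ne) measurableSet_Icc ?_
    intro x hx
    have hle : exp (t' * x) ≤ exp (t' * b) :=
      exp_le_exp.2 (mul_le_mul_of_nonneg_left hx.2 ht'.le)
    gcongr
  rw [setIntegral_const, smul_eq_mul] at hint
  calc exp (-(t' * b)) * Mf ν t'
        * ∫ x in Set.Icc a b, exp (t' * x) / (∫ y, exp (t' * y) ∂ν) ∂ν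
      ≤ exp (-(t' * b)) * Mf ν t'
        * ((ν (Set.Icc a b)).toReal * (exp (t' * b) / (∫ y, exp (t' * y) ∂ν))) := by
        exact mul_le_mul_of_nonneg_left hint (by positivity)
    _ = (ν (Set.Icc a b)).toReal := by
        rw [exp_neg]
        have : Mf ν t' = ∫ y, exp (t' * y) ∂ν := rfl
        rw [this]
        field_simp

variable {Ω : Type*} [MeasurableSpace Ω] {P : Measure Ω} [IsProbabilityMeasure P]
  {z : ℕ → Ω → ℝ}

lemma measurable_sumz (hmeas : ∀ i, Measurable (z i)) (n : ℕ) :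
    Measurable (fun ω => ∑ i ∈ Finset.range n, z i ω) :=
  Finset.measurable_sum _ fun i _ => hmeas i

lemma Mf_map_eq {f : Ω → ℝ} (hf : Measurable f) (t : ℝ) :
    Mf (P.map f) t = ∫ ω, exp (t * f ω) ∂P := by
  have hg : Measurable (fun x : ℝ => exp (t * x)) := by fun_prop
  rw [Mf]
  exact integral_map hf.aemeasurable hg.aestronglyMeasurable

lemma int_map_eq {f : Ω → ℝ} (hf : Measurable f) :
    ∫ x, x ∂(P.map f) = ∫ ω, f ω ∂P := by
  exact integral_map hf.aemeasurable measurable_id.aestronglyMeasurable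

lemma hE_map {f : Ω → ℝ} (hf : Measurable f)
    (h : ∀ t : ℝ, Integrable (fun ω => exp (t * f ω)) P) (t : ℝ) :
    Integrable (fun x => exp (t * x)) (P.map f) :=
  (integrable_map_measure ((measurable_id.const_mul t).exp.aestronglyMeasurable)
    hf.aemeasurable).2 (h t)

lemma integrable_exp_z (hident : ∀ i, IdentDistrib (z i) (z 0) P P)
    (hmgf : ∀ t : ℝ, Integrable (fun ω => Real.exp (t * z 0 ω)) P) (i : ℕ) (t : ℝ) :
    Integrable (fun ω => exp (t * z i ω)) P := by
  exact ((hident i).comp (measurable_exp.comp (measurable_id.const_mul t))).integrable_iff.2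
    (hmgf t)

lemma mgf_z_eq (hident : ∀ i, IdentDistrib (z i) (z 0) P P) (i : ℕ) (t : ℝ) :
    mgf (z i) P t = mgf (z 0) P t :=
  ((hident i).comp (measurable_exp.comp (measurable_id.const_mul t))).integral_eq

lemma integrable_exp_sum (hmeas : ∀ i, Measurable (z i))
    (hindep : iIndepFun z P)
    (hident : ∀ i, IdentDistrib (z i) (z 0) P P)
    (hmgf : ∀ t : ℝ, Integrable (fun ω => Real.exp (t * z 0 ω)) P) (n : ℕ) (t : ℝ) :
    Integrable (fun ω => exp (t * ∑ i ∈ Finset.range n, z i ω)) P := by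
  have := hindep.integrable_exp_mul_sum (s := Finset.range n) hmeas
    (fun i _ => integrable_exp_z hident hmgf i t)
  simpa [Finset.sum_apply] using this

lemma hEνn (hmeas : ∀ i, Measurable (z i))
    (hindep : iIndepFun z P)
    (hident : ∀ i, IdentDistrib (z i) (z 0) P P)
    (hmgf : ∀ t : ℝ, Integrable (fun ω => Real.exp (t * z 0 ω)) P) (n : ℕ) (t : ℝ) :
    Integrable (fun x => exp (t * x)) (P.map (fun ω => ∑ i ∈ Finset.range n, z i ω)) :=
  hE_map (measurable_sumz hmeas n) (fun t => integrable_exp_sum hmeas hindep hident hmgf n t) t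

lemma Mf_νn (hmeas : ∀ i, Measurable (z i))
    (hindep : iIndepFun z P)
    (hident : ∀ i, IdentDistrib (z i) (z 0) P P) (n : ℕ) (t : ℝ) :
    Mf (P.map (fun ω => ∑ i ∈ Finset.range n, z i ω)) t = (Mf (P.map (z 0)) t) ^ n := by
  rw [Mf_map_eq (measurable_sumz hmeas n), Mf_map_eq (hmeas 0)]
  have h1 : ∫ ω, exp (t * ∑ i ∈ Finset.range n, z i ω) ∂P
      = mgf (∑ i ∈ Finset.range n, z i) P t := by
    rw [mgf]; congr 1; ext ω; simp [Finset.sum_apply]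
  rw [h1, (hindep.mgf_sum hmeas (Finset.range n))]
  have : ∀ i ∈ Finset.range n, mgf (z i) P t = mgf (z 0) P t := fun i _ => mgf_z_eq hident i t
  rw [Finset.prod_congr rfl this, Finset.prod_const, Finset.card_range]
  rfl

lemma chernoff (hmeas : ∀ i, Measurable (z i))
    (hindep : iIndepFun z P)
    (hident : ∀ i, IdentDistrib (z i) (z 0) P P)
    (hmgf : ∀ t : ℝ, Integrable (fun ω => Real.exp (t * z 0 ω)) P)
    {tγ : ℝ} (htγ : 0 ≤ tγ) (n : ℕ) (a : ℝ) :
    (P {ω | a ≤ ∑ i ∈ Finset.range n, z i ω}).toReal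
      ≤ exp (-tγ * a + n * phi (P.map (z 0)) tγ) := by
  have key := measure_ge_le_exp_cgf (X := ∑ i ∈ Finset.range n, z i) (μ := P) a htγ
    (by simpa [Finset.sum_apply] using
      integrable_exp_sum hmeas hindep hident hmgf n tγ)
  have hset : {ω | a ≤ (∑ i ∈ Finset.range n, z i) ω}
      = {ω | a ≤ ∑ i ∈ Finset.range n, z i ω} := by
    ext ω; simp [Finset.sum_apply]
  rw [hset] at key
  refine key.trans ?_
  have hcgf : cgf (∑ i ∈ Finset.range n, z i) P tγ = n * phi (P.map (z 0)) tγ := by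
    rw [hindep.cgf_sum hmeas (fun i _ => integrable_exp_z hident hmgf i tγ)]
    have : ∀ i ∈ Finset.range n, cgf (z i) P tγ = phi (P.map (z 0)) tγ := by
      intro i _
      rw [cgf, mgf_z_eq hident i tγ, phi, Mf_map_eq (hmeas 0)]
      rfl
    rw [Finset.sum_congr rfl this, Finset.sum_const, Finset.card_range, nsmul_eq_mul]
  rw [hcgf]

lemma M1_νn (hmeas : ∀ i, Measurable (z i))
    (hindep : iIndepFun z P)
    (hident : ∀ i, IdentDistrib (z i) (z 0) P P)
    (hmgf : ∀ t : ℝ, Integrable (fun ω => Real.exp (t * z 0 ω)) P) (n : ℕ) (t : ℝ) :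
    M1 (P.map (fun ω => ∑ i ∈ Finset.range n, z i ω)) t
      = n * (Mf (P.map (z 0)) t) ^ (n - 1) * M1 (P.map (z 0)) t := by
  set μ := P.map (z 0)
  have hEμ : ∀ t : ℝ, Integrable (fun x => exp (t * x)) μ := hE_map (hmeas 0) hmgf
  have hEν := hEνn hmeas hindep hident hmgf n
  have : IsProbabilityMeasure μ := Measure.isProbabilityMeasure_map (hmeas 0).aemeasurable
  have : IsProbabilityMeasure (P.map (fun ω => ∑ i ∈ Finset.range n, z i ω)) :=
    Measure.isProbabilityMeasure_map (measurable_sumz hmeas n).aemeasurable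
  have h1 : HasDerivAt (Mf (P.map (fun ω => ∑ i ∈ Finset.range n, z i ω)))
      (M1 (P.map (fun ω => ∑ i ∈ Finset.range n, z i ω)) t) t := hasDerivAt_Mf hEν t
  have heq : Mf (P.map (fun ω => ∑ i ∈ Finset.range n, z i ω)) = fun s => Mf μ s ^ n :=
    funext fun s => Mf_νn hmeas hindep hident n s
  rw [heq] at h1
  have h2 : HasDerivAt (fun s => Mf μ s ^ n)
      (n * Mf μ t ^ (n - 1) * M1 μ t) t := (hasDerivAt_Mf hEμ t).pow n
  exact h1.unique h2

lemma M2_νn (hmeas : ∀ i, Measurable (z i))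
    (hindep : iIndepFun z P)
    (hident : ∀ i, IdentDistrib (z i) (z 0) P P)
    (hmgf : ∀ t : ℝ, Integrable (fun ω => Real.exp (t * z 0 ω)) P) (n : ℕ) (t : ℝ) :
    M2 (P.map (fun ω => ∑ i ∈ Finset.range n, z i ω)) t
      = n * (((n : ℝ) - 1) * (Mf (P.map (z 0)) t) ^ (n - 2) * M1 (P.map (z 0)) t
          * M1 (P.map (z 0)) t
        + (Mf (P.map (z 0)) t) ^ (n - 1) * M2 (P.map (z 0)) t) := by
  set μ := P.map (z 0)
  have hEμ : ∀ t : ℝ, Integrable (fun x => exp (t * x)) μ := hE_map (hmeas 0) hmgf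
  have hEν := hEνn hmeas hindep hident hmgf n
  have : IsProbabilityMeasure μ := Measure.isProbabilityMeasure_map (hmeas 0).aemeasurable
  have : IsProbabilityMeasure (P.map (fun ω => ∑ i ∈ Finset.range n, z i ω)) :=
    Measure.isProbabilityMeasure_map (measurable_sumz hmeas n).aemeasurable
  rcases Nat.eq_zero_or_pos n with hn | hn
  · subst hn
    simp only [Nat.cast_zero, zero_mul]
    have : (P.map (fun ω => ∑ i ∈ Finset.range 0, z i ω)) = P.map (fun _ => (0:ℝ)) := by
      simp
    rw [M2, this]
    have hc : Measurable (fun _ : Ω => (0:ℝ)) := measurable_const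
    have hg : Measurable (fun x : ℝ => x ^ 2 * exp (t * x)) := by fun_prop
    rw [integral_map hc.aemeasurable hg.aestronglyMeasurable]
    simp
  have h1 : HasDerivAt (M1 (P.map (fun ω => ∑ i ∈ Finset.range n, z i ω)))
      (M2 (P.map (fun ω => ∑ i ∈ Finset.range n, z i ω)) t) t := hasDerivAt_M1 hEν t
  have heq : M1 (P.map (fun ω => ∑ i ∈ Finset.range n, z i ω))
      = fun s => (n : ℝ) * Mf μ s ^ (n - 1) * M1 μ s :=
    funext fun s => M1_νn hmeas hindep hident hmgf n s
  rw [heq] at h1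
  have ha := ((hasDerivAt_Mf hEμ t).pow (n - 1)).mul (hasDerivAt_M1 hEμ t)
  have h2 := ha.const_mul (n : ℝ)
  have h2' : HasDerivAt (fun s => (n : ℝ) * Mf μ s ^ (n - 1) * M1 μ s)
      ((n : ℝ) * (((n - 1 : ℕ) : ℝ) * Mf μ t ^ (n - 1 - 1) * M1 μ t * M1 μ t
        + Mf μ t ^ (n - 1) * M2 μ t)) t := by
    have : (fun s => (n : ℝ) * (Mf μ s ^ (n - 1) * M1 μ s))
        = fun s => (n : ℝ) * Mf μ s ^ (n - 1) * M1 μ s := by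
      ext s; ring
    rw [← this]
    exact h2
  have h3 := h1.unique h2'
  have hcast : ((n - 1 : ℕ) : ℝ) = (n : ℝ) - 1 := by
    rw [Nat.cast_sub hn]
    simp
  have hsub : n - 1 - 1 = n - 2 := by omega
  rw [h3, hcast, hsub]

end LDPAux

open LDPAux
set_option maxHeartbeats 2000000

/-- **Large deviations with a convergent sequence of thresholds.** For i.i.d. real random
variables with everywhere-finite LMGF `φ = cgf (z 0) P`, a limit threshold `γ > E[z 0]`
admitting a saddlepoint `t_γ > 0` with `φ' (t_γ) = γ`, and any real sequence `γ_n → γ`,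
one has `(1/n) * log P[S⁽ⁿ⁾ ≥ γ_n] → -I γ`, where `I γ = ⨆ t, (γ * t - φ t)`
(limit taken in the extended reals, with `log 0 = ⊥`). -/
theorem ldp_with_moving_threshold
    {Ω : Type*} [MeasurableSpace Ω] (P : Measure Ω) [IsProbabilityMeasure P]
    (z : ℕ → Ω → ℝ)
    (hmeas : ∀ i, Measurable (z i))
    (hindep : iIndepFun z P)
    (hident : ∀ i, IdentDistrib (z i) (z 0) P P)
    (hint : Integrable (z 0) P)
    (hmgf : ∀ t : ℝ, Integrable (fun ω => Real.exp (t * z 0 ω)) P)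
    (γ : ℝ) (hγ : ∫ ω, z 0 ω ∂P < γ)
    (tγ : ℝ) (htγ : 0 < tγ) (hderiv : deriv (cgf (z 0) P) tγ = γ)
    (γseq : ℕ → ℝ) (hγseq : Tendsto γseq atTop (nhds γ)) :
    Tendsto
      (fun n : ℕ => (((n : ℝ)⁻¹ : ℝ) : EReal) *
        ENNReal.log (P {ω | γseq n ≤ (n : ℝ)⁻¹ * ∑ i ∈ Finset.range n, z i ω}))
      atTop (nhds (- ⨆ t : ℝ, ((γ * t - cgf (z 0) P t : ℝ) : EReal))) := by
  classical
  have hPμ : IsProbabilityMeasure (P.map (z 0)) :=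
    Measure.isProbabilityMeasure_map (hmeas 0).aemeasurable
  set μ := P.map (z 0) with hμdef
  have hEμ : ∀ t : ℝ, Integrable (fun x => exp (t * x)) μ := fun t => hE_map (hmeas 0) hmgf t
  have hcgf_phi : cgf (z 0) P = phi μ := by
    funext t
    rw [cgf, phi, Mf_map_eq (hmeas 0)]
    rfl
  rw [hcgf_phi]
  have hsad : phi' μ tγ = γ := by
    have hd := (hasDerivAt_phi hEμ tγ).deriv
    rw [hcgf_phi] at hderiv
    rw [← hd, hderiv]
  have hmean : ∫ x, x ∂μ < γ := by rw [int_map_eq (hmeas 0)]; exact hγ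
  set L := γ * tγ - phi μ tγ with hLdef
  have hmax : ∀ t, γ * t - phi μ t ≤ L := max_at_saddle hEμ hsad
  have hsup : (⨆ t : ℝ, ((γ * t - phi μ t : ℝ) : EReal)) = ((L : ℝ) : EReal) := by
    apply le_antisymm
    · exact iSup_le fun t => EReal.coe_le_coe_iff.2 (hmax t)
    · exact le_iSup_of_le tγ (le_of_eq (by rw [hLdef]))
  rw [hsup]
  set x := fun n : ℕ => (((n : ℝ)⁻¹ : ℝ) : EReal) *
    ENNReal.log (P {ω | γseq n ≤ (n : ℝ)⁻¹ * ∑ i ∈ Finset.range n, z i ω}) with hxdef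
  have hevent : ∀ n : ℕ, 1 ≤ n →
      {ω | γseq n ≤ (n : ℝ)⁻¹ * ∑ i ∈ Finset.range n, z i ω}
        = {ω | γseq n * n ≤ ∑ i ∈ Finset.range n, z i ω} := by
    intro n hn
    have hn0 : (0:ℝ) < n := by exact_mod_cast hn
    ext ω
    simp only [Set.mem_setOf_eq]
    rw [← div_eq_inv_mul, le_div_iff₀ hn0]
  -- UPPER BOUND
  have hupper : ∀ᶠ n : ℕ in atTop,
      x n ≤ ((-(tγ * γseq n) + phi μ tγ : ℝ) : EReal) := by
    filter_upwards [eventually_ge_atTop 1] with n hn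
    have hn0 : (0:ℝ) < n := by exact_mod_cast hn
    rw [hxdef]
    simp only []
    rw [hevent n hn]
    set pn := P {ω | γseq n * n ≤ ∑ i ∈ Finset.range n, z i ω} with hpn
    rcases eq_or_ne pn 0 with h0 | h0
    · rw [h0, ENNReal.log_zero, EReal.coe_mul_bot_of_pos (by positivity : (0:ℝ) < (n:ℝ)⁻¹)]
      exact bot_le
    · have hfin : pn ≠ ⊤ := measure_ne_top _ _
      have htR : 0 < pn.toReal := ENNReal.toReal_pos h0 hfin
      rw [ENNReal.log_pos_real' htR, ← EReal.coe_mul]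
      apply EReal.coe_le_coe_iff.2
      have hch := chernoff hmeas hindep hident hmgf htγ.le n (γseq n * n)
      have hlog : Real.log pn.toReal ≤ -tγ * (γseq n * n) + n * phi μ tγ :=
        (Real.log_le_iff_le_exp htR).2 hch
      calc (n:ℝ)⁻¹ * Real.log pn.toReal
          ≤ (n:ℝ)⁻¹ * (-tγ * (γseq n * n) + n * phi μ tγ) :=
            mul_le_mul_of_nonneg_left hlog (by positivity)
        _ = -(tγ * γseq n) + phi μ tγ := by field_simp
  have hulim : Tendsto (fun n => ((-(tγ * γseq n) + phi μ tγ : ℝ) : EReal)) atTop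
      (nhds ((-L : ℝ) : EReal)) := by
    rw [EReal.tendsto_coe]
    have h1 : Tendsto (fun n => -(tγ * γseq n) + phi μ tγ) atTop
        (nhds (-(tγ * γ) + phi μ tγ)) := ((hγseq.const_mul tγ).neg).add_const _
    have h2 : -L = -(tγ * γ) + phi μ tγ := by rw [hLdef]; ring
    rw [h2]; exact h1
  have hlimsup_le : limsup x atTop ≤ ((-L : ℝ) : EReal) :=
    (limsup_le_limsup hupper).trans (le_of_eq hulim.limsup_eq)
  -- LOWER BOUND
  have hliminf_ge : ∀ ε : ℝ, 0 < ε → ((-(L + ε) : ℝ) : EReal) ≤ liminf x atTop := by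
    intro ε hε
    obtain ⟨t', ht'pos, hγ'gt, hval⟩ := selection hEμ hmean htγ hsad
      (show 0 < ε / 2 by linarith)
    set γ' := phi' μ t' with hγ'def
    set δ := ε / (2 * t') with hδdef
    have hδpos : 0 < δ := by rw [hδdef]; positivity
    set b := γ' + δ with hbdef
    have hvb : t' * b - phi μ t' < L + ε := by
      have ht'δ : t' * δ = ε / 2 := by rw [hδdef]; field_simp
      have : t' * b = t' * γ' + t' * δ := by rw [hbdef]; ring
      rw [this, ht'δ, hLdef]
      linarith [hval]
    set c := min ((γ' - γ) / 2) δ with hcdef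
    have hcpos : 0 < c := lt_min (by linarith) hδpos
    set Vσ := M2 μ t' / Mf μ t' - γ' ^ 2 with hVdef
    have hVnn : 0 ≤ Vσ := by
      have hcs := cauchy_schwarz_M hEμ t'
      have hp := Mf_pos hEμ t'
      have h1 : (M1 μ t' / Mf μ t') ^ 2 = M1 μ t' ^ 2 / Mf μ t' ^ 2 := div_pow _ _ _
      have h2 : M1 μ t' ^ 2 / Mf μ t' ^ 2 ≤ (M2 μ t' * Mf μ t') / Mf μ t' ^ 2 :=
        (div_le_div_iff_of_pos_right (by positivity)).2 hcs
      have h3 : (M2 μ t' * Mf μ t') / Mf μ t' ^ 2 = M2 μ t' / Mf μ t' := by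
        rw [pow_two]
        rw [mul_div_mul_right _ _ hp.ne']
      rw [hVdef, hγ'def, phi']
      rw [← h3]
      rw [← h1] at h2
      nlinarith [h2, h3]
    -- eventual facts
    have hballev : ∀ᶠ n : ℕ in atTop, |γseq n - γ| < (γ' - γ) / 2 := by
      have := Metric.tendsto_atTop.1 hγseq ((γ' - γ) / 2) (by linarith)
      obtain ⟨N, hN⟩ := this
      filter_upwards [eventually_ge_atTop N] with n hn
      have := hN n hn
      rwa [Real.dist_eq] at this
    have hev2 : ∀ᶠ n : ℕ in atTop, c ≤ γ' - γseq n ∧ γseq n ≤ b := by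
      filter_upwards [hballev] with n hn
      have h1 := abs_lt.1 hn
      constructor
      · have := min_le_left ((γ' - γ) / 2) δ
        rw [hcdef]
        linarith [this, h1.2]
      · rw [hbdef]; linarith [h1.2]
    have htend0 : Tendsto (fun n : ℕ => Vσ / c ^ 2 * (n : ℝ)⁻¹) atTop (nhds 0) := by
      have := tendsto_inv_atTop_nhds_zero_nat.const_mul (Vσ / c ^ 2)
      simpa using this
    have hev3 : ∀ᶠ n : ℕ in atTop, Vσ / c ^ 2 * (n : ℝ)⁻¹ ≤ 1 / 2 :=
      htend0.eventually (eventually_le_nhds (by norm_num))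
    -- pointwise lower bound
    have hlower : ∀ᶠ n : ℕ in atTop,
        ((phi μ t' - t' * b + (n : ℝ)⁻¹ * Real.log (1 / 2) : ℝ) : EReal) ≤ x n := by
      filter_upwards [eventually_ge_atTop 1, hev2, hev3] with n hn1 hn2 hn3
      have hn0 : (0:ℝ) < n := by exact_mod_cast hn1
      set νn := P.map (fun ω => ∑ i ∈ Finset.range n, z i ω) with hνndef
      have hPν : IsProbabilityMeasure νn :=
        Measure.isProbabilityMeasure_map (measurable_sumz hmeas n).aemeasurable
      have hEν : ∀ t : ℝ, Integrable (fun s => exp (t * s)) νn :=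
        fun t => hEνn hmeas hindep hident hmgf n t
      set ρ := νn.tilted (fun s => t' * s) with hρdef
      have hPρ : IsProbabilityMeasure ρ := isProbabilityMeasure_tilted (hEν t')
      have hpμ := Mf_pos hEμ t'
      have hmean_n : M1 νn t' / Mf νn t' = n * γ' := by
        rw [M1_νn hmeas hindep hident hmgf n t', Mf_νn hmeas hindep hident n t']
        exact (mean_var_abstract (r := M2 μ t') hpμ n hn1).1
      have hvar_n : M2 νn t' / Mf νn t' - (M1 νn t' / Mf νn t') ^ 2 = n * Vσ := by
        rw [M1_νn hmeas hindep hident hmgf n t', Mf_νn hmeas hindep hident n t',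
          M2_νn hmeas hindep hident hmgf n t']
        exact (mean_var_abstract hpμ n hn1).2
      set B := Set.Icc (γseq n * n) ((n : ℝ) * b) with hBdef
      -- Chebyshev
      have hsubset : Bᶜ ⊆ {s | c * n ≤ |s - M1 νn t' / Mf νn t'|} := by
        rw [hmean_n]
        intro s hs
        simp only [hBdef, Set.mem_compl_iff, Set.mem_Icc, not_and_or, not_le,
          Set.mem_setOf_eq] at hs ⊢
        have hcn : (n:ℝ) * c ≤ (n:ℝ) * (γ' - γseq n) :=
          mul_le_mul_of_nonneg_left hn2.1 (by positivity)
        rcases hs with hlt | hgt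
        · have habs : (n:ℝ) * γ' - s ≤ |s - (n:ℝ) * γ'| := by
            rw [abs_sub_comm]; exact le_abs_self _
          have hmc : γseq n * (n:ℝ) = (n:ℝ) * γseq n := mul_comm _ _
          have hexp : (n:ℝ) * (γ' - γseq n) = (n:ℝ) * γ' - (n:ℝ) * γseq n := by ring
          have hcm2 : c * (n:ℝ) = (n:ℝ) * c := mul_comm _ _
          linarith [habs, hcn, hlt, hexp]
        · have habs : s - (n:ℝ) * γ' ≤ |s - (n:ℝ) * γ'| := le_abs_self _
          have hcδ : c ≤ δ := min_le_right _ _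
          have hnb : (n:ℝ) * b = (n:ℝ) * γ' + (n:ℝ) * δ := by rw [hbdef]; ring
          have hnd : (n:ℝ) * c ≤ (n:ℝ) * δ :=
            mul_le_mul_of_nonneg_left hcδ (by positivity)
          have hcm2 : c * (n:ℝ) = (n:ℝ) * c := mul_comm _ _
          linarith [habs, hgt, hnd, hnb]
      have hcheb := cheby_tilted hEν t' (show 0 < c * (n:ℝ) by positivity)
      have hρBc : ρ Bᶜ ≤ ENNReal.ofReal (Vσ / c ^ 2 * (n : ℝ)⁻¹) := by
        refine (measure_mono hsubset).trans (hcheb.trans (le_of_eq ?_))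
        rw [hvar_n]
        congr 1
        field_simp
      have hadd : (ρ B).toReal + (ρ Bᶜ).toReal = 1 := by
        have h := measure_add_measure_compl (μ := ρ) (measurableSet_Icc :
          MeasurableSet B)
        have := congrArg ENNReal.toReal h
        rwa [ENNReal.toReal_add (measure_ne_top _ _) (measure_ne_top _ _),
          measure_univ, ENNReal.toReal_one] at this
      have hXc : (ρ Bᶜ).toReal ≤ Vσ / c ^ 2 * (n : ℝ)⁻¹ :=
        ENNReal.toReal_le_of_le_ofReal
          (by positivity) hρBc
      have hρB : 1 / 2 ≤ (ρ B).toReal := by linarith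
      -- change of measure
      have hcm := tilted_Icc_lower hEν ht'pos (γseq n * n) ((n : ℝ) * b)
      have hMfν : Mf νn t' = exp ((n : ℝ) * phi μ t') := by
        rw [Mf_νn hmeas hindep hident n t']
        rw [show Mf μ t' = exp (phi μ t') from (exp_log hpμ).symm]
        rw [← Real.exp_nat_mul]
      set rn := exp (-(t' * ((n : ℝ) * b)) + (n : ℝ) * phi μ t') * (1 / 2) with hrndef
      have hrnpos : 0 < rn := by rw [hrndef]; positivity
      have hνnB : rn ≤ (νn B).toReal := by
        have h1 : exp (-(t' * ((n : ℝ) * b))) * Mf νn t' * (1 / 2)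
            ≤ exp (-(t' * ((n : ℝ) * b))) * Mf νn t' * (ρ B).toReal := by
          apply mul_le_mul_of_nonneg_left hρB
          have := Mf_pos hEν t'
          positivity
        have h2 : rn = exp (-(t' * ((n : ℝ) * b))) * Mf νn t' * (1 / 2) := by
          rw [hrndef, hMfν, ← Real.exp_add]
        rw [h2]
        exact h1.trans hcm
      -- transfer to P
      have hmapP : P {ω | γseq n * n ≤ ∑ i ∈ Finset.range n, z i ω}
          = νn (Set.Ici (γseq n * n)) := by
        rw [hνndef, Measure.map_apply (measurable_sumz hmeas n) measurableSet_Ici]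
        rfl
      set pn := P {ω | γseq n * n ≤ ∑ i ∈ Finset.range n, z i ω} with hpndef
      have hpnB : νn B ≤ pn := by
        rw [hmapP, hBdef]
        exact measure_mono Set.Icc_subset_Ici_self
      have hpnR : rn ≤ pn.toReal := by
        refine hνnB.trans (ENNReal.toReal_mono (measure_ne_top _ _) hpnB)
      have hpn0 : pn ≠ 0 := by
        intro h0
        rw [h0] at hpnR
        simp only [ENNReal.toReal_zero] at hpnR
        linarith
      have htRpos : 0 < pn.toReal := ENNReal.toReal_pos hpn0 (measure_ne_top _ _)
      -- conclude
      rw [hxdef]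
      simp only []
      rw [hevent n hn1, ← hpndef, ENNReal.log_pos_real' htRpos, ← EReal.coe_mul]
      apply EReal.coe_le_coe_iff.2
      have hlog : -(t' * ((n : ℝ) * b)) + (n : ℝ) * phi μ t' + Real.log (1 / 2)
          ≤ Real.log pn.toReal := by
        have h1 : Real.log rn ≤ Real.log pn.toReal :=
          Real.log_le_log hrnpos hpnR
        rw [hrndef, Real.log_mul (exp_pos _).ne' (by norm_num), Real.log_exp] at h1
        exact h1
      calc phi μ t' - t' * b + (n : ℝ)⁻¹ * Real.log (1 / 2)
          = (n : ℝ)⁻¹ * (-(t' * ((n : ℝ) * b)) + (n : ℝ) * phi μ t' + Real.log (1 / 2)) := by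
            field_simp
            ring
        _ ≤ (n : ℝ)⁻¹ * Real.log pn.toReal :=
            mul_le_mul_of_nonneg_left hlog (by positivity)
    have hltend : Tendsto
        (fun n : ℕ => ((phi μ t' - t' * b + (n : ℝ)⁻¹ * Real.log (1 / 2) : ℝ) : EReal))
        atTop (nhds ((phi μ t' - t' * b : ℝ) : EReal)) := by
      rw [EReal.tendsto_coe]
      have h1 := (tendsto_inv_atTop_nhds_zero_nat.mul_const (Real.log (1 / 2))).const_add
        (phi μ t' - t' * b)
      simpa using h1
    calc ((-(L + ε) : ℝ) : EReal) ≤ ((phi μ t' - t' * b : ℝ) : EReal) :=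
        EReal.coe_le_coe_iff.2 (by linarith)
      _ = liminf (fun n : ℕ =>
          ((phi μ t' - t' * b + (n : ℝ)⁻¹ * Real.log (1 / 2) : ℝ) : EReal)) atTop :=
        hltend.liminf_eq.symm
      _ ≤ liminf x atTop := liminf_le_liminf hlower
  have hliminf : ((-L : ℝ) : EReal) ≤ liminf x atTop := by
    by_contra hcon
    push_neg at hcon
    obtain ⟨w, hw1, hw2⟩ := exists_between hcon
    have hwbot : w ≠ ⊥ := by
      intro h
      rw [h] at hw1
      exact absurd hw1 not_lt_bot
    have hwtop : w ≠ ⊤ := by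
      intro h
      rw [h] at hw2
      exact absurd hw2 (by simp)
    have hq : ((w.toReal : ℝ) : EReal) = w := EReal.coe_toReal hwtop hwbot
    have hqlt : w.toReal < -L := by
      rw [← EReal.coe_lt_coe_iff, hq]
      exact hw2
    have hkey := hliminf_ge (-L - w.toReal) (by linarith)
    rw [show -(L + (-L - w.toReal)) = w.toReal by ring, hq] at hkey
    exact absurd hkey (not_le.2 hw1)
  refine tendsto_of_le_liminf_of_limsup_le ?_ ?_
  · rw [show -((L : ℝ) : EReal) = ((-L : ℝ) : EReal) by rw [EReal.coe_neg]]
    exact hliminf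
  · rw [show -((L : ℝ) : EReal) = ((-L : ℝ) : EReal) by rw [EReal.coe_neg]]
    exact hlimsup_le
end

section
/- (Mean under the exponentially tilted distribution.) Let z be a real-valued random variable with law μ whose LMGF φ(t) = log E[exp(t·z)] is finite for every t ∈ ℝ. For t ∈ ℝ define the tilted probability measure μ_t by dμ_t/dμ = exp(t·z)/E[exp(t·z)]. Then φ is differentiable at every t and the mean of z under μ_t equals φ'(t), i.e., ∫ z dμ_t = φ'(t). -/
open MeasureTheory ProbabilityTheory Real Filter

lemma bound_integrable_aux (μ : Measure ℝ)
    (hmgf : ∀ t : ℝ, Integrable (fun x => Real.exp (t * x)) μ) (a : ℝ) :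
    Integrable (fun x => |x| * Real.exp (a * |x|)) μ := by
  have h : Integrable (fun x => Real.exp ((a+1) * x) + Real.exp (-(a+1) * x)) μ :=
    (hmgf (a+1)).add (hmgf (-(a+1)))
  refine h.mono
    ((measurable_abs.mul ((measurable_const.mul measurable_abs).exp)).aestronglyMeasurable)
    (ae_of_all _ fun x => ?_)
  have hb : (0:ℝ) ≤ |x| * Real.exp (a * |x|) :=
    mul_nonneg (abs_nonneg x) (Real.exp_pos _).le
  rw [Real.norm_eq_abs, abs_of_nonneg hb, Real.norm_eq_abs,
    abs_of_nonneg (by positivity : (0:ℝ) ≤ Real.exp ((a+1)*x) + Real.exp (-(a+1)*x))]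
  have h1 : |x| * Real.exp (a * |x|) ≤ Real.exp ((a+1) * |x|) := by
    have hx : |x| ≤ Real.exp |x| := (Real.add_one_le_exp |x|).trans'
      (le_add_of_nonneg_right zero_le_one)
    calc |x| * Real.exp (a * |x|) ≤ Real.exp |x| * Real.exp (a * |x|) :=
          mul_le_mul_of_nonneg_right hx (Real.exp_pos _).le
      _ = Real.exp ((a+1) * |x|) := by rw [← Real.exp_add]; ring_nf
  refine h1.trans ?_
  rcases le_or_gt 0 x with hx | hx
  · rw [abs_of_nonneg hx]
    exact le_add_of_nonneg_right (Real.exp_pos _).le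
  · rw [abs_of_neg hx]
    have : (a+1) * -x = -(a+1) * x := by ring
    rw [this]
    exact le_add_of_nonneg_left (Real.exp_pos _).le

lemma hasDerivAt_mgf_aux (μ : Measure ℝ) [IsProbabilityMeasure μ]
    (hmgf : ∀ t : ℝ, Integrable (fun x => Real.exp (t * x)) μ) (t : ℝ) :
    Integrable (fun x => x * Real.exp (t * x)) μ ∧
      HasDerivAt (fun s => ∫ x, Real.exp (s * x) ∂μ) (∫ x, x * Real.exp (t * x) ∂μ) t := by
  have hmeas : ∀ s : ℝ, AEStronglyMeasurable (fun x => Real.exp (s * x)) μ :=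
    fun s => ((measurable_const.mul measurable_id).exp).aestronglyMeasurable
  refine hasDerivAt_integral_of_dominated_loc_of_deriv_le (F := fun s x => Real.exp (s * x))
    (F' := fun s x => x * Real.exp (s * x)) (bound := fun x => |x| * Real.exp ((|t|+1) * |x|))
    (Metric.ball_mem_nhds t one_pos) (Eventually.of_forall hmeas) (hmgf t)
    ((measurable_id.mul ((measurable_const.mul measurable_id).exp)).aestronglyMeasurable)
    (ae_of_all _ fun x s hs => ?_) (bound_integrable_aux μ hmgf _)
    (ae_of_all _ fun x s _ => ?_)
  · rw [Real.norm_eq_abs, abs_mul, Real.abs_exp]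
    refine mul_le_mul_of_nonneg_left (Real.exp_le_exp.2 ?_) (abs_nonneg x)
    calc s * x ≤ |s * x| := le_abs_self _
      _ = |s| * |x| := abs_mul s x
      _ ≤ (|t|+1) * |x| := by
          refine mul_le_mul_of_nonneg_right ?_ (abs_nonneg x)
          have := mem_ball_iff_norm.mp hs
          calc |s| ≤ |s - t| + |t| := by
                have := abs_sub_abs_le_abs_sub s t
                linarith [abs_sub_abs_le_abs_sub s t]
            _ ≤ |t| + 1 := by rw [Real.norm_eq_abs] at this; linarith
  · simpa [mul_comm] using (HasDerivAt.exp (hasDerivAt_mul_const x (x := s)))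

/-- **Mean under the exponentially tilted distribution.** Let `μ` be the law of a real
random variable whose LMGF `φ t = log ∫ exp (t x) dμ` is finite for every `t` (expressed
by the integrability of `exp (t ·)` under `μ`). For each `t` let `μ_t = μ.tilted (t * ·)`
be the exponentially tilted probability measure, with density `exp (t x) / ∫ exp (t x) dμ`
with respect to `μ`. Then `φ` is differentiable at every `t` and the mean of the identity
under `μ_t` equals `φ' t`. -/
theorem tilted_mean_eq_deriv_cgf
    (μ : Measure ℝ) [IsProbabilityMeasure μ]
    (hmgf : ∀ t : ℝ, Integrable (fun x => Real.exp (t * x)) μ) :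
    ∀ t : ℝ,
      DifferentiableAt ℝ (cgf id μ) t ∧
      ∫ x, x ∂(μ.tilted (fun x => t * x)) = deriv (cgf id μ) t := by
  intro t
  obtain ⟨hint, hderiv⟩ := hasDerivAt_mgf_aux μ hmgf t
  have hmgf_eq : (fun s => ∫ x, Real.exp (s * x) ∂μ) = mgf id μ := by
    ext s; simp [mgf]
  rw [hmgf_eq] at hderiv
  have hpos : 0 < mgf id μ t := mgf_pos (by simpa [id] using hmgf t)
  have hcgf : HasDerivAt (cgf id μ) ((∫ x, x * Real.exp (t * x) ∂μ) / mgf id μ t) t := by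
    exact (hderiv.log hpos.ne')
  refine ⟨hcgf.differentiableAt, ?_⟩
  rw [hcgf.deriv]
  rw [integral_tilted (fun x => t * x) (fun x : ℝ => x)]
  have : ∀ x : ℝ, (Real.exp (t * x) / ∫ y, Real.exp (t * y) ∂μ) • x
      = (x * Real.exp (t * x)) / mgf id μ t := by
    intro x
    simp only [smul_eq_mul, mgf, id_eq]
    ring
  simp_rw [this]
  rw [integral_div]
end

section
/- (Appendix A, limit of the scaled LMGF of the mixture LLR under H_1.) Let (X, ν) be a σ-finite measure space, Θ a finite nonempty set, θ_0 ∉ Θ, and for each θ ∈ Θ ∪ {θ_0} let f(·|θ) be a strictly positive probability density with respect to ν; let w : Θ → (0,1] satisfy Σ_{θ∈Θ} w_θ = 1. Fix θ_* ∈ Θ, let x_1, x_2, ... be i.i.d. with density f(·|θ_*), and define L^(n) = (1/n)·log( Σ_{θ∈Θ} w_θ·Π_{i=1}^n f(x_i|θ) / Π_{i=1}^n f(x_i|θ_0) ) and R_n = Σ_{θ∈Θ, θ≠θ_*} (w_θ/w_{θ_*})·Π_{i=1}^n ( f(x_i|θ)/f(x_i|θ_*) ). Assume: (i) D(θ_*‖θ)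 > 0 for every θ ∈ Θ with θ ≠ θ_*; (ii) the LMGF φ_{θ_*}(t) = log E_{θ_*}[exp( t·log( f(x|θ_*)/f(x|θ_0) ) )] is finite for every t ∈ ℝ; and (iii) for every s ≥ 0, (1/n)·log E_{θ_*}[(1 + R_n)^s] → 0 as n → ∞. Then for every t ≥ 0, lim_{n→∞} (1/n)·log E_{θ_*}[exp(n·t·L^(n))] = φ_{θ_*}(t). -/
open MeasureTheory ProbabilityTheory Real Filter

private lemma ereal_le_coe_of_forall_pos {y : ℝ} {x : EReal}
    (h : ∀ ε : ℝ, 0 < ε → x ≤ ((y + ε : ℝ) : EReal)) : x ≤ (y : EReal) := by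
  induction x using EReal.rec with
  | bot => exact bot_le
  | coe z =>
      refine EReal.coe_le_coe_iff.2 ?_
      by_contra hzy
      push_neg at hzy
      have := EReal.coe_le_coe_iff.1 (h ((z - y) / 2) (by linarith))
      linarith
  | top => exact absurd (h 1 one_pos) (not_le_of_gt (EReal.coe_lt_top (y + 1)))

private lemma liminf_ge_of_eventually_le_coe {a : ℕ → EReal} {b : ℕ → ℝ} {c : ℝ}
    (hab : ∀ᶠ n in atTop, ((b n : ℝ) : EReal) ≤ a n)
    (hb : Tendsto b atTop (nhds c)) : (c : EReal) ≤ Filter.liminf a atTop := by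
  calc (c : EReal) = Filter.liminf (fun n => ((b n : ℝ) : EReal)) atTop :=
        ((EReal.tendsto_coe.2 hb).liminf_eq).symm
    _ ≤ Filter.liminf a atTop := liminf_le_liminf hab

private lemma limsup_le_of_eventually_le_coe {a : ℕ → EReal} {b : ℕ → ℝ} {c : ℝ}
    (hab : ∀ᶠ n in atTop, a n ≤ ((b n : ℝ) : EReal))
    (hb : Tendsto b atTop (nhds c)) : Filter.limsup a atTop ≤ (c : EReal) := by
  calc Filter.limsup a atTop ≤ Filter.limsup (fun n => ((b n : ℝ) : EReal)) atTop :=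
        limsup_le_limsup hab
    _ = (c : EReal) := (EReal.tendsto_coe.2 hb).limsup_eq

private lemma exp_ntL_eq {n : ℕ} (hn : n ≠ 0) {t A B C r wq S : ℝ}
    (hA : 0 < A) (hB : 0 < B) (hC : 0 < C) (hw : 0 < wq) (hr : 0 ≤ r)
    (hkey : A = (wq * C) * (1 + r)) (hS : Real.log (C / B) = S) :
    Real.exp ((n : ℝ) * t * ((n : ℝ)⁻¹ * Real.log (A / B))) =
      (wq ^ t * (1 + r) ^ t) * Real.exp (t * S) := by
  have hn' : (n : ℝ) ≠ 0 := Nat.cast_ne_zero.2 hn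
  have h1r : (0:ℝ) < 1 + r := by linarith
  have e1 : (n : ℝ) * t * ((n : ℝ)⁻¹ * Real.log (A / B)) = t * Real.log (A / B) := by
    field_simp
  have e2 : Real.exp (t * Real.log (A / B)) = (A / B) ^ t := by
    rw [Real.rpow_def_of_pos (div_pos hA hB), mul_comm]
  have e3 : Real.exp (t * Real.log (C / B)) = (C / B) ^ t := by
    rw [Real.rpow_def_of_pos (div_pos hC hB), mul_comm]
  rw [e1, e2, hkey, show wq * C * (1 + r) / B = wq * (1 + r) * (C / B) by field_simp,
    Real.mul_rpow (mul_pos hw h1r).le (div_pos hC hB).le, Real.mul_rpow hw.le h1r.le, ← hS, ← e3]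
/-- **Appendix A: limit of the scaled LMGF of the mixture LLR under `H₁`.**
With strictly positive probability densities `f θ` (for `θ` in a finite set `Θ`) and
`f₀` (the density of `θ₀ ∉ Θ`) with respect to a σ-finite measure `ν`, a prior
`w : Θ → (0,1]` summing to `1`, data i.i.d. with density `f θ⋆`, mixture LLR `L⁽ⁿ⁾` and
remainder `R_n`, and assuming (i) `D(θ⋆‖θ) > 0` for `θ ≠ θ⋆`, (ii) the LMGF
`φ⋆ t = log E_{θ⋆}[exp (t log (f θ⋆ / f₀))]` is finite for all `t`, and (iii) for all
`s ≥ 0` the scaled log of `E_{θ⋆}[(1+R_n)^s]` tends to `0`, one has, for every `t ≥ 0`,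
`(1/n) log E_{θ⋆}[exp (n t L⁽ⁿ⁾)] → φ⋆ t` (logarithms of possibly infinite expectations
taken in the extended reals). -/
theorem mixture_llr_scaled_lmgf_H1
    {X : Type*} [MeasurableSpace X] (ν : Measure X) [SigmaFinite ν]
    {Θ : Type*} [Fintype Θ] [Nonempty Θ] [DecidableEq Θ]
    (f : Θ → X → ℝ) (f0 : X → ℝ)
    (hfmeas : ∀ θ, Measurable (f θ)) (hf0meas : Measurable f0)
    (hfpos : ∀ θ a, 0 < f θ a) (hf0pos : ∀ a, 0 < f0 a)
    (hfint : ∀ θ, ∫⁻ a, ENNReal.ofReal (f θ a) ∂ν = 1)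
    (hf0int : ∫⁻ a, ENNReal.ofReal (f0 a) ∂ν = 1)
    (w : Θ → ℝ) (hwpos : ∀ θ, 0 < w θ) (hwle : ∀ θ, w θ ≤ 1)
    (hwsum : ∑ θ, w θ = 1)
    (θs : Θ)
    {Ω : Type*} [MeasurableSpace Ω] (P : Measure Ω) [IsProbabilityMeasure P]
    (x : ℕ → Ω → X) (hxmeas : ∀ i, Measurable (x i))
    (hindep : iIndepFun x P)
    (hlaw : ∀ i, Measure.map (x i) P = ν.withDensity (fun a => ENNReal.ofReal (f θs a)))
    (L : ℕ → Ω → ℝ)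
    (hL : L = fun (n : ℕ) (ω : Ω) => (n : ℝ)⁻¹ * Real.log
      ((∑ θ, w θ * ∏ i ∈ Finset.range n, f θ (x i ω)) /
        ∏ i ∈ Finset.range n, f0 (x i ω)))
    (R : ℕ → Ω → ℝ)
    (hR : R = fun (n : ℕ) (ω : Ω) => ∑ θ ∈ Finset.univ.erase θs,
      (w θ / w θs) * ∏ i ∈ Finset.range n, (f θ (x i ω) / f θs (x i ω)))
    (hKL : ∀ θ : Θ, θ ≠ θs → 0 < ∫ a, f θs a * Real.log (f θs a / f θ a) ∂ν)
    (φ : ℝ → ℝ)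
    (hφ : φ = fun t => Real.log
      (∫ ω, Real.exp (t * Real.log (f θs (x 0 ω) / f0 (x 0 ω))) ∂P))
    (hφfin : ∀ t : ℝ,
      Integrable (fun ω => Real.exp (t * Real.log (f θs (x 0 ω) / f0 (x 0 ω)))) P)
    (hRlim : ∀ s : ℝ, 0 ≤ s →
      Tendsto (fun n : ℕ => (((n : ℝ)⁻¹ : ℝ) : EReal) *
          ENNReal.log (∫⁻ ω, ENNReal.ofReal ((1 + R n ω) ^ s) ∂P))
        atTop (nhds (0 : EReal))) :
    ∀ t : ℝ, 0 ≤ t →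
      Tendsto (fun n : ℕ => (((n : ℝ)⁻¹ : ℝ) : EReal) *
          ENNReal.log (∫⁻ ω, ENNReal.ofReal (Real.exp ((n : ℝ) * t * L n ω)) ∂P))
        atTop (nhds ((φ t : ℝ) : EReal)) := by
  intro t ht
  have hwspos : 0 < w θs := hwpos θs
  set g : X → ℝ := fun a => Real.log (f θs a / f0 a) with hgdef
  have hgmeas : Measurable g := ((hfmeas θs).div hf0meas).log
  set Y : ℕ → Ω → ℝ := fun i ω => Real.log (f θs (x i ω) / f0 (x i ω)) with hYdef
  have hYmeas : ∀ i, Measurable (Y i) := fun i => hgmeas.comp (hxmeas i)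
  have hYindep : iIndepFun Y P :=
    hindep.comp (fun _ => g) (fun _ => hgmeas)
  have hid : ∀ i, IdentDistrib (Y i) (Y 0) P P := by
    intro i
    have hx : IdentDistrib (x i) (x 0) P P :=
      ⟨(hxmeas i).aemeasurable, (hxmeas 0).aemeasurable, by rw [hlaw i, hlaw 0]⟩
    exact hx.comp hgmeas
  set M : ℝ → ℝ := fun u => ∫ ω, Real.exp (u * Y 0 ω) ∂P with hMdef
  have hφM : φ t = Real.log (M t) := by rw [hφ]
  have hMint : ∀ (u : ℝ) (i : ℕ), Integrable (fun ω => Real.exp (u * Y i ω)) P := by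
    intro u i
    have h0 : Integrable (fun ω => Real.exp (u * Y 0 ω)) P := hφfin u
    have hcomp : IdentDistrib (fun ω => Real.exp (u * Y i ω))
        (fun ω => Real.exp (u * Y 0 ω)) P P :=
      (hid i).comp ((measurable_id.const_mul u).exp)
    exact hcomp.integrable_iff.2 h0
  have hMeq : ∀ (u : ℝ) (i : ℕ), ∫ ω, Real.exp (u * Y i ω) ∂P = M u := fun u i =>
    ((hid i).comp ((measurable_id.const_mul u).exp)).integral_eq
  have hMpos : ∀ u, 0 < M u := by
    intro u
    have : 0 < mgf (Y 0) P u := mgf_pos (hMint u 0)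
    simpa [mgf, hMdef] using this
  have hSint : ∀ (u : ℝ) (n : ℕ),
      Integrable (fun ω => Real.exp (u * ∑ i ∈ Finset.range n, Y i ω)) P := by
    intro u n
    have := hYindep.integrable_exp_mul_sum hYmeas (s := Finset.range n) (fun i _ => hMint u i)
    simpa [Finset.sum_apply] using this
  have hSmgf : ∀ (u : ℝ) (n : ℕ),
      ∫ ω, Real.exp (u * ∑ i ∈ Finset.range n, Y i ω) ∂P = M u ^ n := by
    intro u n
    calc ∫ ω, Real.exp (u * ∑ i ∈ Finset.range n, Y i ω) ∂P
        = mgf (∑ i ∈ Finset.range n, Y i) P u := by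
          simp only [mgf, Finset.sum_apply]
      _ = ∏ i ∈ Finset.range n, mgf (Y i) P u := hYindep.mgf_sum hYmeas _
      _ = ∏ _i ∈ Finset.range n, M u := by
          refine Finset.prod_congr rfl fun i _ => ?_
          simpa [mgf] using hMeq u i
      _ = M u ^ n := by simp
  have hJ : ∀ (u : ℝ) (n : ℕ),
      ∫⁻ ω, ENNReal.ofReal (Real.exp (u * ∑ i ∈ Finset.range n, Y i ω)) ∂P
        = ENNReal.ofReal (M u ^ n) := by
    intro u n
    rw [← MeasureTheory.ofReal_integral_eq_lintegral_ofReal (hSint u n)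
      (Filter.Eventually.of_forall fun ω => (Real.exp_pos _).le), hSmgf]
  have hRnonneg : ∀ (n : ℕ) (ω : Ω), 0 ≤ R n ω := by
    intro n ω
    simp only [hR]
    exact Finset.sum_nonneg fun θ _ => mul_nonneg (div_nonneg (hwpos θ).le hwspos.le)
      (Finset.prod_nonneg fun i _ => div_nonneg (hfpos θ _).le (hfpos θs _).le)
  have hkey : ∀ (n : ℕ) (ω : Ω),
      (∑ θ, w θ * ∏ i ∈ Finset.range n, f θ (x i ω))
        = (w θs * ∏ i ∈ Finset.range n, f θs (x i ω)) * (1 + R n ω) := by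
    intro n ω
    have hC : (0:ℝ) < ∏ i ∈ Finset.range n, f θs (x i ω) :=
      Finset.prod_pos fun i _ => hfpos θs _
    simp only [hR]
    rw [mul_add, mul_one, Finset.mul_sum,
      ← Finset.sum_erase_add _ _ (Finset.mem_univ θs), add_comm]
    congr 1
    refine Finset.sum_congr rfl fun θ hθ => ?_
    rw [Finset.prod_div_distrib]
    field_simp
  have hApos : ∀ (n : ℕ) (ω : Ω), (0:ℝ) < ∑ θ, w θ * ∏ i ∈ Finset.range n, f θ (x i ω) :=
    fun n ω => Finset.sum_pos
      (fun θ _ => mul_pos (hwpos θ) (Finset.prod_pos fun i _ => hfpos θ _)) Finset.univ_nonempty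
  have hdecomp : ∀ (n : ℕ), n ≠ 0 → ∀ (ω : Ω),
      Real.exp ((n : ℝ) * t * L n ω)
        = (w θs ^ t * (1 + R n ω) ^ t) * Real.exp (t * ∑ i ∈ Finset.range n, Y i ω) := by
    intro n hn ω
    have hC : (0:ℝ) < ∏ i ∈ Finset.range n, f θs (x i ω) :=
      Finset.prod_pos fun i _ => hfpos θs _
    have hB : (0:ℝ) < ∏ i ∈ Finset.range n, f0 (x i ω) :=
      Finset.prod_pos fun i _ => hf0pos _
    have hS : Real.log ((∏ i ∈ Finset.range n, f θs (x i ω)) / ∏ i ∈ Finset.range n, f0 (x i ω))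
        = ∑ i ∈ Finset.range n, Y i ω := by
      rw [← Finset.prod_div_distrib, Real.log_prod
        (fun i _ => (div_pos (hfpos θs _) (hf0pos _)).ne')]
    simp only [hL]
    exact exp_ntL_eq hn (hApos n ω) hB hC hwspos (hRnonneg n ω) (hkey n ω) hS
  -- lower bound
  have hlowpt : ∀ (n : ℕ), n ≠ 0 →
      ENNReal.ofReal (w θs ^ t * M t ^ n)
        ≤ ∫⁻ ω, ENNReal.ofReal (Real.exp ((n : ℝ) * t * L n ω)) ∂P := by
    intro n hn
    have h1 : ENNReal.ofReal (w θs ^ t * M t ^ n)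
        = ∫⁻ ω, ENNReal.ofReal (w θs ^ t * Real.exp (t * ∑ i ∈ Finset.range n, Y i ω)) ∂P := by
      rw [ENNReal.ofReal_mul (Real.rpow_nonneg hwspos.le t), ← hJ t n,
        ← lintegral_const_mul' _ _ ENNReal.ofReal_ne_top]
      exact lintegral_congr fun ω =>
        (ENNReal.ofReal_mul (Real.rpow_nonneg hwspos.le t)).symm
    rw [h1]
    refine lintegral_mono fun ω => ENNReal.ofReal_le_ofReal ?_
    rw [hdecomp n hn ω]
    have h2 : (1:ℝ) ≤ (1 + R n ω) ^ t :=
      Real.one_le_rpow (by linarith [hRnonneg n ω]) ht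
    have hwt : (0:ℝ) < w θs ^ t := Real.rpow_pos_of_pos hwspos t
    have hexp : (0:ℝ) < Real.exp (t * ∑ i ∈ Finset.range n, Y i ω) := Real.exp_pos _
    have h3 : w θs ^ t ≤ w θs ^ t * (1 + R n ω) ^ t := by nlinarith
    exact mul_le_mul_of_nonneg_right h3 hexp.le
  have hliminf0 : ((Real.log (M t) : ℝ) : EReal) ≤ Filter.liminf
      (fun n : ℕ => (((n : ℝ)⁻¹ : ℝ) : EReal) *
        ENNReal.log (∫⁻ ω, ENNReal.ofReal (Real.exp ((n : ℝ) * t * L n ω)) ∂P)) atTop := by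
    refine liminf_ge_of_eventually_le_coe
      (b := fun n : ℕ => (n : ℝ)⁻¹ * (Real.log (w θs ^ t) + (n : ℝ) * Real.log (M t))) ?_ ?_
    · filter_upwards [eventually_ne_atTop 0] with n hn
      have h3 := ENNReal.log_le_log_iff.2 (hlowpt n hn)
      rw [ENNReal.log_ofReal_of_pos
        (mul_pos (Real.rpow_pos_of_pos hwspos t) (pow_pos (hMpos t) n))] at h3
      have h4 : Real.log (w θs ^ t * M t ^ n)
          = Real.log (w θs ^ t) + (n : ℝ) * Real.log (M t) := by
        rw [Real.log_mul (Real.rpow_pos_of_pos hwspos t).ne' (pow_pos (hMpos t) n).ne',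
          Real.log_pow]
      rw [h4] at h3
      calc (((n : ℝ)⁻¹ * (Real.log (w θs ^ t) + (n : ℝ) * Real.log (M t)) : ℝ) : EReal)
          = (((n : ℝ)⁻¹ : ℝ) : EReal) *
            ((Real.log (w θs ^ t) + (n : ℝ) * Real.log (M t) : ℝ) : EReal) :=
            EReal.coe_mul _ _
        _ ≤ _ := mul_le_mul_of_nonneg_left h3
            (EReal.coe_nonneg.2 (inv_nonneg.2 (Nat.cast_nonneg n)))
    · have h1 : Tendsto (fun n : ℕ => (n : ℝ)⁻¹ * Real.log (w θs ^ t)) atTop (nhds 0) := by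
        simpa using (tendsto_inv_atTop_nhds_zero_nat (𝕜 := ℝ)).mul_const (Real.log (w θs ^ t))
      have h2 : ∀ᶠ n : ℕ in atTop,
          (n : ℝ)⁻¹ * Real.log (w θs ^ t) + Real.log (M t)
            = (n : ℝ)⁻¹ * (Real.log (w θs ^ t) + (n : ℝ) * Real.log (M t)) := by
        filter_upwards [eventually_ne_atTop 0] with n hn
        have hn' : (n : ℝ) ≠ 0 := Nat.cast_ne_zero.2 hn
        field_simp
      refine Tendsto.congr' h2 ?_
      simpa using h1.add (tendsto_const_nhds (x := Real.log (M t)) (f := atTop))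
  -- properties of the remainder integrals
  have hKge1 : ∀ (s : ℝ), 0 ≤ s → ∀ (n : ℕ),
      (1 : ENNReal) ≤ ∫⁻ ω, ENNReal.ofReal ((1 + R n ω) ^ s) ∂P := by
    intro s hs n
    calc (1 : ENNReal) = ∫⁻ _, 1 ∂P := by simp
      _ ≤ _ := lintegral_mono fun ω =>
          ENNReal.one_le_ofReal.2 (Real.one_le_rpow (by linarith [hRnonneg n ω]) hs)
  have hKfin : ∀ (s : ℝ), 0 ≤ s → ∀ᶠ n : ℕ in atTop,
      (∫⁻ ω, ENNReal.ofReal ((1 + R n ω) ^ s) ∂P) ≠ ⊤ := by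
    intro s hs
    have h1 := (hRlim s hs).eventually_lt_const (by exact_mod_cast zero_lt_one : (0:EReal) < 1)
    filter_upwards [h1, eventually_ne_atTop 0] with n hn1 hn0
    intro htop
    rw [htop, ENNReal.log_top, EReal.coe_mul_top_of_pos
      (by positivity : (0:ℝ) < (n : ℝ)⁻¹)] at hn1
    exact (not_top_lt hn1)
  have hKlog : ∀ (s : ℝ), 0 ≤ s →
      Tendsto (fun n : ℕ => (n : ℝ)⁻¹ *
        Real.log (∫⁻ ω, ENNReal.ofReal ((1 + R n ω) ^ s) ∂P).toReal) atTop (nhds 0) := by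
    intro s hs
    have heq : (fun n : ℕ => (((n : ℝ)⁻¹ : ℝ) : EReal) *
        ENNReal.log (∫⁻ ω, ENNReal.ofReal ((1 + R n ω) ^ s) ∂P))
        =ᶠ[atTop] (fun n : ℕ => (((n : ℝ)⁻¹ *
          Real.log (∫⁻ ω, ENNReal.ofReal ((1 + R n ω) ^ s) ∂P).toReal : ℝ) : EReal)) := by
      filter_upwards [hKfin s hs] with n hfin
      have hpos : 0 < (∫⁻ ω, ENNReal.ofReal ((1 + R n ω) ^ s) ∂P).toReal :=
        ENNReal.toReal_pos (zero_lt_one.trans_le (hKge1 s hs n)).ne' hfin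
      rw [ENNReal.log_pos_real' hpos, EReal.coe_mul]
    have h := Tendsto.congr' heq (hRlim s hs)
    rw [show (0 : EReal) = ((0:ℝ) : EReal) from EReal.coe_zero.symm] at h
    exact EReal.tendsto_coe.1 h
  -- continuity along q k = 1 + 1/(k+1)
  set q : ℕ → ℝ := fun k => 1 + ((k : ℝ) + 1)⁻¹ with hqdef
  have hq1 : ∀ k, 1 < q k := by
    intro k
    have : (0:ℝ) < ((k : ℝ) + 1)⁻¹ := by positivity
    simp only [hqdef]
    linarith
  have hq2 : ∀ k, q k ≤ 2 := by
    intro k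
    have h1 : (1:ℝ) ≤ (k : ℝ) + 1 := by
      have := Nat.cast_nonneg (α := ℝ) k
      linarith
    have : ((k : ℝ) + 1)⁻¹ ≤ 1 := (inv_le_one₀ (by linarith)).2 h1
    simp only [hqdef]
    linarith
  have hqtend : Tendsto q atTop (nhds 1) := by
    have h0 : Tendsto (fun k : ℕ => ((k : ℝ) + 1)⁻¹) atTop (nhds 0) := by
      have := (tendsto_inv_atTop_nhds_zero_nat (𝕜 := ℝ)).comp (tendsto_add_atTop_nat 1)
      refine this.congr fun k => ?_
      simp [Function.comp]
    simpa [hqdef] using (tendsto_const_nhds (x := (1:ℝ)) (f := atTop)).add h0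
  have hMcont : Tendsto (fun k : ℕ => (q k)⁻¹ * Real.log (M (t * q k))) atTop
      (nhds (Real.log (M t))) := by
    have hMt : Tendsto (fun k : ℕ => M (t * q k)) atTop (nhds (M t)) := by
      simp only [hMdef]
      refine tendsto_integral_of_dominated_convergence
        (fun ω => Real.exp (t * Y 0 ω) + Real.exp (2 * t * Y 0 ω))
        (fun k => ((hYmeas 0).const_mul _).exp.aestronglyMeasurable)
        ((hMint t 0).add (hMint (2 * t) 0)) ?_ ?_
      · intro k
        refine Filter.Eventually.of_forall fun ω => ?_
        rw [Real.norm_eq_abs, Real.abs_exp]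
        show Real.exp (t * q k * Y 0 ω) ≤ Real.exp (t * Y 0 ω) + Real.exp (2 * t * Y 0 ω)
        rcases le_total 0 (Y 0 ω) with h | h
        · have harg : t * q k * Y 0 ω ≤ 2 * t * Y 0 ω := by
            nlinarith [mul_nonneg (mul_nonneg ht h) (sub_nonneg.2 (hq2 k))]
          have := Real.exp_le_exp.2 harg
          linarith [Real.exp_pos (t * Y 0 ω)]
        · have harg : t * q k * Y 0 ω ≤ t * Y 0 ω := by
            nlinarith [mul_nonneg (mul_nonneg ht (neg_nonneg.2 h)) (sub_nonneg.2 (hq1 k).le)]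
          have := Real.exp_le_exp.2 harg
          linarith [Real.exp_pos (2 * t * Y 0 ω)]
      · refine Filter.Eventually.of_forall fun ω => ?_
        have harg : Tendsto (fun k : ℕ => t * q k * Y 0 ω) atTop (nhds (t * Y 0 ω)) := by
          have := ((tendsto_const_nhds (x := t) (f := atTop)).mul hqtend).mul
            (tendsto_const_nhds (x := Y 0 ω))
          simpa using this
        exact (Real.continuous_exp.continuousAt.tendsto).comp harg
    have hlogM : Tendsto (fun k : ℕ => Real.log (M (t * q k))) atTop
        (nhds (Real.log (M t))) :=
      ((Real.continuousAt_log (hMpos t).ne').tendsto).comp hMt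
    have hqinv : Tendsto (fun k : ℕ => (q k)⁻¹) atTop (nhds 1) := by
      simpa using hqtend.inv₀ one_ne_zero
    simpa using hqinv.mul hlogM
  have hlimsup0 : Filter.limsup
      (fun n : ℕ => (((n : ℝ)⁻¹ : ℝ) : EReal) *
        ENNReal.log (∫⁻ ω, ENNReal.ofReal (Real.exp ((n : ℝ) * t * L n ω)) ∂P)) atTop
      ≤ ((Real.log (M t) : ℝ) : EReal) := by
    refine ereal_le_coe_of_forall_pos fun ε hε => ?_
    obtain ⟨k, hk⟩ := (hMcont.eventually_lt_const
      (by linarith : Real.log (M t) < Real.log (M t) + ε)).exists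
    have hpq : ((q k).conjExponent).HolderConjugate (q k) :=
      (Real.HolderConjugate.conjExponent (hq1 k)).symm
    set p : ℝ := (q k).conjExponent with hpdef
    have hppos : 0 < p := hpq.pos
    have hqpos : 0 < q k := hpq.symm.pos
    have htp : 0 ≤ t * p := mul_nonneg ht hppos.le
    have hRmeas : ∀ n, Measurable (R n) := by
      intro n
      simp only [hR]
      exact Finset.measurable_sum _ fun θ _ => measurable_const.mul
        (Finset.measurable_prod _ fun i _ =>
          ((hfmeas θ).comp (hxmeas i)).div ((hfmeas θs).comp (hxmeas i)))
    have hSmeas : ∀ n, Measurable (fun ω => ∑ i ∈ Finset.range n, Y i ω) :=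
      fun n => Finset.measurable_sum _ fun i _ => hYmeas i
    have hHolder : ∀ (n : ℕ), n ≠ 0 →
        (∫⁻ ω, ENNReal.ofReal (Real.exp ((n : ℝ) * t * L n ω)) ∂P)
          ≤ (ENNReal.ofReal (w θs ^ (t * p)) *
              ∫⁻ ω, ENNReal.ofReal ((1 + R n ω) ^ (t * p)) ∂P) ^ (1 / p) *
            (ENNReal.ofReal (M (t * q k) ^ n)) ^ (1 / q k) := by
      intro n hn
      have h1 : (∫⁻ ω, ENNReal.ofReal (Real.exp ((n : ℝ) * t * L n ω)) ∂P)
          = ∫⁻ ω, ((fun ω => ENNReal.ofReal (w θs ^ t * (1 + R n ω) ^ t)) *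
              (fun ω => ENNReal.ofReal (Real.exp (t * ∑ i ∈ Finset.range n, Y i ω)))) ω ∂P := by
        refine lintegral_congr fun ω => ?_
        rw [Pi.mul_apply, hdecomp n hn ω, ENNReal.ofReal_mul
          (mul_nonneg (Real.rpow_nonneg hwspos.le t)
            (Real.rpow_nonneg (by linarith [hRnonneg n ω]) t))]
      rw [h1]
      have hfmeas' : Measurable (fun ω => ENNReal.ofReal (w θs ^ t * (1 + R n ω) ^ t)) := by
        have hrw : (fun ω => ENNReal.ofReal (w θs ^ t * (1 + R n ω) ^ t)) = fun ω =>
            ENNReal.ofReal (w θs ^ t * Real.exp (Real.log (1 + R n ω) * t)) := by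
          funext ω
          rw [Real.rpow_def_of_pos (by linarith [hRnonneg n ω] : (0:ℝ) < 1 + R n ω)]
        rw [hrw]
        exact ((((measurable_const.add (hRmeas n)).log.mul_const t).exp).const_mul
          _).ennreal_ofReal
      have hgmeas' : Measurable
          (fun ω => ENNReal.ofReal (Real.exp (t * ∑ i ∈ Finset.range n, Y i ω))) :=
        (((hSmeas n).const_mul t).exp).ennreal_ofReal
      have hH := ENNReal.lintegral_mul_le_Lp_mul_Lq P hpq hfmeas'.aemeasurable
        hgmeas'.aemeasurable
      beta_reduce at hH
      have e2 : ∫⁻ ω, (ENNReal.ofReal (w θs ^ t * (1 + R n ω) ^ t)) ^ p ∂P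
          = ENNReal.ofReal (w θs ^ (t * p)) *
            ∫⁻ ω, ENNReal.ofReal ((1 + R n ω) ^ (t * p)) ∂P := by
        rw [← lintegral_const_mul' _ _ ENNReal.ofReal_ne_top]
        refine lintegral_congr fun ω => ?_
        have h1R : (0:ℝ) < 1 + R n ω := by linarith [hRnonneg n ω]
        rw [ENNReal.ofReal_rpow_of_pos (mul_pos (Real.rpow_pos_of_pos hwspos t)
          (Real.rpow_pos_of_pos h1R t)),
          Real.mul_rpow (Real.rpow_nonneg hwspos.le t) (Real.rpow_nonneg h1R.le t),
          ← Real.rpow_mul hwspos.le, ← Real.rpow_mul h1R.le,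
          ENNReal.ofReal_mul (Real.rpow_nonneg hwspos.le _)]
      have e3 : ∫⁻ ω, (ENNReal.ofReal (Real.exp (t * ∑ i ∈ Finset.range n, Y i ω))) ^ (q k) ∂P
          = ENNReal.ofReal (M (t * q k) ^ n) := by
        rw [← hJ (t * q k) n]
        refine lintegral_congr fun ω => ?_
        rw [ENNReal.ofReal_rpow_of_pos (Real.exp_pos _), ← Real.exp_mul]
        congr 2
        ring
      rw [e2, e3] at hH
      exact hH
    have hev : ∀ᶠ n : ℕ in atTop,
        (((n : ℝ)⁻¹ : ℝ) : EReal) *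
          ENNReal.log (∫⁻ ω, ENNReal.ofReal (Real.exp ((n : ℝ) * t * L n ω)) ∂P)
        ≤ ((((n : ℝ)⁻¹ * ((1 / p) * Real.log (w θs ^ (t * p) *
            (∫⁻ ω, ENNReal.ofReal ((1 + R n ω) ^ (t * p)) ∂P).toReal) +
            (1 / q k) * Real.log (M (t * q k) ^ n)) : ℝ)) : EReal) := by
      filter_upwards [hKfin (t * p) htp, eventually_ne_atTop 0] with n hfin hn
      have hKpos : 0 < (∫⁻ ω, ENNReal.ofReal ((1 + R n ω) ^ (t * p)) ∂P).toReal :=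
        ENNReal.toReal_pos (zero_lt_one.trans_le (hKge1 (t * p) htp n)).ne' hfin
      have hMn : (0:ℝ) < M (t * q k) ^ n := pow_pos (hMpos _) n
      have hwtp : (0:ℝ) < w θs ^ (t * p) := Real.rpow_pos_of_pos hwspos _
      have hlogZ : ENNReal.log ((ENNReal.ofReal (w θs ^ (t * p)) *
          ∫⁻ ω, ENNReal.ofReal ((1 + R n ω) ^ (t * p)) ∂P) ^ (1 / p) *
          (ENNReal.ofReal (M (t * q k) ^ n)) ^ (1 / q k))
          = (((1 / p) * Real.log (w θs ^ (t * p) *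
            (∫⁻ ω, ENNReal.ofReal ((1 + R n ω) ^ (t * p)) ∂P).toReal) +
            (1 / q k) * Real.log (M (t * q k) ^ n) : ℝ) : EReal) := by
        conv_lhs => rw [← ENNReal.ofReal_toReal hfin]
        rw [← ENNReal.ofReal_mul hwtp.le,
          ENNReal.ofReal_rpow_of_pos (mul_pos hwtp hKpos),
          ENNReal.ofReal_rpow_of_pos hMn,
          ← ENNReal.ofReal_mul (Real.rpow_nonneg (mul_pos hwtp hKpos).le _),
          ENNReal.log_ofReal_of_pos (mul_pos (Real.rpow_pos_of_pos (mul_pos hwtp hKpos) _)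
            (Real.rpow_pos_of_pos hMn _)),
          Real.log_mul (Real.rpow_pos_of_pos (mul_pos hwtp hKpos) _).ne'
            (Real.rpow_pos_of_pos hMn _).ne',
          Real.log_rpow (mul_pos hwtp hKpos), Real.log_rpow hMn]
      have hmono := ENNReal.log_le_log_iff.2 (hHolder n hn)
      rw [hlogZ] at hmono
      refine le_trans (mul_le_mul_of_nonneg_left hmono
        (EReal.coe_nonneg.2 (inv_nonneg.2 (Nat.cast_nonneg n)))) ?_
      exact le_of_eq (EReal.coe_mul _ _).symm
    have hd : Tendsto (fun n : ℕ => (n : ℝ)⁻¹ * ((1 / p) * Real.log (w θs ^ (t * p) *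
        (∫⁻ ω, ENNReal.ofReal ((1 + R n ω) ^ (t * p)) ∂P).toReal) +
        (1 / q k) * Real.log (M (t * q k) ^ n))) atTop
        (nhds ((q k)⁻¹ * Real.log (M (t * q k)))) := by
      have heq : ∀ᶠ n : ℕ in atTop,
          (1 / p) * ((n : ℝ)⁻¹ * Real.log (w θs ^ (t * p)) +
            (n : ℝ)⁻¹ * Real.log ((∫⁻ ω, ENNReal.ofReal ((1 + R n ω) ^ (t * p)) ∂P).toReal)) +
            (q k)⁻¹ * Real.log (M (t * q k))
          = (n : ℝ)⁻¹ * ((1 / p) * Real.log (w θs ^ (t * p) *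
            (∫⁻ ω, ENNReal.ofReal ((1 + R n ω) ^ (t * p)) ∂P).toReal) +
            (1 / q k) * Real.log (M (t * q k) ^ n)) := by
        filter_upwards [hKfin (t * p) htp, eventually_ne_atTop 0] with n hfin hn
        have hKpos : 0 < (∫⁻ ω, ENNReal.ofReal ((1 + R n ω) ^ (t * p)) ∂P).toReal :=
          ENNReal.toReal_pos (zero_lt_one.trans_le (hKge1 (t * p) htp n)).ne' hfin
        have hn' : (n : ℝ) ≠ 0 := Nat.cast_ne_zero.2 hn
        rw [Real.log_mul (Real.rpow_pos_of_pos hwspos _).ne' hKpos.ne', Real.log_pow]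
        field_simp
      refine Tendsto.congr' heq ?_
      have t1 : Tendsto (fun n : ℕ => (n : ℝ)⁻¹ * Real.log (w θs ^ (t * p))) atTop (nhds 0) := by
        simpa using (tendsto_inv_atTop_nhds_zero_nat (𝕜 := ℝ)).mul_const (Real.log (w θs ^ (t * p)))
      have t2 := hKlog (t * p) htp
      have t3 := ((t1.add t2).const_mul (1 / p)).add
        (tendsto_const_nhds (x := (q k)⁻¹ * Real.log (M (t * q k))) (f := atTop))
      simpa using t3
    exact le_trans (limsup_le_of_eventually_le_coe hev hd) (EReal.coe_le_coe_iff.2 hk.le)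
  rw [hφM]
  exact tendsto_of_le_liminf_of_limsup_le hliminf0 hlimsup0
end

section
/- (Appendix A, limit of the scaled LMGF of the mixture LLR under H_0.) Let (X, ν) be a σ-finite measure space, Θ a finite nonempty set, θ_0 ∉ Θ, and for each θ ∈ Θ ∪ {θ_0} let f(·|θ) be a strictly positive probability density with respect to ν; let w : Θ → (0,1] satisfy Σ_{θ∈Θ} w_θ = 1. Let x_1, x_2, ... be i.i.d. with density f(·|θ_0) and define L^(n) = (1/n)·log( Σ_{θ∈Θ} w_θ·Π_{i=1}^n f(x_i|θ) / Π_{i=1}^n f(x_i|θ_0) ). Assume there is a unique θ_m ∈ Θ minimizing θ ↦ D(θ_0‖θ) over Θ, let R_n = Σ_{θ∈Θ, θ≠θ_m} (w_θ/w_{θ_m})·Π_{i=1}^n ( f(x_i|θ)/f(x_i|θ_m) ), and assume: (i) D(θ_0‖θ) − D(θ_0‖θ_m) > 0 for every θ ∈ Θ with θ ≠ θ_m; (ii) the LMGF φ_{θ_0}(t) = log E_{θ_0}[exp( t·log( f(x|θ_m)/f(x|θ_0) ) )] is finite for every t ∈ ℝ; and (iii) for every s ≥ 0, (1/n)·log E_{θ_0}[(1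 + R_n)^s] → 0 as n → ∞. Then for every t ≥ 0, lim_{n→∞} (1/n)·log E_{θ_0}[exp(n·t·L^(n))] = φ_{θ_0}(t). -/
open MeasureTheory ProbabilityTheory Real Filter
open scoped ENNReal NNReal

lemma aux_lintegral_prod {Ω X : Type*} [MeasurableSpace Ω] [MeasurableSpace X]
    (P : Measure Ω) [IsProbabilityMeasure P]
    (x : ℕ → Ω → X) (hxmeas : ∀ i, Measurable (x i))
    (hindep : iIndepFun x P)
    (g : X → ℝ≥0∞) (hg : Measurable g) (n : ℕ) :
    ∫⁻ ω, ∏ i ∈ Finset.range n, g (x i ω) ∂P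
      = ∏ i ∈ Finset.range n, ∫⁻ ω, g (x i ω) ∂P := by
  induction n with
  | zero => simp
  | succ n ih =>
    have hGindep : iIndepFun (fun i => g ∘ (x i)) P :=
      hindep.comp (fun _ => g) (fun _ => hg)
    have hGmeas : ∀ i, Measurable (g ∘ (x i)) := fun i => hg.comp (hxmeas i)
    have hInd : IndepFun (∏ i ∈ Finset.range n, g ∘ (x i)) (g ∘ (x n)) P :=
      hGindep.indepFun_finsetProd_of_notMem hGmeas (by simp)
    have hprodeq : (∏ i ∈ Finset.range n, g ∘ (x i))
        = fun ω => ∏ i ∈ Finset.range n, g (x i ω) := by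
      funext ω; simp [Finset.prod_apply, Function.comp]
    rw [hprodeq] at hInd
    have key := lintegral_mul_eq_lintegral_mul_lintegral_of_indepFun
      (μ := P) (f := fun ω => ∏ i ∈ Finset.range n, g (x i ω)) (g := g ∘ (x n))
      (Finset.measurable_prod _ fun i _ => hGmeas i) (hGmeas n) hInd
    simp only [Finset.prod_range_succ, ← ih]
    simpa [Function.comp] using key

/-- **Appendix A: limit of the scaled LMGF of the mixture LLR under `H₀`.**
With strictly positive probability densities `f θ` (`θ` in a finite set `Θ`) and `f₀`
(density of `θ₀ ∉ Θ`) with respect to a σ-finite measure `ν`, a prior `w : Θ → (0,1]`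
summing to `1`, data i.i.d. with density `f₀`, mixture LLR `L⁽ⁿ⁾`, a unique minimizer
`θₘ ∈ Θ` of `θ ↦ D(θ₀‖θ)` with remainder `R_n`, and assuming
(i) `D(θ₀‖θ) - D(θ₀‖θₘ) > 0` for `θ ≠ θₘ`, (ii) the LMGF
`φ₀ t = log E_{θ₀}[exp (t log (f θₘ / f₀))]` is finite for all `t`, and (iii) for all
`s ≥ 0` the scaled log of `E_{θ₀}[(1+R_n)^s]` tends to `0`, one has, for every `t ≥ 0`,
`(1/n) log E_{θ₀}[exp (n t L⁽ⁿ⁾)] → φ₀ t` (logarithms of possibly infinite expectations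
taken in the extended reals). -/
theorem mixture_llr_scaled_lmgf_H0
    {X : Type*} [MeasurableSpace X] (ν : Measure X) [SigmaFinite ν]
    {Θ : Type*} [Fintype Θ] [Nonempty Θ] [DecidableEq Θ]
    (f : Θ → X → ℝ) (f0 : X → ℝ)
    (hfmeas : ∀ θ, Measurable (f θ)) (hf0meas : Measurable f0)
    (hfpos : ∀ θ a, 0 < f θ a) (hf0pos : ∀ a, 0 < f0 a)
    (hfint : ∀ θ, ∫⁻ a, ENNReal.ofReal (f θ a) ∂ν = 1)
    (hf0int : ∫⁻ a, ENNReal.ofReal (f0 a) ∂ν = 1)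
    (w : Θ → ℝ) (hwpos : ∀ θ, 0 < w θ) (hwle : ∀ θ, w θ ≤ 1)
    (hwsum : ∑ θ, w θ = 1)
    {Ω : Type*} [MeasurableSpace Ω] (P : Measure Ω) [IsProbabilityMeasure P]
    (x : ℕ → Ω → X) (hxmeas : ∀ i, Measurable (x i))
    (hindep : iIndepFun x P)
    (hlaw : ∀ i, Measure.map (x i) P = ν.withDensity (fun a => ENNReal.ofReal (f0 a)))
    (L : ℕ → Ω → ℝ)
    (hL : L = fun (n : ℕ) (ω : Ω) => (n : ℝ)⁻¹ * Real.log
      ((∑ θ, w θ * ∏ i ∈ Finset.range n, f θ (x i ω)) /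
        ∏ i ∈ Finset.range n, f0 (x i ω)))
    (θm : Θ)
    (hmin : ∀ θ : Θ, θ ≠ θm →
      ∫ a, f0 a * Real.log (f0 a / f θm a) ∂ν < ∫ a, f0 a * Real.log (f0 a / f θ a) ∂ν)
    (R : ℕ → Ω → ℝ)
    (hR : R = fun (n : ℕ) (ω : Ω) => ∑ θ ∈ Finset.univ.erase θm,
      (w θ / w θm) * ∏ i ∈ Finset.range n, (f θ (x i ω) / f θm (x i ω)))
    (φ : ℝ → ℝ)
    (hφ : φ = fun t => Real.log
      (∫ ω, Real.exp (t * Real.log (f θm (x 0 ω) / f0 (x 0 ω))) ∂P))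
    (hφfin : ∀ t : ℝ,
      Integrable (fun ω => Real.exp (t * Real.log (f θm (x 0 ω) / f0 (x 0 ω)))) P)
    (hRlim : ∀ s : ℝ, 0 ≤ s →
      Tendsto (fun n : ℕ => (((n : ℝ)⁻¹ : ℝ) : EReal) *
          ENNReal.log (∫⁻ ω, ENNReal.ofReal ((1 + R n ω) ^ s) ∂P))
        atTop (nhds (0 : EReal))) :
    ∀ t : ℝ, 0 ≤ t →
      Tendsto (fun n : ℕ => (((n : ℝ)⁻¹ : ℝ) : EReal) *
          ENNReal.log (∫⁻ ω, ENNReal.ofReal (Real.exp ((n : ℝ) * t * L n ω)) ∂P))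
        atTop (nhds ((φ t : ℝ) : EReal)) := by
  intro t ht
  -- the likelihood ratio
  have hrpos : ∀ a, 0 < f θm a / f0 a := fun a => div_pos (hfpos θm a) (hf0pos a)
  have hrmeas : Measurable fun a => f θm a / f0 a := (hfmeas θm).div hf0meas
  -- laws agree
  have hlaw' : ∀ (g : X → ℝ≥0∞), Measurable g → ∀ i,
      ∫⁻ ω, g (x i ω) ∂P = ∫⁻ ω, g (x 0 ω) ∂P := by
    intro g hg i
    rw [← lintegral_map hg (hxmeas i), ← lintegral_map hg (hxmeas 0), hlaw i, hlaw 0]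
  -- the real mgf
  set J : ℝ → ℝ := fun s => ∫ ω, Real.exp (s * Real.log (f θm (x 0 ω) / f0 (x 0 ω))) ∂P
    with hJ
  have hJpos : ∀ s, 0 < J s := by
    intro s
    rw [hJ]
    simp only
    rw [integral_pos_iff_support_of_nonneg (fun ω => (Real.exp_pos _).le) (hφfin s)]
    have hsupp : (Function.support fun ω =>
        Real.exp (s * Real.log (f θm (x 0 ω) / f0 (x 0 ω)))) = Set.univ := by
      ext ω; simp [Function.support, (Real.exp_pos _).ne']
    rw [hsupp]
    simp
  have hφJ : ∀ s, φ s = Real.log (J s) := fun s => by rw [hφ, hJ]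
  set I : ℝ → ℝ≥0∞ := fun s => ∫⁻ ω, ENNReal.ofReal (f θm (x 0 ω) / f0 (x 0 ω)) ^ s ∂P
    with hI
  have hIJ : ∀ s, I s = ENNReal.ofReal (J s) := by
    intro s
    rw [hI, hJ]
    simp only
    rw [ofReal_integral_eq_lintegral_ofReal (hφfin s)
      (Filter.Eventually.of_forall fun ω => (Real.exp_pos _).le)]
    refine lintegral_congr fun ω => ?_
    rw [ENNReal.ofReal_rpow_of_pos (hrpos _)]
    congr 1
    rw [Real.rpow_def_of_pos (hrpos _), mul_comm]
  have hIne0 : ∀ s, I s ≠ 0 := fun s => by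
    rw [hIJ]; simp [ENNReal.ofReal_eq_zero, not_le, hJpos s]
  have hInetop : ∀ s, I s ≠ ⊤ := fun s => by rw [hIJ]; exact ENNReal.ofReal_ne_top
  have hlogI : ∀ s, ENNReal.log (I s) = ((φ s : ℝ) : EReal) := by
    intro s
    rw [hIJ, ENNReal.log_ofReal_of_pos (hJpos s), hφJ]
  -- the product formula
  have hIprod : ∀ s : ℝ, ∀ n : ℕ,
      ∫⁻ ω, ∏ i ∈ Finset.range n, ENNReal.ofReal (f θm (x i ω) / f0 (x i ω)) ^ s ∂P
        = (I s) ^ n := by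
    intro s n
    have hg : Measurable fun a => ENNReal.ofReal (f θm a / f0 a) ^ s :=
      hrmeas.ennreal_ofReal.pow_const s
    rw [aux_lintegral_prod P x hxmeas hindep _ hg n]
    rw [Finset.prod_congr rfl fun i _ =>
      hlaw' (fun a => ENNReal.ofReal (f θm a / f0 a) ^ s) hg i]
    rw [Finset.prod_const, Finset.card_range]
  -- the constant
  have hwmt : 0 < (w θm) ^ t := Real.rpow_pos_of_pos (hwpos θm) t
  set C : ℝ≥0∞ := ENNReal.ofReal ((w θm) ^ t) with hC
  have hCnetop : C ≠ ⊤ := ENNReal.ofReal_ne_top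
  have hlogC : ENNReal.log C = ((Real.log ((w θm) ^ t) : ℝ) : EReal) :=
    ENNReal.log_ofReal_of_pos hwmt
  -- nonnegativity of R
  have hRnonneg : ∀ n ω, 0 ≤ R n ω := by
    intro n ω; rw [hR]
    exact Finset.sum_nonneg fun θ _ => mul_nonneg
      (div_nonneg (hwpos θ).le (hwpos θm).le)
      (Finset.prod_nonneg fun i _ => div_nonneg (hfpos θ _).le (hfpos θm _).le)
  have hRmeas : ∀ n, Measurable (R n) := by
    intro n; rw [hR]
    exact Finset.measurable_sum _ fun θ _ => measurable_const.mul
      (Finset.measurable_prod _ fun i _ =>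
        ((hfmeas θ).comp (hxmeas i)).div ((hfmeas θm).comp (hxmeas i)))
  -- the key pointwise identity
  have key : ∀ n : ℕ, 1 ≤ n → ∀ ω : Ω,
      ENNReal.ofReal (Real.exp ((n : ℝ) * t * L n ω))
        = C * ((∏ i ∈ Finset.range n, ENNReal.ofReal (f θm (x i ω) / f0 (x i ω))) ^ t
            * ENNReal.ofReal ((1 + R n ω) ^ t)) := by
    intro n hn ω
    have hn0 : (n : ℝ) ≠ 0 := Nat.cast_ne_zero.mpr (by omega)
    have hPmpos : 0 < ∏ i ∈ Finset.range n, f θm (x i ω) :=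
      Finset.prod_pos fun i _ => hfpos θm _
    have hP0pos : 0 < ∏ i ∈ Finset.range n, f0 (x i ω) :=
      Finset.prod_pos fun i _ => hf0pos _
    have hSpos : 0 < ∑ θ, w θ * ∏ i ∈ Finset.range n, f θ (x i ω) :=
      Finset.sum_pos (fun θ _ => mul_pos (hwpos θ)
        (Finset.prod_pos fun i _ => hfpos θ _)) Finset.univ_nonempty
    have h1R : 0 < 1 + R n ω := by linarith [hRnonneg n ω]
    have hexp : (n : ℝ) * t * L n ω
        = t * Real.log ((∑ θ, w θ * ∏ i ∈ Finset.range n, f θ (x i ω)) /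
            ∏ i ∈ Finset.range n, f0 (x i ω)) := by
      simp only [hL]
      field_simp
    have hSdec : (∑ θ, w θ * ∏ i ∈ Finset.range n, f θ (x i ω))
        = w θm * (∏ i ∈ Finset.range n, f θm (x i ω)) * (1 + R n ω) := by
      rw [hR]
      simp only
      rw [mul_add, mul_one, Finset.mul_sum,
        ← Finset.add_sum_erase _ (fun θ => w θ * ∏ i ∈ Finset.range n, f θ (x i ω))
          (Finset.mem_univ θm)]
      congr 1
      refine Finset.sum_congr rfl fun θ _ => ?_
      rw [Finset.prod_div_distrib]
      have h1 : w θm ≠ 0 := (hwpos θm).ne'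
      have h2 : (∏ i ∈ Finset.range n, f θm (x i ω)) ≠ 0 := hPmpos.ne'
      field_simp
    rw [hexp]
    have hexp2 : Real.exp (t * Real.log ((∑ θ, w θ * ∏ i ∈ Finset.range n, f θ (x i ω)) /
        ∏ i ∈ Finset.range n, f0 (x i ω)))
        = ((∑ θ, w θ * ∏ i ∈ Finset.range n, f θ (x i ω)) /
            ∏ i ∈ Finset.range n, f0 (x i ω)) ^ t := by
      rw [Real.rpow_def_of_pos (div_pos hSpos hP0pos), mul_comm]
    rw [hexp2, hSdec]
    have hratio : w θm * (∏ i ∈ Finset.range n, f θm (x i ω)) * (1 + R n ω) /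
        ∏ i ∈ Finset.range n, f0 (x i ω)
        = w θm * ((∏ i ∈ Finset.range n, f θm (x i ω)) /
            ∏ i ∈ Finset.range n, f0 (x i ω)) * (1 + R n ω) := by
      field_simp
    rw [hratio]
    rw [Real.mul_rpow (mul_pos (hwpos θm) (div_pos hPmpos hP0pos)).le h1R.le,
      Real.mul_rpow (hwpos θm).le (div_pos hPmpos hP0pos).le]
    rw [ENNReal.ofReal_mul (mul_nonneg (Real.rpow_nonneg (hwpos θm).le t)
      (Real.rpow_nonneg (div_pos hPmpos hP0pos).le t)),
      ENNReal.ofReal_mul (Real.rpow_nonneg (hwpos θm).le t)]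
    have hPmP0 : (∏ i ∈ Finset.range n, f θm (x i ω)) / ∏ i ∈ Finset.range n, f0 (x i ω)
        = ∏ i ∈ Finset.range n, f θm (x i ω) / f0 (x i ω) := by
      rw [Finset.prod_div_distrib]
    rw [hPmP0, ← ENNReal.ofReal_rpow_of_pos (Finset.prod_pos fun i _ => hrpos _),
      ENNReal.ofReal_prod_of_nonneg (fun i _ => (hrpos _).le), hC, mul_assoc]
  -- measurability of the factors
  have hFmeas : ∀ n : ℕ,
      Measurable fun ω => (∏ i ∈ Finset.range n,
        ENNReal.ofReal (f θm (x i ω) / f0 (x i ω))) ^ t :=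
    fun n => (Finset.measurable_prod _ fun i _ =>
      (hrmeas.comp (hxmeas i)).ennreal_ofReal).pow_const t
  have hGmeas : ∀ (n : ℕ) (s : ℝ),
      Measurable fun ω => ENNReal.ofReal ((1 + R n ω) ^ s) :=
    fun n s => ((measurable_const.add (hRmeas n)).pow_const s).ennreal_ofReal
  -- the main integral
  set A : ℕ → ℝ≥0∞ := fun n => ∫⁻ ω, ENNReal.ofReal (Real.exp ((n : ℝ) * t * L n ω)) ∂P
    with hA
  have hAeq : ∀ n : ℕ, 1 ≤ n → A n = C * ∫⁻ ω,
      (∏ i ∈ Finset.range n, ENNReal.ofReal (f θm (x i ω) / f0 (x i ω))) ^ t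
        * ENNReal.ofReal ((1 + R n ω) ^ t) ∂P := by
    intro n hn
    rw [hA]
    simp only
    rw [lintegral_congr fun ω => key n hn ω, lintegral_const_mul' _ _ hCnetop]
  -- lower bound
  have hlow : ∀ n : ℕ, 1 ≤ n → C * (I t) ^ n ≤ A n := by
    intro n hn
    rw [hAeq n hn]
    refine mul_le_mul_right ?_ C
    calc (I t) ^ n
        = ∫⁻ ω, ∏ i ∈ Finset.range n,
            ENNReal.ofReal (f θm (x i ω) / f0 (x i ω)) ^ t ∂P := (hIprod t n).symm
      _ ≤ _ := by
          refine lintegral_mono fun ω => ?_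
          rw [ENNReal.prod_rpow_of_nonneg ht]
          exact le_mul_of_one_le_right' (ENNReal.one_le_ofReal.mpr
            (Real.one_le_rpow (by linarith [hRnonneg n ω]) ht))
  -- upper bound via Hölder
  have hup : ∀ p q : ℝ, p.HolderConjugate q → ∀ n : ℕ, 1 ≤ n →
      A n ≤ C * ((I (t * p)) ^ n) ^ (1 / p) *
        (∫⁻ ω, ENNReal.ofReal ((1 + R n ω) ^ (t * q)) ∂P) ^ (1 / q) := by
    intro p q hpq n hn
    rw [hAeq n hn, mul_assoc]
    refine mul_le_mul_right ?_ C
    have hHolder := ENNReal.lintegral_mul_le_Lp_mul_Lq P hpq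
      ((hFmeas n).aemeasurable) ((hGmeas n t).aemeasurable)
    simp only [Pi.mul_apply] at hHolder
    refine le_trans hHolder ?_
    have h1 : ∫⁻ ω, ((∏ i ∈ Finset.range n,
        ENNReal.ofReal (f θm (x i ω) / f0 (x i ω))) ^ t) ^ p ∂P = (I (t * p)) ^ n := by
      rw [← hIprod (t * p) n]
      refine lintegral_congr fun ω => ?_
      rw [← ENNReal.rpow_mul, ENNReal.prod_rpow_of_nonneg (mul_nonneg ht hpq.nonneg)]
    have h2 : ∫⁻ ω, (ENNReal.ofReal ((1 + R n ω) ^ t)) ^ q ∂P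
        = ∫⁻ ω, ENNReal.ofReal ((1 + R n ω) ^ (t * q)) ∂P := by
      refine lintegral_congr fun ω => ?_
      have h1R : (0:ℝ) ≤ 1 + R n ω := by linarith [hRnonneg n ω]
      rw [ENNReal.ofReal_rpow_of_nonneg (Real.rpow_nonneg h1R t) hpq.symm.nonneg,
        ← Real.rpow_mul h1R]
    rw [h1, h2]
  -- pass to the statement about `seq`
  suffices hmain : Tendsto (fun n : ℕ => (((n : ℝ)⁻¹ : ℝ) : EReal) * ENNReal.log (A n))
      atTop (nhds ((φ t : ℝ) : EReal)) by
    simpa only [hA] using hmain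
  set clog : ℝ := Real.log ((w θm) ^ t) with hclog
  -- lower bound on liminf
  have hseq_low : ∀ᶠ n : ℕ in atTop,
      ((((n : ℝ)⁻¹ * (clog + n * φ t) : ℝ)) : EReal)
        ≤ (((n : ℝ)⁻¹ : ℝ) : EReal) * ENNReal.log (A n) := by
    filter_upwards [eventually_ge_atTop 1] with n hn
    have h2 : ENNReal.log (C * I t ^ n) ≤ ENNReal.log (A n) :=
      ENNReal.log_monotone (hlow n hn)
    have h3 : ENNReal.log (C * I t ^ n) = (((clog + n * φ t : ℝ)) : EReal) := by
      rw [ENNReal.log_mul_add, ENNReal.log_pow, hlogC, hlogI]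
      norm_cast
    rw [h3] at h2
    calc ((((n : ℝ)⁻¹ * (clog + n * φ t) : ℝ)) : EReal)
        = (((n : ℝ)⁻¹ : ℝ) : EReal) * (((clog + n * φ t : ℝ)) : EReal) := by
          rw [← EReal.coe_mul]
      _ ≤ _ := mul_le_mul_of_nonneg_left h2
          (by exact_mod_cast inv_nonneg.mpr (Nat.cast_nonneg n))
  have hlow_tendsto : Tendsto
      (fun n : ℕ => ((((n : ℝ)⁻¹ * (clog + n * φ t) : ℝ)) : EReal))
      atTop (nhds ((φ t : ℝ) : EReal)) := by
    rw [EReal.tendsto_coe]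
    have hre : (fun n : ℕ => (n : ℝ)⁻¹ * clog + φ t)
        =ᶠ[atTop] fun n : ℕ => (n : ℝ)⁻¹ * (clog + n * φ t) := by
      filter_upwards [eventually_ge_atTop 1] with n hn
      have hn0 : (n : ℝ) ≠ 0 := Nat.cast_ne_zero.mpr (by omega)
      field_simp
    refine Tendsto.congr' hre ?_
    have := (tendsto_inv_atTop_nhds_zero_nat.mul_const clog).add
      (tendsto_const_nhds (x := φ t))
    simpa using this
  have hliminf : ((φ t : ℝ) : EReal) ≤
      liminf (fun n : ℕ => (((n : ℝ)⁻¹ : ℝ) : EReal) * ENNReal.log (A n)) atTop := by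
    calc ((φ t : ℝ) : EReal)
        = liminf (fun n : ℕ => ((((n : ℝ)⁻¹ * (clog + n * φ t) : ℝ)) : EReal)) atTop :=
          (hlow_tendsto.liminf_eq).symm
      _ ≤ _ := liminf_le_liminf hseq_low
  -- the sequence of exponents
  set pf : ℕ → ℝ := fun k => 1 + ((k : ℝ) + 1)⁻¹ with hpf
  have hpf1 : ∀ k, 1 < pf k := by
    intro k; rw [hpf]; simp only
    have h0 : 0 < ((k : ℝ) + 1)⁻¹ := by positivity
    linarith
  have hpf2 : ∀ k, pf k ≤ 2 := by
    intro k; rw [hpf]; simp only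
    have h0 : ((k : ℝ) + 1)⁻¹ ≤ 1 := by
      rw [inv_le_one_iff₀]; right; linarith [Nat.cast_nonneg (α := ℝ) k]
    linarith
  have h0inv : Tendsto (fun k : ℕ => ((k : ℝ) + 1)⁻¹) atTop (nhds 0) := by
    simpa [one_div] using tendsto_one_div_add_atTop_nhds_zero_nat (𝕜 := ℝ)
  have hpftend : Tendsto pf atTop (nhds 1) := by
    rw [hpf]
    simpa using tendsto_const_nhds.add h0inv
  -- convergence of the mgf along pf
  have hJtend : Tendsto (fun k : ℕ => J (t * pf k)) atTop (nhds (J t)) := by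
    rw [hJ]
    simp only
    refine tendsto_integral_of_dominated_convergence
      (fun ω => Real.exp (t * Real.log (f θm (x 0 ω) / f0 (x 0 ω)))
        + Real.exp ((2 * t) * Real.log (f θm (x 0 ω) / f0 (x 0 ω)))) ?_ ?_ ?_ ?_
    · intro k
      exact (((Real.measurable_log.comp (hrmeas.comp (hxmeas 0))).const_mul
        (t * pf k)).exp).aestronglyMeasurable
    · exact (hφfin t).add (hφfin (2 * t))
    · intro k
      refine Filter.Eventually.of_forall fun ω => ?_
      set a : ℝ := Real.log (f θm (x 0 ω) / f0 (x 0 ω)) with ha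
      rw [Real.norm_eq_abs, Real.abs_exp]
      rcases le_or_gt 0 a with hA0 | hA0
      · have hkey : t * pf k * a ≤ 2 * t * a := by
          nlinarith [mul_nonneg (mul_nonneg ht hA0) (sub_nonneg.2 (hpf2 k))]
        calc Real.exp (t * pf k * a) ≤ Real.exp (2 * t * a) := Real.exp_le_exp.mpr hkey
          _ ≤ _ := le_add_of_nonneg_left (Real.exp_pos _).le
      · have hkey : t * pf k * a ≤ t * a := by
          nlinarith [mul_nonneg (mul_nonneg ht (neg_nonneg.2 hA0.le)) (sub_nonneg.2 (hpf1 k).le)]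
        calc Real.exp (t * pf k * a) ≤ Real.exp (t * a) := Real.exp_le_exp.mpr hkey
          _ ≤ _ := le_add_of_nonneg_right (Real.exp_pos _).le
    · refine Filter.Eventually.of_forall fun ω => ?_
      have h1 : Tendsto (fun k : ℕ => t * pf k * Real.log (f θm (x 0 ω) / f0 (x 0 ω)))
          atTop (nhds (t * Real.log (f θm (x 0 ω) / f0 (x 0 ω)))) := by
        have := (hpftend.const_mul t).mul_const (Real.log (f θm (x 0 ω) / f0 (x 0 ω)))
        simpa [mul_comm, mul_assoc, mul_left_comm] using this
      exact (Real.continuous_exp.continuousAt.tendsto).comp h1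
  have hφtend : Tendsto (fun k : ℕ => φ (t * pf k)) atTop (nhds (φ t)) := by
    have hcont := (Real.continuousAt_log (hJpos t).ne').tendsto
    have h2 : Tendsto (fun k : ℕ => Real.log (J (t * pf k))) atTop
        (nhds (Real.log (J t))) := hcont.comp hJtend
    rw [hφJ t]
    exact h2.congr fun k => (hφJ (t * pf k)).symm
  have hck : Tendsto (fun k : ℕ => (pf k)⁻¹ * φ (t * pf k)) atTop (nhds (φ t)) := by
    have hinv : Tendsto (fun k : ℕ => (pf k)⁻¹) atTop (nhds 1) := by
      simpa using hpftend.inv₀ one_ne_zero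
    simpa using hinv.mul hφtend
  -- limsup bound for each k
  have hlimsup_k : ∀ k : ℕ,
      limsup (fun n : ℕ => (((n : ℝ)⁻¹ : ℝ) : EReal) * ENNReal.log (A n)) atTop
        ≤ ((((pf k)⁻¹ * φ (t * pf k) : ℝ)) : EReal) := by
    intro k
    have hpq : (pf k).HolderConjugate ((pf k).conjExponent) :=
      Real.HolderConjugate.conjExponent (hpf1 k)
    set p : ℝ := pf k with hpdef
    set q : ℝ := p.conjExponent with hqdef
    have hq0 : 0 < q := hpq.symm.pos
    have hp0 : 0 < p := hpq.pos
    set B : ℕ → ℝ≥0∞ := fun n => ∫⁻ ω, ENNReal.ofReal ((1 + R n ω) ^ (t * q)) ∂P with hB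
    have hBlim : Tendsto (fun n : ℕ => (((n : ℝ)⁻¹ : ℝ) : EReal) * ENNReal.log (B n))
        atTop (nhds 0) := hRlim (t * q) (mul_nonneg ht hq0.le)
    have hBone : ∀ n, 1 ≤ B n := by
      intro n
      rw [hB]; simp only
      calc (1 : ℝ≥0∞) = ∫⁻ _, 1 ∂P := by simp
        _ ≤ _ := lintegral_mono fun ω => ENNReal.one_le_ofReal.mpr
            (Real.one_le_rpow (by linarith [hRnonneg n ω]) (mul_nonneg ht hq0.le))
    have hBne0 : ∀ n, B n ≠ 0 := fun n => (lt_of_lt_of_le zero_lt_one (hBone n)).ne'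
    have hBnebot : ∀ n, ENNReal.log (B n) ≠ ⊥ := fun n => by
      simp [ENNReal.log_eq_bot_iff, hBne0 n]
    have hBev : ∀ᶠ n : ℕ in atTop, ENNReal.log (B n) ≠ ⊤ := by
      have h1 := hBlim.eventually_lt_const (show (0 : EReal) < 1 by norm_num)
      filter_upwards [h1, eventually_ge_atTop 1] with n hlt hn
      intro htop
      rw [htop] at hlt
      have hpos : (0 : EReal) < (((n : ℝ)⁻¹ : ℝ) : EReal) := by
        have : (0:ℝ) < (n : ℝ)⁻¹ := inv_pos.mpr (by exact_mod_cast Nat.pos_of_ne_zero (by omega))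
        exact_mod_cast this
      rw [EReal.mul_top_of_pos hpos] at hlt
      exact absurd hlt (by simp)
    have hbeq : ∀ᶠ n : ℕ in atTop,
        ENNReal.log (B n) = (((ENNReal.log (B n)).toReal : ℝ) : EReal) := by
      filter_upwards [hBev] with n hne
      exact (EReal.coe_toReal hne (hBnebot n)).symm
    have hbtend : Tendsto (fun n : ℕ => (n : ℝ)⁻¹ * (ENNReal.log (B n)).toReal)
        atTop (nhds 0) := by
      have hcongr : (fun n : ℕ =>
          ((((n : ℝ)⁻¹ * (ENNReal.log (B n)).toReal : ℝ)) : EReal))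
          =ᶠ[atTop] fun n : ℕ => (((n : ℝ)⁻¹ : ℝ) : EReal) * ENNReal.log (B n) := by
        filter_upwards [hbeq] with n hn
        rw [EReal.coe_mul, ← hn]
      have h2 := hBlim.congr' hcongr.symm
      rw [show (0 : EReal) = ((0 : ℝ) : EReal) by simp] at h2
      exact EReal.tendsto_coe.mp h2
    have hupper : ∀ᶠ n : ℕ in atTop,
        (((n : ℝ)⁻¹ : ℝ) : EReal) * ENNReal.log (A n)
          ≤ ((((n : ℝ)⁻¹ * (clog + (1 / p) * ((n : ℝ) * φ (t * p))
              + (1 / q) * (ENNReal.log (B n)).toReal) : ℝ)) : EReal) := by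
      filter_upwards [hbeq, eventually_ge_atTop 1] with n hbn hn
      have h2 := ENNReal.log_monotone (hup p q hpq n hn)
      have h3 : ENNReal.log (C * ((I (t * p)) ^ n) ^ (1 / p) * B n ^ (1 / q))
          = (((clog + (1 / p) * ((n : ℝ) * φ (t * p))
              + (1 / q) * (ENNReal.log (B n)).toReal : ℝ)) : EReal) := by
        rw [ENNReal.log_mul_add, ENNReal.log_mul_add, ENNReal.log_rpow, ENNReal.log_rpow,
          ENNReal.log_pow, hlogC, hlogI, hbn]
        norm_cast
      rw [h3] at h2
      calc (((n : ℝ)⁻¹ : ℝ) : EReal) * ENNReal.log (A n)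
          ≤ (((n : ℝ)⁻¹ : ℝ) : EReal) * (((clog + (1 / p) * ((n : ℝ) * φ (t * p))
              + (1 / q) * (ENNReal.log (B n)).toReal : ℝ)) : EReal) :=
            mul_le_mul_of_nonneg_left h2
              (by exact_mod_cast inv_nonneg.mpr (Nat.cast_nonneg n))
        _ = _ := by rw [← EReal.coe_mul]
    have hup_tendsto : Tendsto (fun n : ℕ =>
        ((((n : ℝ)⁻¹ * (clog + (1 / p) * ((n : ℝ) * φ (t * p))
            + (1 / q) * (ENNReal.log (B n)).toReal) : ℝ)) : EReal))
        atTop (nhds ((((p⁻¹ * φ (t * p) : ℝ))) : EReal)) := by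
      rw [EReal.tendsto_coe]
      have hre : (fun n : ℕ => (n : ℝ)⁻¹ * clog + p⁻¹ * φ (t * p)
          + (1 / q) * ((n : ℝ)⁻¹ * (ENNReal.log (B n)).toReal))
          =ᶠ[atTop] fun n : ℕ => (n : ℝ)⁻¹ * (clog + (1 / p) * ((n : ℝ) * φ (t * p))
            + (1 / q) * (ENNReal.log (B n)).toReal) := by
        filter_upwards [eventually_ge_atTop 1] with n hn
        have hn0 : (n : ℝ) ≠ 0 := Nat.cast_ne_zero.mpr (by omega)
        field_simp
      refine Tendsto.congr' hre ?_
      have h1 := (tendsto_inv_atTop_nhds_zero_nat.mul_const clog).add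
        (tendsto_const_nhds (x := p⁻¹ * φ (t * p)))
      have h2 := h1.add (hbtend.const_mul (1 / q))
      simpa using h2
    calc limsup (fun n : ℕ => (((n : ℝ)⁻¹ : ℝ) : EReal) * ENNReal.log (A n)) atTop
        ≤ limsup (fun n : ℕ =>
            ((((n : ℝ)⁻¹ * (clog + (1 / p) * ((n : ℝ) * φ (t * p))
              + (1 / q) * (ENNReal.log (B n)).toReal) : ℝ)) : EReal)) atTop :=
          limsup_le_limsup hupper
      _ = _ := hup_tendsto.limsup_eq
  have hlimsup : limsup (fun n : ℕ => (((n : ℝ)⁻¹ : ℝ) : EReal) * ENNReal.log (A n)) atTop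
      ≤ ((φ t : ℝ) : EReal) :=
    ge_of_tendsto' (EReal.tendsto_coe.mpr hck) hlimsup_k
  exact tendsto_of_le_liminf_of_limsup_le hliminf hlimsup
end

section
/- (Exponential decay of the remainder R_n in the mixture LLR.) Let (X, ν) be a σ-finite measure space, Θ a finite nonempty set, and for each θ ∈ Θ let f(·|θ) be a strictly positive probability density with respect to ν; let w : Θ → (0,1] satisfy Σ_{θ∈Θ} w_θ = 1. Fix θ_* ∈ Θ, let x_1, x_2, ... be i.i.d. with density f(·|θ_*), assume that for every θ ∈ Θ with θ ≠ θ_* the function x ↦ log( f(x|θ_*)/f(x|θ) ) is integrable under f(·|θ_*) with D(θ_*‖θ) > 0, and define R_n = Σ_{θ∈Θ, θ≠θ_*} (w_θ/w_{θ_*})·Π_{i=1}^n ( f(x_i|θ)/f(x_i|θ_*) ). Then for every c with 0 < c < min_{θ∈Θ, θ≠θ_*} D(θ_*‖θ), one has exp(n·c)·R_n → 0 almost surely as n → ∞; in particular R_n → 0 almost surely. -/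
open MeasureTheory ProbabilityTheory Real Filter
open scoped ENNReal NNReal

/-- **Exponential decay of the remainder `R_n` in the mixture LLR.** With strictly
positive probability densities `f θ` (`θ` in a finite set `Θ`) with respect to a σ-finite
measure `ν`, a prior `w : Θ → (0,1]` summing to `1`, data i.i.d. with density `f θ⋆`,
`log (f θ⋆ / f θ)` integrable under `f θ⋆` with `D(θ⋆‖θ) > 0` for every `θ ≠ θ⋆`, and
`R_n = ∑_{θ ≠ θ⋆} (w θ / w θ⋆) ∏ᵢ (f θ (xᵢ) / f θ⋆ (xᵢ))`: for every `c` with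
`0 < c < min_{θ ≠ θ⋆} D(θ⋆‖θ)` one has `exp (n c) * R_n → 0` almost surely; in
particular `R_n → 0` almost surely. -/
theorem mixture_llr_remainder_decay
    {X : Type*} [MeasurableSpace X] (ν : Measure X) [SigmaFinite ν]
    {Θ : Type*} [Fintype Θ] [Nonempty Θ] [DecidableEq Θ]
    (f : Θ → X → ℝ)
    (hfmeas : ∀ θ, Measurable (f θ))
    (hfpos : ∀ θ a, 0 < f θ a)
    (hfint : ∀ θ, ∫⁻ a, ENNReal.ofReal (f θ a) ∂ν = 1)
    (w : Θ → ℝ) (hwpos : ∀ θ, 0 < w θ) (hwle : ∀ θ, w θ ≤ 1)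
    (hwsum : ∑ θ, w θ = 1)
    (θs : Θ)
    {Ω : Type*} [MeasurableSpace Ω] (P : Measure Ω) [IsProbabilityMeasure P]
    (x : ℕ → Ω → X) (hxmeas : ∀ i, Measurable (x i))
    (hindep : iIndepFun x P)
    (hlaw : ∀ i, Measure.map (x i) P = ν.withDensity (fun a => ENNReal.ofReal (f θs a)))
    (hKLint : ∀ θ : Θ, θ ≠ θs →
      Integrable (fun ω => Real.log (f θs (x 0 ω) / f θ (x 0 ω))) P)
    (hKLpos : ∀ θ : Θ, θ ≠ θs → 0 < ∫ a, f θs a * Real.log (f θs a / f θ a) ∂ν)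
    (R : ℕ → Ω → ℝ)
    (hR : R = fun (n : ℕ) (ω : Ω) => ∑ θ ∈ Finset.univ.erase θs,
      (w θ / w θs) * ∏ i ∈ Finset.range n, (f θ (x i ω) / f θs (x i ω))) :
    (∀ c : ℝ, 0 < c →
      (∀ θ : Θ, θ ≠ θs → c < ∫ a, f θs a * Real.log (f θs a / f θ a) ∂ν) →
      ∀ᵐ ω ∂P, Tendsto (fun n : ℕ => Real.exp ((n : ℝ) * c) * R n ω) atTop (nhds 0)) ∧
    (∀ᵐ ω ∂P, Tendsto (fun n : ℕ => R n ω) atTop (nhds 0)) := by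
  -- notation
  set D : Θ → ℝ := fun θ => ∫ a, f θs a * Real.log (f θs a / f θ a) ∂ν with hD
  -- the log-likelihood-ratio function
  set g : Θ → X → ℝ := fun θ a => Real.log (f θ a / f θs a) with hg
  have hgmeas : ∀ θ, Measurable (g θ) := fun θ =>
    Real.measurable_log.comp ((hfmeas θ).div (hfmeas θs))
  have hgneg : ∀ θ a, g θ a = -Real.log (f θs a / f θ a) := by
    intro θ a
    show Real.log (f θ a / f θs a) = _
    rw [Real.log_div (hfpos θ a).ne' (hfpos θs a).ne',
        Real.log_div (hfpos θs a).ne' (hfpos θ a).ne']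
    ring
  -- the SLLN for each θ ≠ θs
  have key : ∀ θ : Θ, θ ≠ θs → ∀ᵐ ω ∂P,
      Tendsto (fun n : ℕ => (∑ i ∈ Finset.range n, g θ (x i ω)) / (n : ℝ)) atTop
        (nhds (-(D θ))) := by
    intro θ hθ
    have hint : Integrable (fun ω => g θ (x 0 ω)) P := by
      have := (hKLint θ hθ).neg
      refine this.congr (Filter.Eventually.of_forall fun ω => ?_)
      simp only [Pi.neg_apply, hgneg]
    have hpind : Pairwise (Function.onFun (IndepFun · · P) fun i ω => g θ (x i ω)) := by
      intro i j hij
      exact (hindep.indepFun hij).comp (hgmeas θ) (hgmeas θ)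
    have hident : ∀ i, IdentDistrib (fun ω => g θ (x i ω)) (fun ω => g θ (x 0 ω)) P P := by
      intro i
      have hxid : IdentDistrib (x i) (x 0) P P :=
        ⟨(hxmeas i).aemeasurable, (hxmeas 0).aemeasurable, by rw [hlaw i, hlaw 0]⟩
      exact hxid.comp (hgmeas θ)
    have hE : ∫ ω, g θ (x 0 ω) ∂P = -(D θ) := by
      rw [← integral_map (hxmeas 0).aemeasurable (hgmeas θ).aestronglyMeasurable,
        hlaw 0,
        show (fun a => ENNReal.ofReal (f θs a))
          = (fun a => ((fun a => (f θs a).toNNReal) a : ℝ≥0∞)) from rfl,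
        integral_withDensity_eq_integral_smul (by measurability) (g θ)]
      rw [hD, ← integral_neg]
      congr 1 with a
      rw [NNReal.smul_def, Real.coe_toNNReal _ (hfpos θs a).le, hgneg, smul_eq_mul]
      ring
    have := strong_law_ae_real (fun i ω => g θ (x i ω)) hint hpind hident
    rw [hE] at this
    exact this
  -- almost everywhere, the SLLN holds simultaneously for all θ ≠ θs
  have keyall : ∀ᵐ ω ∂P, ∀ θ : Θ, θ ≠ θs →
      Tendsto (fun n : ℕ => (∑ i ∈ Finset.range n, g θ (x i ω)) / (n : ℝ)) atTop
        (nhds (-(D θ))) := by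
    rw [ae_all_iff]
    intro θ
    by_cases hθ : θ ≠ θs
    · filter_upwards [key θ hθ] with ω hω
      intro _
      exact hω
    · filter_upwards with ω h
      exact absurd h hθ
  -- main statement
  have main : ∀ c : ℝ, 0 < c → (∀ θ : Θ, θ ≠ θs → c < D θ) →
      ∀ᵐ ω ∂P, Tendsto (fun n : ℕ => Real.exp ((n : ℝ) * c) * R n ω) atTop (nhds 0) := by
    intro c hc hcD
    filter_upwards [keyall] with ω hω
    have hterm : ∀ θ ∈ Finset.univ.erase θs,
        Tendsto (fun n : ℕ => Real.exp ((n : ℝ) * c) *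
          ((w θ / w θs) * ∏ i ∈ Finset.range n, (f θ (x i ω) / f θs (x i ω))))
          atTop (nhds 0) := by
      intro θ hθmem
      have hθ : θ ≠ θs := Finset.ne_of_mem_erase hθmem
      have hprod : ∀ n : ℕ, ∏ i ∈ Finset.range n, (f θ (x i ω) / f θs (x i ω))
          = Real.exp (∑ i ∈ Finset.range n, g θ (x i ω)) := by
        intro n
        rw [Real.exp_sum]
        refine Finset.prod_congr rfl fun i _ => ?_
        rw [hg, Real.exp_log (div_pos (hfpos θ _) (hfpos θs _))]
      -- n*c + S n → -∞
      have hlim : Tendsto (fun n : ℕ => (n : ℝ) * c + ∑ i ∈ Finset.range n, g θ (x i ω))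
          atTop atBot := by
        have h1 : Tendsto (fun n : ℕ => (n : ℝ) *
            (c + (∑ i ∈ Finset.range n, g θ (x i ω)) / (n : ℝ))) atTop atBot := by
          refine Tendsto.atTop_mul_neg (C := c + -(D θ)) (by linarith [hcD θ hθ])
            tendsto_natCast_atTop_atTop ?_
          exact tendsto_const_nhds.add (hω θ hθ)
        refine h1.congr' ?_
        filter_upwards [eventually_ge_atTop 1] with n hn
        have hn0 : (n : ℝ) ≠ 0 := by positivity
        field_simp
      have h2 : Tendsto (fun n : ℕ => Real.exp ((n : ℝ) * c) *
          ∏ i ∈ Finset.range n, (f θ (x i ω) / f θs (x i ω))) atTop (nhds 0) := by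
        refine (Real.tendsto_exp_atBot.comp hlim).congr fun n => ?_
        simp only [Function.comp_apply, hprod, Real.exp_add]
      have := h2.const_mul (w θ / w θs)
      rw [mul_zero] at this
      refine this.congr fun n => ?_
      ring
    have := tendsto_finset_sum (Finset.univ.erase θs) hterm
    rw [Finset.sum_const_zero] at this
    refine this.congr fun n => ?_
    rw [hR, Finset.mul_sum]
  refine ⟨main, ?_⟩
  by_cases hemp : (Finset.univ.erase θs : Finset Θ).Nonempty
  · -- choose c below the minimum of D over θ ≠ θs
    obtain ⟨θ₀, hθ₀⟩ := hemp
    have hne : ((Finset.univ.erase θs).image D).Nonempty :=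
      ⟨D θ₀, Finset.mem_image_of_mem D hθ₀⟩
    set m : ℝ := Finset.min' ((Finset.univ.erase θs).image D) hne with hm
    have hmpos : 0 < m := by
      obtain ⟨θ₁, hθ₁, hθ₁eq⟩ := Finset.mem_image.1 (Finset.min'_mem _ hne)
      rw [hm, ← hθ₁eq]
      exact hKLpos θ₁ (Finset.ne_of_mem_erase hθ₁)
    have hmle : ∀ θ : Θ, θ ≠ θs → m / 2 < D θ := by
      intro θ hθ
      have : m ≤ D θ := Finset.min'_le _ _
        (Finset.mem_image_of_mem D (Finset.mem_erase.2 ⟨hθ, Finset.mem_univ θ⟩))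
      linarith
    filter_upwards [main (m / 2) (by linarith) hmle] with ω hω
    have hexp : Tendsto (fun n : ℕ => Real.exp (-((n : ℝ) * (m / 2)))) atTop (nhds 0) := by
      refine Real.tendsto_exp_atBot.comp ?_
      exact tendsto_neg_atTop_atBot.comp
        (tendsto_natCast_atTop_atTop.atTop_mul_const (by linarith : (0:ℝ) < m / 2))
    have := hexp.mul hω
    rw [mul_zero] at this
    refine this.congr fun n => ?_
    rw [← mul_assoc, ← Real.exp_add]
    simp
  · -- trivial case: Θ = {θs}
    rw [Finset.not_nonempty_iff_eq_empty] at hemp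
    filter_upwards with ω
    have : ∀ n, R n ω = 0 := by
      intro n
      rw [hR]
      simp [hemp]
    simpa [this] using tendsto_const_nhds
end
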